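/- arXiv:0901.0327 — 10 statements merged into one kernel-verified Lean document; each statement's English description precedes it below -/
import Mathlib

section
/- For complex numbers λ₀,...,λₙ, the fundamental function Φ(x) = (1/2πi) ∮_{Γ_r} e^{xz}/((z-λ₀)···(z-λₙ)) dz (where Γ_r is a circle of radius r surrounding all λⱼ) satisfies Φ^{(k)}(0) = 0 for k = 0,...,n-1, and for k ≥ n, Φ^{(k)}(0) = Σ_{s₀+...+sₙ = k-n} λ₀^{s₀}···λₙ^{sₙ}. -/
open Complex Metric MeasureTheory Finset Filter

namespace ContourAux

lemma hasSum_default {α : Type*} [AddCommMonoid α] [TopologicalSpace α]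
    (f : (Fin 0 → ℕ) → α) : HasSum f (f default) :=
  hasSum_single default (fun b hb => absurd (Subsingleton.elim b default) hb)

lemma summable_pi_prod : ∀ (N : ℕ) (g : Fin N → ℕ → ℝ), (∀ j, Summable (g j)) →
    (∀ j m, 0 ≤ g j m) → Summable (fun s : Fin N → ℕ => ∏ j, g j (s j)) := by
  intro N
  induction N with
  | zero =>
    intro g _ _
    exact (hasSum_default _).summable
  | succ N ih =>
    intro g hg hg0
    have htail : Summable (fun t : Fin N → ℕ => ∏ j, g (Fin.succ j) (t j)) :=
      ih (fun j => g (Fin.succ j)) (fun j => hg _) (fun j m => hg0 _ m)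
    have h1 : Summable (fun p : ℕ × (Fin N → ℕ) => g 0 p.1 * ∏ j, g (Fin.succ j) (p.2 j)) :=
      Summable.mul_of_nonneg (f := g 0) (g := fun t : Fin N → ℕ => ∏ j, g (Fin.succ j) (t j)) (hg 0) htail (Pi.le_def.mpr fun m => hg0 0 m)
        (Pi.le_def.mpr fun t => Finset.prod_nonneg fun j _ => hg0 _ (t j))
    rw [← (Fin.consEquiv (fun _ : Fin (N + 1) => ℕ)).summable_iff]
    refine h1.congr ?_
    rintro ⟨m, t⟩
    simp [Fin.consEquiv, Fin.prod_univ_succ]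

lemma hasSum_pi_prod : ∀ (N : ℕ) (a : Fin N → ℕ → ℂ) (T : Fin N → ℂ),
    (∀ j, HasSum (a j) (T j)) → (∀ j, Summable fun m => ‖a j m‖) →
    HasSum (fun s : Fin N → ℕ => ∏ j, a j (s j)) (∏ j, T j) := by
  intro N
  induction N with
  | zero =>
    intro a T _ _
    have := hasSum_default (fun s : Fin 0 → ℕ => ∏ j, a j (s j))
    simpa using this
  | succ N ih =>
    intro a T ha hn
    have htail : HasSum (fun t : Fin N → ℕ => ∏ j, a (Fin.succ j) (t j)) (∏ j, T (Fin.succ j)) :=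
      ih (fun j => a (Fin.succ j)) (fun j => T (Fin.succ j)) (fun j => ha _) (fun j => hn _)
    have hsum : Summable (fun p : ℕ × (Fin N → ℕ) => a 0 p.1 * ∏ j, a (Fin.succ j) (p.2 j)) := by
      apply Summable.of_norm
      have h2 : Summable (fun t : Fin N → ℕ => ∏ j, ‖a (Fin.succ j) (t j)‖) :=
        summable_pi_prod N (fun j m => ‖a (Fin.succ j) m‖) (fun j => hn _)
          (fun j m => norm_nonneg _)
      have := Summable.mul_of_nonneg (f := fun m => ‖a 0 m‖) (g := fun t : Fin N → ℕ => ∏ j, ‖a (Fin.succ j) (t j)‖) (hn 0) h2 (Pi.le_def.mpr fun m => norm_nonneg _)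
        (Pi.le_def.mpr fun t => Finset.prod_nonneg fun j _ => norm_nonneg _)
      refine this.congr ?_
      rintro ⟨m, t⟩
      simp [norm_prod]
    have h1 : HasSum (fun p : ℕ × (Fin N → ℕ) => a 0 p.1 * ∏ j, a (Fin.succ j) (p.2 j))
        (T 0 * ∏ j, T (Fin.succ j)) := HasSum.mul (f := a 0) (g := fun t : Fin N → ℕ => ∏ j, a (Fin.succ j) (t j)) (ha 0) htail hsum
    rw [Fin.prod_univ_succ, ← (Fin.consEquiv (fun _ : Fin (N + 1) => ℕ)).hasSum_iff]
    refine h1.congr ?_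
    rintro ⟨m, t⟩
    simp [Fin.consEquiv, Fin.prod_univ_succ]

end ContourAux

namespace ContourAux

lemma hasSum_geom_inv {μ z : ℂ} (hz : z ≠ 0) (h : ‖μ‖ < ‖z‖) :
    HasSum (fun m : ℕ => μ ^ m * (z⁻¹) ^ (m + 1)) (z - μ)⁻¹ := by
  have hlt : ‖μ * z⁻¹‖ < 1 := by
    rw [norm_mul, norm_inv]
    rw [show ‖μ‖ * ‖z‖⁻¹ = ‖μ‖ / ‖z‖ from (div_eq_mul_inv _ _).symm, div_lt_one]
    · exact h
    · simpa using hz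
  have H := (hasSum_geometric_of_norm_lt_one hlt).mul_right z⁻¹
  have e1 : (1 - μ * z⁻¹)⁻¹ * z⁻¹ = (z - μ)⁻¹ := by
    rw [← mul_inv]
    congr 1
    field_simp
  rw [e1] at H
  have e2 : (fun m : ℕ => (μ * z⁻¹) ^ m * z⁻¹) = fun m : ℕ => μ ^ m * (z⁻¹) ^ (m + 1) := by
    funext m; ring
  rwa [e2] at H

lemma summable_norm_geom {μ z : ℂ} (hz : z ≠ 0) (h : ‖μ‖ < ‖z‖) :
    Summable fun m : ℕ => ‖μ ^ m * (z⁻¹) ^ (m + 1)‖ := by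
  have h0 : (0:ℝ) ≤ ‖μ‖ / ‖z‖ := by positivity
  have h1 : ‖μ‖ / ‖z‖ < 1 := by
    rw [div_lt_one]; exact h
    simpa using hz
  refine ((summable_geometric_of_lt_one h0 h1).mul_left ((‖z‖)⁻¹)).congr fun m => ?_
  rw [norm_mul, norm_pow, norm_pow, norm_inv]
  rw [div_pow, pow_succ]
  field_simp
  rw [mul_assoc, ← mul_pow, mul_one_div_cancel (norm_ne_zero_iff.mpr hz), one_pow, mul_one]

lemma prod_term_eq {M : Type*} [CommMonoid M] {N : ℕ} (μ : Fin N → M) (w : M) (s : Fin N → ℕ) :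
    (∏ j, μ j ^ s j * w ^ (s j + 1)) =
      (∏ j, μ j ^ s j) * w ^ (N + ∑ j, s j) := by
  rw [Finset.prod_mul_distrib, Finset.prod_pow_eq_pow_sum]
  congr 1
  rw [Finset.sum_add_distrib, Finset.sum_const, Finset.card_univ, Fintype.card_fin,
    smul_eq_mul, mul_one, add_comm]

lemma hasSum_inv_prod {N : ℕ} (μ : Fin N → ℂ) (z : ℂ) (hz : z ≠ 0)
    (h : ∀ j, ‖μ j‖ < ‖z‖) :
    HasSum (fun s : Fin N → ℕ => (∏ j, μ j ^ s j) * (z⁻¹) ^ (N + ∑ j, s j))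
      (∏ j, (z - μ j))⁻¹ := by
  have H := hasSum_pi_prod N (fun j m => μ j ^ m * (z⁻¹) ^ (m + 1))
    (fun j => (z - μ j)⁻¹) (fun j => hasSum_geom_inv hz (h j))
    (fun j => summable_norm_geom hz (h j))
  rw [← Finset.prod_inv_distrib]
  have e2 : (fun s : Fin N → ℕ => ∏ j, (μ j ^ s j * (z⁻¹) ^ (s j + 1))) =
      fun s : Fin N → ℕ => (∏ j, μ j ^ s j) * (z⁻¹) ^ (N + ∑ j, s j) := by
    funext s; exact prod_term_eq μ z⁻¹ s
  rwa [e2] at H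

end ContourAux

namespace ContourAux2
open ContourAux

lemma summable_real_geom {a b : ℝ} (ha : 0 ≤ a) (hb : a < b) :
    Summable fun m : ℕ => a ^ m * (b⁻¹) ^ (m + 1) := by
  have hb0 : 0 < b := lt_of_le_of_lt ha hb
  have h0 : (0:ℝ) ≤ a / b := by positivity
  have h1 : a / b < 1 := by rw [div_lt_one hb0]; exact hb
  refine ((summable_geometric_of_lt_one h0 h1).mul_left (b⁻¹)).congr fun m => ?_
  rw [div_pow, pow_succ]
  field_simp
  rw [one_div, inv_pow, mul_assoc, mul_inv_cancel₀ (pow_ne_zero _ hb0.ne'), mul_one]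

variable (n : ℕ) (lam : Fin (n+1) → ℂ) (r : ℝ)

lemma circleIntegral_pow_div_prod (hr : ∀ j, ‖lam j‖ < r) (k : ℕ) :
    (∮ z in C(0, r), z ^ k / ∏ j, (z - lam j)) =
      if n ≤ k then (2 * Real.pi * Complex.I) *
        ∑ s ∈ Finset.Nat.antidiagonalTuple (n + 1) (k - n), ∏ j, lam j ^ s j
      else 0 := by
  have hr0 : 0 < r := lt_of_le_of_lt (norm_nonneg (lam 0)) (hr 0)
  set cm : ℝ → ℂ := circleMap 0 r with hcm
  have habs : ∀ θ, ‖cm θ‖ = r := fun θ => by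
    rw [hcm, norm_circleMap_zero, abs_of_pos hr0]
  have hne : ∀ θ, cm θ ≠ 0 := fun θ => by
    intro h0; have := habs θ; rw [h0] at this; simp at this; exact hr0.ne this
  have hsne : ∀ z ∈ sphere (0:ℂ) r, z ≠ 0 := fun z hz => by
    intro h0
    rw [mem_sphere, dist_eq, h0] at hz
    simp at hz
    exact hr0.ne hz
  set M : (Fin (n+1) → ℕ) → ℕ := fun s => (n+1) + ∑ j, s j with hM
  set m : (Fin (n+1) → ℕ) → ℤ := fun s => (k:ℤ) - ((n+1) + ∑ j, s j) with hm
  set F : (Fin (n+1) → ℕ) → ℝ → ℂ := fun s θ =>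
    deriv cm θ • ((∏ j, lam j ^ s j) * ((cm θ)⁻¹) ^ (M s) * (cm θ) ^ k) with hF
  set bound : (Fin (n+1) → ℕ) → ℝ → ℝ := fun s θ =>
    r * ((∏ j, ‖lam j‖ ^ s j * (r⁻¹) ^ (s j + 1)) * r ^ k) with hbound
  have hcont : Continuous cm := continuous_circleMap 0 r
  have hdcont : Continuous (deriv cm) := by
    have : deriv cm = fun θ => cm θ * I := by
      funext θ; rw [hcm, deriv_circleMap]
    rw [this]
    exact hcont.mul continuous_const
  have key : HasSum (fun s : Fin (n+1) → ℕ => ∫ θ in (0:ℝ)..2*Real.pi, F s θ)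
      (∮ z in C(0, r), z ^ k / ∏ j, (z - lam j)) := by
    simp only [circleIntegral]
    refine intervalIntegral.hasSum_integral_of_dominated_convergence bound ?_ ?_ ?_ ?_ ?_
    · intro s
      apply Continuous.aestronglyMeasurable
      exact hdcont.smul (((continuous_const.mul ((hcont.inv₀ hne).pow _)).mul (hcont.pow _)))
    · intro s
      refine Eventually.of_forall fun θ _ => le_of_eq ?_
      have e := prod_term_eq (fun j => ‖lam j‖) (r⁻¹) s
      rw [hF, hbound]
      simp only [norm_smul, norm_mul, norm_pow, norm_inv, norm_prod,
        habs θ]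
      rw [e]
      have hd : ‖deriv cm θ‖ = r := by
        rw [hcm, deriv_circleMap]
        simp [norm_circleMap_zero, abs_of_pos hr0]
      rw [hd]
    · refine Eventually.of_forall fun θ _ => ?_
      have hp : Summable fun s : Fin (n+1) → ℕ =>
          ∏ j, ‖lam j‖ ^ s j * (r⁻¹) ^ (s j + 1) := by
        refine summable_pi_prod (n+1) (fun j mm => ‖lam j‖ ^ mm * (r⁻¹) ^ (mm + 1))
          (fun j => summable_real_geom (norm_nonneg _) (hr j)) (fun j mm => ?_)
        have : (0:ℝ) < r := hr0
        positivity
      exact ((hp.mul_right (r ^ k)).mul_left r)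
    · rw [hbound]
      simp only []
      apply intervalIntegrable_const
    · refine Eventually.of_forall fun θ _ => ?_
      have H := (hasSum_inv_prod lam (cm θ) (hne θ)
        (fun j => by rw [habs θ]; exact hr j)).mul_right ((cm θ) ^ k)
      have H2 := H.const_smul (deriv cm θ)
      have e2 : (cm θ) ^ k / ∏ j, (cm θ - lam j) = (∏ j, (cm θ - lam j))⁻¹ * (cm θ) ^ k := by
        rw [div_eq_mul_inv, mul_comm]
      rw [e2]
      exact H2
  have hterm : ∀ s : Fin (n+1) → ℕ, (∫ θ in (0:ℝ)..2*Real.pi, F s θ) =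
      (∏ j, lam j ^ s j) * if m s = -1 then (2 * Real.pi * I) else 0 := by
    intro s
    have e1 : (∫ θ in (0:ℝ)..2*Real.pi, F s θ) =
        ∮ z in C(0, r), (∏ j, lam j ^ s j) * ((z⁻¹) ^ (M s) * z ^ k) := by
      simp only [circleIntegral, hF]
      congr 1
      funext θ
      congr 1
      ring
    rw [e1]
    have e2 : (∮ z in C(0, r), (∏ j, lam j ^ s j) * ((z⁻¹) ^ (M s) * z ^ k)) =
        ∮ z in C(0, r), (∏ j, lam j ^ s j) * (z - 0) ^ (m s) := by
      refine circleIntegral.integral_congr hr0.le fun z hz => ?_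
      have hz0 : z ≠ 0 := hsne z hz
      congr 1
      rw [sub_zero]
      rw [show m s = (k:ℤ) - (M s : ℤ) by rw [hm, hM]; push_cast; ring]
      rw [zpow_sub₀ hz0, zpow_natCast, zpow_natCast, div_eq_mul_inv, ← inv_pow]
      ring
    rw [e2, circleIntegral.integral_const_mul]
    congr 1
    by_cases hms : m s = -1
    · rw [if_pos hms, hms]
      have : (fun z : ℂ => (z - 0) ^ (-1:ℤ)) = fun z : ℂ => (z - 0)⁻¹ := by
        funext z; rw [zpow_neg_one]
      rw [this]
      exact circleIntegral.integral_sub_inv_of_mem_ball (mem_ball_self hr0)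
    · rw [if_neg hms]
      exact circleIntegral.integral_sub_zpow_of_ne hms 0 0 r
  rw [funext hterm] at key
  by_cases hnk : n ≤ k
  · rw [if_pos hnk]
    have hz : ∀ s ∉ Finset.Nat.antidiagonalTuple (n + 1) (k - n),
        (∏ j, lam j ^ s j) * (if m s = -1 then (2 * Real.pi * I) else 0) = 0 := by
      intro s hs
      rw [Finset.Nat.mem_antidiagonalTuple] at hs
      have hcast : ((∑ j, s j : ℕ) : ℤ) = ∑ j, ((s j : ℤ)) := Nat.cast_sum _ _
      have : ¬ (m s = -1) := by
        simp only [hm]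
        intro hcon
        apply hs
        omega
      rw [if_neg this, mul_zero]
    have H2 := hasSum_sum_of_ne_finset_zero (L := SummationFilter.unconditional _) hz
    have := key.unique H2
    rw [this]
    rw [Finset.mul_sum]
    refine Finset.sum_congr rfl fun s hs => ?_
    rw [Finset.Nat.mem_antidiagonalTuple] at hs
    have hcast : ((∑ j, s j : ℕ) : ℤ) = ∑ j, ((s j : ℤ)) := Nat.cast_sum _ _
    have : m s = -1 := by simp only [hm]; omega
    rw [if_pos this]
    ring
  · rw [if_neg hnk]
    have hzero : (fun s : Fin (n+1) → ℕ =>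
        (∏ j, lam j ^ s j) * (if m s = -1 then (2 * Real.pi * I) else 0)) = fun _ => 0 := by
      funext s
      have hcast : ((∑ j, s j : ℕ) : ℤ) = ∑ j, ((s j : ℤ)) := Nat.cast_sum _ _
      have : ¬ (m s = -1) := by
        simp only [hm]
        intro hcon
        omega
      rw [if_neg this, mul_zero]
    rw [hzero] at key
    exact key.unique hasSum_zero

end ContourAux2

namespace ContourAux3
open ContourAux ContourAux2

lemma hasDerivAt_contour (n : ℕ) (lam : Fin (n+1) → ℂ) (r : ℝ)
    (hr : ∀ j, ‖lam j‖ < r) (k : ℕ) (x₀ : ℂ) :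
    HasDerivAt (fun x => ∮ z in C(0, r), z ^ k * Complex.exp (x * z) / ∏ j, (z - lam j))
      (∮ z in C(0, r), z ^ (k+1) * Complex.exp (x₀ * z) / ∏ j, (z - lam j)) x₀ := by
  have hr0 : 0 < r := lt_of_le_of_lt (norm_nonneg (lam 0)) (hr 0)
  set cm : ℝ → ℂ := circleMap 0 r with hcm
  have habs : ∀ θ, ‖cm θ‖ = r := fun θ => by
    rw [hcm, norm_circleMap_zero, abs_of_pos hr0]
  have hcont : Continuous cm := continuous_circleMap 0 r
  have hdcont : Continuous (deriv cm) := by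
    have : deriv cm = fun θ => cm θ * I := by
      funext θ; rw [hcm, deriv_circleMap]
    rw [this]
    exact hcont.mul continuous_const
  set B : ℝ := ∏ j, (r - ‖lam j‖) with hB
  have hBpos : 0 < B := Finset.prod_pos fun j _ => sub_pos.mpr (hr j)
  have hlow : ∀ θ, B ≤ ‖∏ j, (cm θ - lam j)‖ := by
    intro θ
    rw [norm_prod]
    refine Finset.prod_le_prod (fun j _ => (sub_nonneg.mpr (hr j).le)) fun j _ => ?_
    calc r - ‖lam j‖ = ‖cm θ‖ - ‖lam j‖ := by rw [habs]
    _ ≤ ‖cm θ - lam j‖ := by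
        have := norm_sub_norm_le (cm θ) (lam j)
        simpa using this
  have hPne : ∀ θ, (∏ j, (cm θ - lam j)) ≠ 0 := fun θ => by
    intro h0
    have h1 := hlow θ
    rw [h0] at h1
    simp at h1
    linarith
  have hPcont : Continuous fun θ => ∏ j, (cm θ - lam j) :=
    continuous_finset_prod _ fun j _ => hcont.sub continuous_const
  have hFcont : ∀ (x : ℂ) (k' : ℕ), Continuous fun θ =>
      deriv cm θ • ((cm θ) ^ k' * Complex.exp (x * cm θ) / ∏ j, (cm θ - lam j)) := by
    intro x k'
    exact hdcont.smul (((hcont.pow _).mul ((continuous_const.mul hcont).cexp)).div hPcont hPne)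
  simp only [circleIntegral]
  refine (intervalIntegral.hasDerivAt_integral_of_dominated_loc_of_deriv_le
    (F := fun x θ => deriv cm θ • ((cm θ) ^ k * Complex.exp (x * cm θ) / ∏ j, (cm θ - lam j)))
    (F' := fun x θ => deriv cm θ • ((cm θ) ^ (k+1) * Complex.exp (x * cm θ) / ∏ j, (cm θ - lam j)))
    (bound := fun _ => r * (r ^ (k+1) * (Real.exp ((‖x₀‖ + 1) * r) / B)))
    (Metric.ball_mem_nhds x₀ one_pos) ?_ ?_ ?_ ?_ ?_ ?_).2
  · exact Eventually.of_forall fun x => (hFcont x k).aestronglyMeasurable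
  · exact (hFcont x₀ k).intervalIntegrable _ _
  · exact (hFcont x₀ (k+1)).aestronglyMeasurable
  · refine Eventually.of_forall fun θ _ => fun x hx => ?_
    have hxb : ‖x‖ ≤ ‖x₀‖ + 1 := by
      have h3 := norm_sub_norm_le x x₀
      have h2 : dist x x₀ < 1 := mem_ball.mp hx
      rw [Complex.dist_eq] at h2
      linarith
    have hd : ‖deriv cm θ‖ = r := by
      rw [hcm, deriv_circleMap]
      simp [norm_circleMap_zero, abs_of_pos hr0]
    have hexp : ‖Complex.exp (x * cm θ)‖ ≤ Real.exp ((‖x₀‖ + 1) * r) := by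
      rw [Complex.norm_exp]
      apply Real.exp_le_exp.mpr
      calc (x * cm θ).re ≤ ‖x * cm θ‖ := Complex.re_le_norm _
      _ = ‖x‖ * r := by rw [norm_mul, habs]
      _ ≤ (‖x₀‖ + 1) * r := by
          apply mul_le_mul_of_nonneg_right hxb hr0.le
    calc ‖deriv cm θ • ((cm θ) ^ (k+1) * Complex.exp (x * cm θ) / ∏ j, (cm θ - lam j))‖
        = r * (r ^ (k+1) * (‖Complex.exp (x * cm θ)‖ /
          ‖∏ j, (cm θ - lam j)‖)) := by
          simp only [norm_smul, norm_div, norm_mul, norm_pow, habs θ, hd]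
          ring
    _ ≤ r * (r ^ (k+1) * (Real.exp ((‖x₀‖ + 1) * r) / B)) := by
        gcongr
        all_goals first | exact hexp | exact hlow θ | exact hBpos | positivity
  · exact intervalIntegrable_const
  · refine Eventually.of_forall fun θ _ => fun x _ => ?_
    have H := (((hasDerivAt_id x).mul_const (cm θ)).cexp).const_mul
      (deriv cm θ * (cm θ) ^ k / (∏ j, (cm θ - lam j)))
    simp only [id_eq, one_mul] at H
    show HasDerivAt (fun x' => deriv cm θ *
        ((cm θ) ^ k * Complex.exp (x' * cm θ) / ∏ j, (cm θ - lam j)))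
      (deriv cm θ * ((cm θ) ^ (k+1) * Complex.exp (x * cm θ) / ∏ j, (cm θ - lam j))) x
    convert H using 1
    · rfl
    · rfl
    · funext x'
      ring
    · ring

end ContourAux3

namespace ContourAux4
open ContourAux ContourAux2 ContourAux3

lemma iteratedDeriv_contour (n : ℕ) (lam : Fin (n+1) → ℂ) (r : ℝ)
    (hr : ∀ j, ‖lam j‖ < r) (Φ : ℂ → ℂ)
    (hΦ : ∀ x, Φ x = (2 * Real.pi * Complex.I)⁻¹ *
      ∮ z in C(0, r), Complex.exp (x * z) / ∏ j, (z - lam j)) (k : ℕ) :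
    iteratedDeriv k Φ = fun x => (2 * Real.pi * Complex.I)⁻¹ *
      ∮ z in C(0, r), z ^ k * Complex.exp (x * z) / ∏ j, (z - lam j) := by
  have hr0 : 0 < r := lt_of_le_of_lt (norm_nonneg (lam 0)) (hr 0)
  induction k with
  | zero =>
    funext x
    rw [iteratedDeriv_zero, hΦ x]
    congr 1
    refine (circleIntegral.integral_congr hr0.le fun z hz => ?_).symm
    rw [pow_zero, one_mul]
  | succ k ih =>
    rw [iteratedDeriv_succ, ih]
    funext x
    exact (HasDerivAt.const_mul ((2 * Real.pi * Complex.I)⁻¹ : ℂ)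
      (hasDerivAt_contour n lam r hr k x)).deriv

end ContourAux4

/-- Taylor derivatives at 0 of the fundamental function defined by a contour integral. -/
theorem stmt_0 (n : ℕ) (lam : Fin (n + 1) → ℂ) (r : ℝ)
    (hr : ∀ j, ‖lam j‖ < r)
    (Φ : ℂ → ℂ)
    (hΦ : ∀ x, Φ x = (2 * Real.pi * Complex.I)⁻¹ *
      ∮ z in C(0, r), Complex.exp (x * z) / ∏ j, (z - lam j)) :
    (∀ k < n, iteratedDeriv k Φ 0 = 0) ∧
    (∀ k, n ≤ k → iteratedDeriv k Φ 0 =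
      ∑ s ∈ Finset.Nat.antidiagonalTuple (n + 1) (k - n), ∏ j, lam j ^ s j) := by
  have hr0 : 0 < r := lt_of_le_of_lt (norm_nonneg (lam 0)) (hr 0)
  have hmain : ∀ k, iteratedDeriv k Φ 0 = (2 * Real.pi * Complex.I)⁻¹ *
      (if n ≤ k then (2 * Real.pi * Complex.I) *
        ∑ s ∈ Finset.Nat.antidiagonalTuple (n + 1) (k - n), ∏ j, lam j ^ s j
      else 0) := by
    intro k
    rw [ContourAux4.iteratedDeriv_contour n lam r hr Φ hΦ k]
    simp only []
    rw [← ContourAux2.circleIntegral_pow_div_prod n lam r hr k]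
    congr 1
    refine circleIntegral.integral_congr hr0.le fun z hz => ?_
    rw [zero_mul, Complex.exp_zero, mul_one]
  constructor
  · intro k hk
    rw [hmain k, if_neg (by omega), mul_zero]
  · intro k hk
    rw [hmain k, if_pos hk, inv_mul_cancel_left₀ Complex.two_pi_I_ne_zero]
end

section
/- If λ₀,...,λₙ are real, then the fundamental function Φ_{(λ₀,...,λₙ)}(x) is strictly positive for all x > 0. -/
open MeasureTheory Metric Set Complex Filter


lemma circle_nv {r : ℝ} {m : ℝ} (hm : |m| < r) {z : ℂ} (hz : z ∈ sphere (0:ℂ) r) :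
    z - (m : ℂ) ≠ 0 := by
  rw [mem_sphere_zero_iff_norm] at hz
  intro h
  rw [sub_eq_zero] at h
  rw [h, Complex.norm_real, Real.norm_eq_abs] at hz
  exact absurd hz hm.ne

lemma lemA (m : ℕ) (μ : Fin (m + 2) → ℝ) (r : ℝ) (hμ : ∀ j, |μ j| < r) :
    (∮ z in C(0, r), (∏ j, (z - (μ j : ℂ)))⁻¹) = 0 := by
  have hr0 : 0 < r := lt_of_le_of_lt (abs_nonneg _) (hμ 0)
  set f : ℂ → ℂ := fun z => (∏ j, (z - (μ j : ℂ)))⁻¹ with hf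
  have hne : ∀ z : ℂ, r ≤ ‖z‖ → ∀ j, z - (μ j : ℂ) ≠ 0 := by
    intro z hz j h
    rw [sub_eq_zero] at h
    rw [h, Complex.norm_real, Real.norm_eq_abs] at hz
    exact absurd (lt_of_le_of_lt hz (hμ j)) (lt_irrefl _)
  have hprodne : ∀ z : ℂ, r ≤ ‖z‖ → (∏ j, (z - (μ j : ℂ))) ≠ 0 := fun z hz =>
    Finset.prod_ne_zero_iff.2 fun j _ => hne z hz j
  have heq : ∀ R, r ≤ R → (∮ z in C(0, R), f z) = ∮ z in C(0, r), f z := by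
    intro R hR
    apply circleIntegral_eq_of_differentiable_on_annulus_off_countable hr0 hR
      Set.countable_empty
    · apply ContinuousOn.inv₀
      · exact (continuous_finset_prod _ fun j _ =>
          continuous_id.sub continuous_const).continuousOn
      · intro z hz
        exact hprodne z (by simpa using hz.2)
    · intro z hz
      apply DifferentiableAt.inv
      · exact DifferentiableAt.fun_finsetProd fun j _ =>
          (differentiableAt_id.sub (differentiableAt_const _))
      · exact hprodne z (le_of_lt (by simpa using hz.1.2))
  have hbound : ∀ R, r < R → ‖∮ z in C(0, r), f z‖ ≤
      2 * Real.pi * R / (R - r) ^ (m + 2) := by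
    intro R hRr
    rw [← heq R hRr.le, div_eq_mul_inv]
    apply circleIntegral.norm_integral_le_of_norm_le_const (le_of_lt (hr0.trans hRr))
    intro z hz
    rw [mem_sphere_zero_iff_norm] at hz
    have h1 : ∀ j : Fin (m + 2), R - r ≤ ‖z - (μ j : ℂ)‖ := by
      intro j
      have := norm_sub_norm_le z (μ j : ℂ)
      rw [hz, Complex.norm_real, Real.norm_eq_abs] at this
      linarith [hμ j, this]
    have h2 : (R - r) ^ (m + 2) ≤ ‖∏ j, (z - (μ j : ℂ))‖ := by
      rw [norm_prod]
      calc (R - r) ^ (m + 2) = ∏ _j : Fin (m + 2), (R - r) := by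
            rw [Finset.prod_const, Finset.card_univ, Fintype.card_fin]
        _ ≤ ∏ j, ‖z - (μ j : ℂ)‖ :=
            Finset.prod_le_prod (fun j _ => by linarith [hRr]) fun j _ => h1 j
    rw [hf]
    simp only [norm_inv]
    exact inv_anti₀ (pow_pos (by linarith) _) h2
  have h3' : Tendsto (fun R : ℝ => 4 * Real.pi * (R - r)⁻¹) atTop (nhds 0) := by
    have h1 : Tendsto (fun R : ℝ => R - r) atTop atTop := by
      simpa [sub_eq_add_neg] using tendsto_atTop_add_const_right atTop (-r) tendsto_id
    have := h1.inv_tendsto_atTop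
    simpa using this.const_mul (4 * Real.pi)
  have hev : ∀ᶠ R in atTop, ‖∮ z in C(0, r), f z‖ ≤ 4 * Real.pi * (R - r)⁻¹ := by
    filter_upwards [eventually_ge_atTop (max (2 * r) (r + 1))] with R hR
    have hR1 : 2 * r ≤ R := le_trans (le_max_left _ _) hR
    have hR2 : r + 1 ≤ R := le_trans (le_max_right _ _) hR
    have ht1 : (1 : ℝ) ≤ R - r := by linarith
    have ht0 : (0 : ℝ) < R - r := by linarith
    refine le_trans (hbound R (by linarith)) ?_
    rw [div_le_iff₀ (by positivity)]
    have e : (R - r)⁻¹ * (R - r) ^ (m + 2) = (R - r) ^ (m + 1) := by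
      rw [pow_succ' (R - r) (m + 1), inv_mul_cancel_left₀ ht0.ne']
    rw [mul_assoc (4 * Real.pi), e]
    have h5 : R - r ≤ (R - r) ^ (m + 1) := le_self_pow₀ ht1 (Nat.succ_ne_zero m)
    nlinarith [Real.pi_pos, mul_nonneg Real.pi_pos.le (sub_nonneg.2 h5)]
  have : ‖∮ z in C(0, r), f z‖ ≤ 0 := ge_of_tendsto h3' hev
  simpa using norm_le_zero_iff.1 this



lemma keyB (lam : Fin 1 → ℝ) (r : ℝ) (hr : ∀ j, |lam j| < r) :
    ∃ g : ℝ → ℝ, Continuous g ∧ (∀ x, 0 ≤ x → 0 ≤ g x) ∧ (∀ x, 0 < x → 0 < g x) ∧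
      ∀ x : ℝ, 0 ≤ x →
        (∮ z in C(0, r), Complex.exp (x * z) / ∏ j, (z - (lam j : ℂ)))
          = 2 * Real.pi * Complex.I * g x := by
  have hr0 : 0 < r := lt_of_le_of_lt (abs_nonneg _) (hr 0)
  refine ⟨fun x => Real.exp (lam 0 * x), by continuity,
    fun x _ => (Real.exp_pos _).le, fun x _ => Real.exp_pos _, ?_⟩
  intro x _
  have hd : DiffContOnCl ℂ (fun z => Complex.exp (x * z)) (ball 0 r) :=
    (Differentiable.diffContOnCl (by
      exact (differentiable_const (x:ℂ)).mul differentiable_id |>.cexp))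
  have hw : (lam 0 : ℂ) ∈ ball (0:ℂ) r := by
    rw [mem_ball_zero_iff, Complex.norm_real, Real.norm_eq_abs]
    exact hr 0
  have := hd.circleIntegral_sub_inv_smul hw
  have h2 : (∮ z in C(0, r), Complex.exp (x * z) / ∏ j, (z - (lam j : ℂ)))
      = ∮ z in C(0, r), (z - (lam 0 : ℂ))⁻¹ • Complex.exp (x * z) := by
    apply circleIntegral.integral_congr hr0.le
    intro z _
    simp [Fin.prod_univ_one, div_eq_inv_mul, smul_eq_mul]
  rw [h2, this, smul_eq_mul]
  rw [Complex.ofReal_exp]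
  congr 1
  push_cast
  ring

section
variable (n : ℕ) (lam : Fin (n + 2) → ℝ) (r : ℝ)

-- step lemma with IH as hypothesis
lemma keyS (hr : ∀ j, |lam j| < r)
    (g : ℝ → ℝ) (hgc : Continuous g) (hg0 : ∀ x, 0 ≤ x → 0 ≤ g x)
    (hgpos : ∀ x, 0 < x → 0 < g x)
    (hgint : ∀ x : ℝ, 0 ≤ x →
      (∮ z in C(0, r), Complex.exp (x * z) / ∏ j : Fin (n + 1),
          (z - (lam j.castSucc : ℂ)))
        = 2 * Real.pi * Complex.I * g x) :
    ∃ g₁ : ℝ → ℝ, Continuous g₁ ∧ (∀ x, 0 ≤ x → 0 ≤ g₁ x) ∧ (∀ x, 0 < x → 0 < g₁ x) ∧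
      ∀ x : ℝ, 0 ≤ x →
        (∮ z in C(0, r), Complex.exp (x * z) / ∏ j, (z - (lam j : ℂ)))
          = 2 * Real.pi * Complex.I * g₁ x := by
  have hr0 : 0 < r := lt_of_le_of_lt (abs_nonneg _) (hr 0)
  set a : ℝ := lam (Fin.last (n + 1)) with ha
  set c0 : ℂ := (a : ℂ) with hc0
  set Q : ℂ → ℂ := fun z => ∏ j : Fin (n + 1), (z - (lam j.castSucc : ℂ)) with hQ
  set P : ℂ → ℂ := fun z => ∏ j : Fin (n + 2), (z - (lam j : ℂ)) with hP
  have hPQ : ∀ z, P z = Q z * (z - c0) := by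
    intro z
    simp only [hP, hQ]
    rw [Fin.prod_univ_castSucc]
  -- nonvanishing on/off the circle
  have hnv : ∀ z : ℂ, z ∈ sphere (0:ℂ) r → ∀ m : ℝ, |m| < r → z - (m:ℂ) ≠ 0 := by
    intro z hz m hm h
    rw [mem_sphere_zero_iff_norm] at hz
    rw [sub_eq_zero] at h
    rw [h, Complex.norm_real, Real.norm_eq_abs] at hz
    exact absurd hz hm.ne
  have hQne : ∀ z ∈ sphere (0:ℂ) r, Q z ≠ 0 := fun z hz =>
    Finset.prod_ne_zero_iff.2 fun j _ => hnv z hz _ (hr _)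
  have hPne : ∀ z ∈ sphere (0:ℂ) r, P z ≠ 0 := fun z hz =>
    Finset.prod_ne_zero_iff.2 fun j _ => hnv z hz _ (hr _)
  -- the candidate function
  set g₁ : ℝ → ℝ := fun x => ∫ t in (0:ℝ)..x, Real.exp (a * (x - t)) * g t with hg₁
  have hcont1 : Continuous fun t => Real.exp (-(a * t)) * g t := by
    exact (Real.continuous_exp.comp (continuous_const.mul continuous_id).neg).mul hgc
  have hg₁eq : ∀ x, g₁ x = Real.exp (a * x) * ∫ t in (0:ℝ)..x, Real.exp (-(a * t)) * g t := by
    intro x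
    rw [hg₁, ← intervalIntegral.integral_const_mul]
    apply intervalIntegral.integral_congr
    intro t _
    dsimp only
    rw [← mul_assoc, ← Real.exp_add]
    congr 2
    ring
  have hg₁c : Continuous g₁ := by
    have hF : Continuous fun x => ∫ t in (0:ℝ)..x, Real.exp (-(a * t)) * g t :=
      intervalIntegral.continuous_primitive
        (fun a b => (hcont1.intervalIntegrable a b)) 0
    have : Continuous fun x => Real.exp (a * x) *
        ∫ t in (0:ℝ)..x, Real.exp (-(a * t)) * g t :=
      (Real.continuous_exp.comp (continuous_const.mul continuous_id)).mul hF
    convert this using 1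
    funext x; exact hg₁eq x
  have hcont2 : Continuous fun t => Real.exp (a * (0 - t)) * g t := by
    exact (Real.continuous_exp.comp (continuous_const.mul (continuous_const.sub continuous_id))).mul hgc
  have hg₁0 : ∀ x, 0 ≤ x → 0 ≤ g₁ x := by
    intro x hx
    apply intervalIntegral.integral_nonneg hx
    intro u hu
    exact mul_nonneg (Real.exp_pos _).le (hg0 u hu.1)
  have hg₁pos : ∀ x, 0 < x → 0 < g₁ x := by
    intro x hx
    apply intervalIntegral.intervalIntegral_pos_of_pos_on
    · apply Continuous.intervalIntegrable
      exact (Real.continuous_exp.comp (continuous_const.mul (continuous_const.sub continuous_id))).mul hgc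
    · intro t ht
      exact mul_pos (Real.exp_pos _) (hgpos t ht.1)
    · exact hx
  refine ⟨g₁, hg₁c, hg₁0, hg₁pos, ?_⟩
  intro x hx
  -- inner integral formula
  have hInner : ∀ z : ℂ, z ∈ sphere (0:ℂ) r →
      (∫ t in (0:ℝ)..x, Complex.exp (c0 * (x - t)) * Complex.exp (t * z))
        = (Complex.exp (x * z) - Complex.exp (c0 * x)) / (z - c0) := by
    intro z hz
    have hzc : z - c0 ≠ 0 := hnv z hz a (hr _)
    have h1 : ∀ t : ℝ, Complex.exp (c0 * ((x:ℂ) - t)) * Complex.exp (t * z)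
        = Complex.exp (c0 * x) * Complex.exp ((z - c0) * t) := by
      intro t
      rw [← Complex.exp_add, ← Complex.exp_add]
      congr 1
      ring
    rw [intervalIntegral.integral_congr
      (g := fun t : ℝ => Complex.exp (c0 * x) * Complex.exp ((z - c0) * t))
      (fun t _ => h1 t)]
    rw [intervalIntegral.integral_const_mul, integral_exp_mul_complex hzc]
    rw [Complex.ofReal_zero, mul_zero, Complex.exp_zero, mul_div_assoc']
    congr 1
    rw [mul_sub, mul_one, ← Complex.exp_add]
    congr 2
    ring
  have hStepB : ∀ z ∈ sphere (0:ℂ) r,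
      Complex.exp (x * z) / P z - Complex.exp (c0 * x) * (P z)⁻¹
        = (∫ t in (0:ℝ)..x, Complex.exp (c0 * (x - t)) * Complex.exp (t * z)) / Q z := by
    intro z hz
    rw [hInner z hz, hPQ z]
    have h1 : Q z ≠ 0 := hQne z hz
    have h2 : z - c0 ≠ 0 := hnv z hz a (hr _)
    rw [← div_eq_mul_inv, div_sub_div_same, div_div, mul_comm (z - c0) (Q z)]
  have hcontP : Continuous P := by
    simp only [hP]
    exact continuous_finset_prod _ fun j _ => continuous_id.sub continuous_const
  have hcontQ : Continuous Q := by
    simp only [hQ]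
    exact continuous_finset_prod _ fun j _ => continuous_id.sub continuous_const
  have hci1 : CircleIntegrable (fun z => Complex.exp (x * z) / P z) 0 r := by
    apply ContinuousOn.circleIntegrable hr0.le
    exact ContinuousOn.div
      ((Complex.continuous_exp.comp (continuous_const.mul continuous_id)).continuousOn)
      hcontP.continuousOn hPne
  have hci2 : CircleIntegrable (fun z => Complex.exp (c0 * x) * (P z)⁻¹) 0 r := by
    apply ContinuousOn.circleIntegrable hr0.le
    exact ContinuousOn.mul continuousOn_const
      (ContinuousOn.inv₀ hcontP.continuousOn hPne)
  have hzero : (∮ z in C(0, r), Complex.exp (c0 * x) * (P z)⁻¹) = 0 := by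
    have hA := lemA n lam r hr
    calc (∮ z in C(0, r), Complex.exp (c0 * x) * (P z)⁻¹)
        = Complex.exp (c0 * x) • ∮ z in C(0, r), (P z)⁻¹ := by
          rw [← circleIntegral.integral_smul]
          simp only [smul_eq_mul]
      _ = 0 := by
          simp only [hP]
          rw [hA, smul_zero]
  have hmain : (∮ z in C(0, r), Complex.exp (x * z) / P z)
      = ∮ z in C(0, r),
          (∫ t in (0:ℝ)..x, Complex.exp (c0 * (x - t)) * Complex.exp (t * z)) / Q z := by
    have hsub := circleIntegral.integral_sub hci1 hci2
    have h1 : (∮ z in C(0, r),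
        (Complex.exp (x * z) / P z - Complex.exp (c0 * x) * (P z)⁻¹))
        = ∮ z in C(0, r),
          (∫ t in (0:ℝ)..x, Complex.exp (c0 * (x - t)) * Complex.exp (t * z)) / Q z :=
      circleIntegral.integral_congr hr0.le (fun z hz => hStepB z hz)
    rw [hsub, hzero, sub_zero] at h1
    exact h1
  have hdiv : ∀ z ∈ sphere (0:ℂ) r,
      (∫ t in (0:ℝ)..x, Complex.exp (c0 * (x - t)) * Complex.exp (t * z)) / Q z
        = ∫ t in (0:ℝ)..x, Complex.exp (c0 * (x - t)) * Complex.exp (t * z) / Q z :=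
    fun z hz => (intervalIntegral.integral_div _ _).symm
  have hswap : (∮ z in C(0, r),
      ∫ t in (0:ℝ)..x, Complex.exp (c0 * (x - t)) * Complex.exp (t * z) / Q z)
      = ∫ t in (0:ℝ)..x,
          ∮ z in C(0, r), Complex.exp (c0 * (x - t)) * Complex.exp (t * z) / Q z := by
    simp only [circleIntegral]
    have hG : Continuous (Function.uncurry fun (θ t : ℝ) =>
        deriv (circleMap 0 r) θ •
          (Complex.exp (c0 * (x - t)) * Complex.exp (t * circleMap 0 r θ) /
            Q (circleMap 0 r θ))) := by
      simp only [deriv_circleMap, Function.uncurry]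
      apply Continuous.fun_smul
      · exact ((continuous_circleMap 0 r).comp continuous_fst).mul continuous_const
      · apply Continuous.div
        · apply Continuous.mul
          · exact Complex.continuous_exp.comp
              (continuous_const.mul (continuous_const.sub
                (Complex.continuous_ofReal.comp continuous_snd)))
          · exact Complex.continuous_exp.comp
              ((Complex.continuous_ofReal.comp continuous_snd).mul
                ((continuous_circleMap 0 r).comp continuous_fst))
        · exact hcontQ.comp ((continuous_circleMap 0 r).comp continuous_fst)
        · intro p
          exact hQne _ (circleMap_mem_sphere _ hr0.le _)
    rw [intervalIntegral.integral_congr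
      (g := fun θ => ∫ t in (0:ℝ)..x, deriv (circleMap 0 r) θ •
        (Complex.exp (c0 * (x - t)) * Complex.exp (t * circleMap 0 r θ) /
          Q (circleMap 0 r θ)))
      (fun θ _ => (intervalIntegral.integral_smul _ _).symm)]
    rw [intervalIntegral.integral_of_le Real.two_pi_pos.le,
      intervalIntegral.integral_of_le hx]
    simp_rw [intervalIntegral.integral_of_le hx,
      intervalIntegral.integral_of_le Real.two_pi_pos.le]
    apply MeasureTheory.integral_integral_swap
    rw [Measure.prod_restrict, ← Measure.volume_eq_prod]
    exact (hG.continuousOn.integrableOn_compact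
      (isCompact_Icc.prod isCompact_Icc)).mono_set
      (Set.prod_mono Set.Ioc_subset_Icc_self Set.Ioc_subset_Icc_self)
  have hin : ∀ t ∈ Set.Icc (0:ℝ) x,
      (∮ z in C(0, r), Complex.exp (c0 * (x - t)) * Complex.exp (t * z) / Q z)
        = 2 * Real.pi * Complex.I * (Complex.exp (c0 * (x - t)) * (g t : ℂ)) := by
    intro t ht
    have h1 : (∮ z in C(0, r), Complex.exp (c0 * (x - t)) * Complex.exp (t * z) / Q z)
        = Complex.exp (c0 * (x - t)) • ∮ z in C(0, r), Complex.exp (t * z) / Q z := by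
      rw [← circleIntegral.integral_smul]
      apply circleIntegral.integral_congr hr0.le
      intro z _
      simp [smul_eq_mul, mul_div_assoc]
    rw [h1, hgint t ht.1, smul_eq_mul]
    ring
  calc (∮ z in C(0, r), Complex.exp (x * z) / ∏ j, (z - (lam j : ℂ)))
      = ∮ z in C(0, r),
          (∫ t in (0:ℝ)..x, Complex.exp (c0 * (x - t)) * Complex.exp (t * z)) / Q z := hmain
    _ = ∮ z in C(0, r),
          ∫ t in (0:ℝ)..x, Complex.exp (c0 * (x - t)) * Complex.exp (t * z) / Q z :=
        circleIntegral.integral_congr hr0.le (fun z hz => hdiv z hz)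
    _ = ∫ t in (0:ℝ)..x,
          ∮ z in C(0, r), Complex.exp (c0 * (x - t)) * Complex.exp (t * z) / Q z := hswap
    _ = ∫ t in (0:ℝ)..x,
          2 * Real.pi * Complex.I * (Complex.exp (c0 * (x - t)) * (g t : ℂ)) := by
        apply intervalIntegral.integral_congr
        intro t ht
        rw [Set.uIcc_of_le hx] at ht
        exact hin t ht
    _ = 2 * Real.pi * Complex.I *
          ∫ t in (0:ℝ)..x, Complex.exp (c0 * (x - t)) * (g t : ℂ) := by
        rw [intervalIntegral.integral_const_mul]
    _ = 2 * Real.pi * Complex.I *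
          ((∫ t in (0:ℝ)..x, Real.exp (a * (x - t)) * g t : ℝ) : ℂ) := by
        congr 1
        have hc : ∀ t : ℝ, Complex.exp (c0 * ((x:ℂ) - (t:ℂ)))
            = ((Real.exp (a * (x - t)) : ℝ) : ℂ) := by
          intro t
          rw [Complex.ofReal_exp]
          congr 1
          push_cast
          ring
        rw [← intervalIntegral.integral_ofReal]
        apply intervalIntegral.integral_congr
        intro t _
        simp only [hc t, ← Complex.ofReal_mul]
end


lemma key (n : ℕ) : ∀ (lam : Fin (n + 1) → ℝ) (r : ℝ), (∀ j, |lam j| < r) →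
    ∃ g : ℝ → ℝ, Continuous g ∧ (∀ x, 0 ≤ x → 0 ≤ g x) ∧ (∀ x, 0 < x → 0 < g x) ∧
      ∀ x : ℝ, 0 ≤ x →
        (∮ z in C(0, r), Complex.exp (x * z) / ∏ j, (z - (lam j : ℂ)))
          = 2 * Real.pi * Complex.I * g x := by
  induction n with
  | zero =>
    intro lam r hr
    exact keyB lam r hr
  | succ n IH =>
    intro lam r hr
    obtain ⟨g, hgc, hg0, hgpos, hgint⟩ :=
      IH (fun j => lam j.castSucc) r (fun j => hr _)
    exact keyS n lam r hr g hgc hg0 hgpos hgint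

/-- For real eigenvalues the fundamental function is strictly positive on `(0, ∞)`. -/
theorem stmt_3 (n : ℕ) (lam : Fin (n + 1) → ℝ) (r : ℝ)
    (hr : ∀ j, |lam j| < r)
    (Φ : ℂ → ℂ)
    (hΦ : ∀ x, Φ x = (2 * Real.pi * Complex.I)⁻¹ *
      ∮ z in C(0, r), Complex.exp (x * z) / ∏ j, (z - (lam j : ℂ))) :
    ∀ x : ℝ, 0 < x → 0 < (Φ x).re ∧ (Φ x).im = 0 := by
  obtain ⟨g, hgc, hg0, hgpos, hgint⟩ := key n lam r hr
  intro x hx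
  have h1 : Φ ↑x = ((g x : ℝ) : ℂ) := by
    rw [hΦ ↑x, hgint x hx.le, inv_mul_cancel_left₀ Complex.two_pi_I_ne_zero]
  rw [h1]
  exact ⟨by simpa using hgpos x hx, by simp⟩
end

section
/- The polynomials P_s⁰ satisfy the three-term recurrence 4s(s+1) P_{s+1}⁰(x) = x² P_{s-1}⁰(x) − 2s(2s+1) P_s⁰(x) for s ≥ 1. -/
open Complex Metric

private lemma sphere_ne {z : ℂ} (hz : z ∈ sphere (0:ℂ) 1) : z ≠ 0 ∧ z + 2 ≠ 0 := by
  rw [mem_sphere_zero_iff_norm] at hz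
  constructor
  · intro h; rw [h] at hz; simp at hz
  · intro h
    have : z = -2 := by linear_combination h
    rw [this] at hz
    norm_num at hz

private lemma integrable_aux (n : ℕ) (x : ℂ) :
    CircleIntegrable (fun z => Complex.exp (x * z) / (z ^ n * (z + 2) ^ n)) 0 1 := by
  apply ContinuousOn.circleIntegrable (by norm_num)
  apply ContinuousOn.div
  · exact (Complex.continuous_exp.comp (continuous_const.mul continuous_id)).continuousOn
  · exact ((continuous_pow n).mul ((continuous_id.add continuous_const).pow n)).continuousOn
  · intro z hz
    obtain ⟨h0, h2⟩ := sphere_ne hz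
    exact mul_ne_zero (pow_ne_zero _ h0) (pow_ne_zero _ h2)

private lemma hasDeriv_aux (s : ℕ) (x z : ℂ) (hz0 : z ≠ 0) (hz2 : z + 2 ≠ 0) :
    HasDerivAt (fun w => Complex.exp (x * w) * (-2*(s:ℂ) - 2*(x+(s:ℂ))*w - x*w^2) /
        (w ^ (s+1) * (w + 2) ^ (s+1)))
      (4*(s:ℂ)*((s:ℂ)+1) * (Complex.exp (x*z) / (z^(s+2)*(z+2)^(s+2)))
        + 2*(s:ℂ)*(2*(s:ℂ)+1) * (Complex.exp (x*z) / (z^(s+1)*(z+2)^(s+1)))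
        - x^2 * (Complex.exp (x*z) / (z^s*(z+2)^s))) z := by
  have hx : HasDerivAt (fun w : ℂ => x * w) x z := by
    simpa using (hasDerivAt_id z).const_mul x
  have hexp : HasDerivAt (fun w : ℂ => Complex.exp (x * w)) (Complex.exp (x*z) * x) z := hx.cexp
  have hq : HasDerivAt (fun w : ℂ => -2*(s:ℂ) - 2*(x+(s:ℂ))*w - x*w^2)
      (-(2*(x+(s:ℂ))) - x*(2*z)) z := by
    have h1 := (hasDerivAt_id z).const_mul (2*(x+(s:ℂ)))
    have h2 := (hasDerivAt_pow 2 z).const_mul x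
    exact (((hasDerivAt_const z (-2*(s:ℂ))).sub h1).sub h2).congr_deriv (by simp)
  have hnum := hexp.mul hq
  have hd1 := hasDerivAt_pow (s+1) z
  have hd2 : HasDerivAt (fun w : ℂ => (w + 2) ^ (s+1)) ((((s:ℕ)+1 : ℕ):ℂ) * (z+2)^s) z := by
    exact (((hasDerivAt_id z).add_const 2).pow (s+1)).congr_deriv (by simp)
  have hden := hd1.mul hd2
  have hdne : z^(s+1) * (z+2)^(s+1) ≠ 0 := mul_ne_zero (pow_ne_zero _ hz0) (pow_ne_zero _ hz2)
  convert hnum.div hden hdne using 1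
  · rfl
  · rfl
  · rfl
  simp only [Pi.mul_apply, Nat.add_sub_cancel, pow_succ]
  push_cast
  generalize hAdef : z ^ s = A
  generalize hBdef : (z + 2) ^ s = B
  have hA : A ≠ 0 := hAdef ▸ pow_ne_zero _ hz0
  have hB : B ≠ 0 := hBdef ▸ pow_ne_zero _ hz2
  simp only [← mul_div_assoc]
  rw [div_add_div _ _ (by simp [mul_eq_zero, pow_eq_zero_iff, hA, hB, hz0, hz2])
        (by simp [mul_eq_zero, pow_eq_zero_iff, hA, hB, hz0, hz2]),
      div_sub_div _ _ (by simp [mul_eq_zero, pow_eq_zero_iff, hA, hB, hz0, hz2])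
        (by simp [mul_eq_zero, pow_eq_zero_iff, hA, hB, hz0, hz2]),
      div_eq_div_iff (by simp [mul_eq_zero, pow_eq_zero_iff, hA, hB, hz0, hz2])
        (by simp [mul_eq_zero, pow_eq_zero_iff, hA, hB, hz0, hz2])]
  ring

set_option maxHeartbeats 1000000 in
private lemma key_s9 (s : ℕ) (x : ℂ) :
    4*(s:ℂ)*((s:ℂ)+1) * (∮ z in C(0, 1), Complex.exp (x*z) / (z^(s+2)*(z+2)^(s+2)))
      + 2*(s:ℂ)*(2*(s:ℂ)+1) * (∮ z in C(0, 1), Complex.exp (x*z) / (z^(s+1)*(z+2)^(s+1)))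
      - x^2 * (∮ z in C(0, 1), Complex.exp (x*z) / (z^s*(z+2)^s)) = 0 := by
  have cont : ∀ n : ℕ, ∀ a : ℂ, CircleIntegrable
      (fun z : ℂ => a * (Complex.exp (x * z) / (z ^ n * (z + 2) ^ n))) 0 1 := by
    intro n a
    apply ContinuousOn.circleIntegrable (by norm_num)
    apply ContinuousOn.mul continuousOn_const
    apply ContinuousOn.div
    · exact (Complex.continuous_exp.comp (continuous_const.mul continuous_id)).continuousOn
    · exact ((continuous_pow n).mul ((continuous_id.add continuous_const).pow n)).continuousOn
    · intro z hz
      obtain ⟨h0, h2⟩ := sphere_ne hz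
      exact mul_ne_zero (pow_ne_zero _ h0) (pow_ne_zero _ h2)
  have i2 := cont (s+2) (4*(s:ℂ)*((s:ℂ)+1))
  have i1 := cont (s+1) (2*(s:ℂ)*(2*(s:ℂ)+1))
  have i0 := cont s (x^2)
  have h0 : (∮ z in C(0, 1),
      (4*(s:ℂ)*((s:ℂ)+1) * (Complex.exp (x*z) / (z^(s+2)*(z+2)^(s+2)))
        + 2*(s:ℂ)*(2*(s:ℂ)+1) * (Complex.exp (x*z) / (z^(s+1)*(z+2)^(s+1)))
        - x^2 * (Complex.exp (x*z) / (z^s*(z+2)^s)))) = 0 := by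
    apply circleIntegral.integral_eq_zero_of_hasDerivWithinAt (by norm_num)
    intro z hz
    obtain ⟨h0, h2⟩ := sphere_ne hz
    exact (hasDeriv_aux s x z h0 h2).hasDerivWithinAt
  have e1 : (∮ z in C(0, 1),
      (4*(s:ℂ)*((s:ℂ)+1) * (Complex.exp (x*z) / (z^(s+2)*(z+2)^(s+2)))
        + 2*(s:ℂ)*(2*(s:ℂ)+1) * (Complex.exp (x*z) / (z^(s+1)*(z+2)^(s+1)))
        - x^2 * (Complex.exp (x*z) / (z^s*(z+2)^s)))) =
      (∮ z in C(0, 1),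
      (4*(s:ℂ)*((s:ℂ)+1) * (Complex.exp (x*z) / (z^(s+2)*(z+2)^(s+2)))
        + 2*(s:ℂ)*(2*(s:ℂ)+1) * (Complex.exp (x*z) / (z^(s+1)*(z+2)^(s+1)))))
      - ∮ z in C(0, 1), x^2 * (Complex.exp (x*z) / (z^s*(z+2)^s)) :=
    circleIntegral.integral_sub (i2.add i1) i0
  have e2 : (∮ z in C(0, 1),
      (4*(s:ℂ)*((s:ℂ)+1) * (Complex.exp (x*z) / (z^(s+2)*(z+2)^(s+2)))
        + 2*(s:ℂ)*(2*(s:ℂ)+1) * (Complex.exp (x*z) / (z^(s+1)*(z+2)^(s+1))))) =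
      (∮ z in C(0, 1), 4*(s:ℂ)*((s:ℂ)+1) * (Complex.exp (x*z) / (z^(s+2)*(z+2)^(s+2))))
      + ∮ z in C(0, 1), 2*(s:ℂ)*(2*(s:ℂ)+1) * (Complex.exp (x*z) / (z^(s+1)*(z+2)^(s+1))) := by
    simp only [circleIntegral, smul_add]
    exact intervalIntegral.integral_add i2.out i1.out
  have e3 := _root_.circleIntegral.integral_const_mul (4*(s:ℂ)*((s:ℂ)+1))
    (fun z => Complex.exp (x*z) / (z^(s+2)*(z+2)^(s+2))) 0 1
  have e4 := _root_.circleIntegral.integral_const_mul (2*(s:ℂ)*(2*(s:ℂ)+1))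
    (fun z => Complex.exp (x*z) / (z^(s+1)*(z+2)^(s+1))) 0 1
  have e5 := _root_.circleIntegral.integral_const_mul (x^2)
    (fun z => Complex.exp (x*z) / (z^s*(z+2)^s)) 0 1
  linear_combination h0 - e1 - e2 - e3 - e4 + e5

theorem stmt_9 (P : ℕ → ℂ → ℂ)
    (hP : ∀ s x, P s x = (2 * Real.pi * Complex.I)⁻¹ *
      ∮ z in C(0, 1), Complex.exp (x * z) / (z ^ (s + 1) * (z + 2) ^ (s + 1))) :
    ∀ s : ℕ, 1 ≤ s → ∀ x : ℂ,
      4 * (s : ℂ) * ((s : ℂ) + 1) * P (s + 1) x =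
        x ^ 2 * P (s - 1) x - 2 * (s : ℂ) * (2 * (s : ℂ) + 1) * P s x := by
  intro s hs x
  rw [hP, hP, hP]
  have h1 : s - 1 + 1 = s := by omega
  have h2 : s + 1 + 1 = s + 2 := rfl
  rw [h1, h2]
  linear_combination (2 * (Real.pi:ℂ) * Complex.I)⁻¹ * key_s9 s x
end

section
/- The fundamental functions Φ_{2s+1} satisfy the recursion Φ_{2s+3}(x) = x²/(4s(s+1)) · Φ_{2s-1}(x) − (2s+1)/(2s+2) · Φ_{2s+1}(x) for s ≥ 1. -/
open Metric

private theorem circleIntegral_add'' {f g : ℂ → ℂ} {c : ℂ} {R : ℝ} (hf : CircleIntegrable f c R)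
    (hg : CircleIntegrable g c R) :
    (∮ z in C(c, R), (f z + g z)) = (∮ z in C(c, R), f z) + ∮ z in C(c, R), g z := by
  simp only [circleIntegral, smul_add, intervalIntegral.integral_add hf.out hg.out]

set_option maxHeartbeats 1000000 in
private theorem key_alg (t : ℕ) (x z : ℂ) (h1 : z - 1 ≠ 0) (h2 : z + 1 ≠ 0) :
    (4*((t:ℂ)+1)*(((t:ℂ)+1)+1)) * (Complex.exp (x * z) / ((z - 1) ^ (t + 2 + 1) * (z + 1) ^ (t + 2 + 1)))
      + (2*((t:ℂ)+1)*(2*((t:ℂ)+1)+1)) * (Complex.exp (x * z) / ((z - 1) ^ (t + 1 + 1) * (z + 1) ^ (t + 1 + 1)))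
      - x^2 * (Complex.exp (x * z) / ((z - 1) ^ (t + 1) * (z + 1) ^ (t + 1))) =
    ((Complex.exp (x * z) * x * (x - 2*((t:ℂ)+1)*z - x * z ^ 2) +
        Complex.exp (x * z) * (0 - 2*((t:ℂ)+1) - x * (2 * z))) *
        ((z - 1) ^ (t + 2) * (z + 1) ^ (t + 2)) -
      Complex.exp (x * z) * (x - 2*((t:ℂ)+1)*z - x * z ^ 2) *
        (((t:ℂ) + 2) * (z - 1) ^ (t + 1) * (z + 1) ^ (t + 2) +
          (z - 1) ^ (t + 2) * (((t:ℂ) + 2) * (z + 1) ^ (t + 1)))) /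
      ((z - 1) ^ (t + 2) * (z + 1) ^ (t + 2)) ^ 2 := by
  have hK : (z - 1) ^ (t + 3) * (z + 1) ^ (t + 3) ≠ 0 :=
    mul_ne_zero (pow_ne_zero _ h1) (pow_ne_zero _ h2)
  have hd1 : (z - 1) ^ (t + 2 + 1) * (z + 1) ^ (t + 2 + 1) ≠ 0 :=
    mul_ne_zero (pow_ne_zero _ h1) (pow_ne_zero _ h2)
  have hd2 : (z - 1) ^ (t + 1 + 1) * (z + 1) ^ (t + 1 + 1) ≠ 0 :=
    mul_ne_zero (pow_ne_zero _ h1) (pow_ne_zero _ h2)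
  have hd3 : (z - 1) ^ (t + 1) * (z + 1) ^ (t + 1) ≠ 0 :=
    mul_ne_zero (pow_ne_zero _ h1) (pow_ne_zero _ h2)
  have hD2 : (((z - 1) ^ (t + 2) * (z + 1) ^ (t + 2)) ^ 2) ≠ 0 :=
    pow_ne_zero _ (mul_ne_zero (pow_ne_zero _ h1) (pow_ne_zero _ h2))
  have eA : (4*((t:ℂ)+1)*(((t:ℂ)+1)+1)) *
      (Complex.exp (x * z) / ((z - 1) ^ (t + 2 + 1) * (z + 1) ^ (t + 2 + 1))) =
      (4*((t:ℂ)+1)*(((t:ℂ)+1)+1) * Complex.exp (x * z)) /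
        ((z - 1) ^ (t + 3) * (z + 1) ^ (t + 3)) := by
    rw [mul_div_assoc', div_eq_div_iff hd1 hK]; try ring
  have eB : (2*((t:ℂ)+1)*(2*((t:ℂ)+1)+1)) *
      (Complex.exp (x * z) / ((z - 1) ^ (t + 1 + 1) * (z + 1) ^ (t + 1 + 1))) =
      (2*((t:ℂ)+1)*(2*((t:ℂ)+1)+1) * Complex.exp (x * z) * ((z-1)*(z+1))) /
        ((z - 1) ^ (t + 3) * (z + 1) ^ (t + 3)) := by
    rw [mul_div_assoc', div_eq_div_iff hd2 hK]; try ring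
  have eC : x^2 * (Complex.exp (x * z) / ((z - 1) ^ (t + 1) * (z + 1) ^ (t + 1))) =
      (x^2 * Complex.exp (x * z) * ((z-1)*(z+1))^2) /
        ((z - 1) ^ (t + 3) * (z + 1) ^ (t + 3)) := by
    rw [mul_div_assoc', div_eq_div_iff hd3 hK]; try ring
  have eR : ((Complex.exp (x * z) * x * (x - 2*((t:ℂ)+1)*z - x * z ^ 2) +
        Complex.exp (x * z) * (0 - 2*((t:ℂ)+1) - x * (2 * z))) *
        ((z - 1) ^ (t + 2) * (z + 1) ^ (t + 2)) -
      Complex.exp (x * z) * (x - 2*((t:ℂ)+1)*z - x * z ^ 2) *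
        (((t:ℂ) + 2) * (z - 1) ^ (t + 1) * (z + 1) ^ (t + 2) +
          (z - 1) ^ (t + 2) * (((t:ℂ) + 2) * (z + 1) ^ (t + 1)))) /
      ((z - 1) ^ (t + 2) * (z + 1) ^ (t + 2)) ^ 2 =
      (Complex.exp (x * z) * ((x * (x - 2*((t:ℂ)+1)*z - x * z ^ 2) +
          (0 - 2*((t:ℂ)+1) - x * (2 * z))) * ((z-1)*(z+1)) -
        ((t:ℂ)+2) * (x - 2*((t:ℂ)+1)*z - x * z ^ 2) * ((z-1)+(z+1)))) /
        ((z - 1) ^ (t + 3) * (z + 1) ^ (t + 3)) := by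
    rw [div_eq_div_iff hD2 hK]; try ring
  rw [eA, eB, eC, eR, ← add_div, div_sub_div_same]
  congr 1
  ring

set_option maxHeartbeats 1000000 in
theorem stmt_10 (r : ℝ) (hr : 1 < r) (Φ : ℕ → ℂ → ℂ)
    (hΦ : ∀ s x, Φ s x = (2 * Real.pi * Complex.I)⁻¹ *
      ∮ z in C(0, r), Complex.exp (x * z) / ((z - 1) ^ (s + 1) * (z + 1) ^ (s + 1))) :
    ∀ s : ℕ, 1 ≤ s → ∀ x : ℂ,
      Φ (s + 1) x = x ^ 2 / (4 * (s : ℂ) * ((s : ℂ) + 1)) * Φ (s - 1) x -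
        (2 * (s : ℂ) + 1) / (2 * (s : ℂ) + 2) * Φ s x := by
  intro s hs x
  obtain ⟨t, rfl⟩ : ∃ t, s = t + 1 := ⟨s - 1, (Nat.succ_pred_eq_of_pos hs).symm⟩
  simp only [Nat.add_sub_cancel]
  have hr0 : (0:ℝ) ≤ r := by linarith
  have hS0 : ((t:ℂ) + 1) ≠ 0 := by
    have h : ((t+1 : ℕ) : ℂ) ≠ 0 := Nat.cast_ne_zero.mpr (by omega)
    push_cast at h; exact h
  have hS1 : ((t:ℂ) + 1) + 1 ≠ 0 := by
    have h : ((t+2 : ℕ) : ℂ) ≠ 0 := Nat.cast_ne_zero.mpr (by omega)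
    push_cast at h; intro h'; exact h (by linear_combination h')
  have hz1 : ∀ z ∈ sphere (0:ℂ) r, z - 1 ≠ 0 ∧ z + 1 ≠ 0 := by
    intro z hz
    rw [mem_sphere_zero_iff_norm] at hz
    constructor
    · intro h
      have hz1' : z = 1 := by linear_combination h
      rw [hz1'] at hz; simp at hz; linarith
    · intro h
      have hz1' : z = -1 := by linear_combination h
      rw [hz1'] at hz; simp at hz; linarith
  set f : ℕ → ℂ → ℂ := fun k z => Complex.exp (x * z) / ((z - 1) ^ (k + 1) * (z + 1) ^ (k + 1))
    with hf
  set cA : ℂ := 4*((t:ℂ)+1)*(((t:ℂ)+1)+1) with hcA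
  set cB : ℂ := 2*((t:ℂ)+1)*(2*((t:ℂ)+1)+1) with hcB
  set F : ℂ → ℂ := fun z => Complex.exp (x*z) * (x - 2*((t:ℂ)+1)*z - x * z ^ 2) /
      ((z-1)^(t+2) * (z+1)^(t+2)) with hF
  have key : ∀ z ∈ sphere (0:ℂ) r,
      HasDerivAt F (cA * f (t+2) z + cB * f (t+1) z - x^2 * f t z) z := by
    intro z hz
    obtain ⟨h1, h2⟩ := hz1 z hz
    have hexp : HasDerivAt (fun w : ℂ => Complex.exp (x*w)) (Complex.exp (x*z) * x) z := by
      simpa using (HasDerivAt.cexp ((hasDerivAt_id z).const_mul x))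
    have hPd : HasDerivAt (fun w : ℂ => x - 2*((t:ℂ)+1)*w - x * w ^ 2)
        (0 - 2*((t:ℂ)+1) - x * (2 * z)) z := by
      have h := ((hasDerivAt_const z x).sub
        ((hasDerivAt_id z).const_mul (2*((t:ℂ)+1)))).sub
        ((hasDerivAt_pow 2 z).const_mul x)
      refine h.congr_deriv ?_
      push_cast
      ring
    have hN := hexp.mul hPd
    have hp1 : HasDerivAt (fun w : ℂ => (w-1)^(t+2)) (((t:ℂ)+2) * (z-1)^(t+1)) z := by
      have h := ((hasDerivAt_id z).sub_const 1).pow (t+2)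
      norm_num at h
      exact h
    have hp2 : HasDerivAt (fun w : ℂ => (w+1)^(t+2)) (((t:ℂ)+2) * (z+1)^(t+1)) z := by
      have h := ((hasDerivAt_id z).add_const 1).pow (t+2)
      norm_num at h
      exact h
    have hDd := hp1.mul hp2
    have hD : ((z-1)^(t+2) * (z+1)^(t+2)) ≠ 0 :=
      mul_ne_zero (pow_ne_zero _ h1) (pow_ne_zero _ h2)
    have hdiv := hN.div hDd hD
    refine hdiv.congr_deriv ?_
    rw [hf, hcA, hcB]
    exact (key_alg t x z h1 h2).symm
  have hzero : (∮ z in C(0, r), (cA * f (t+2) z + cB * f (t+1) z - x^2 * f t z)) = 0 :=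
    circleIntegral.integral_eq_zero_of_hasDerivWithinAt hr0
      (fun z hz => (key z hz).hasDerivWithinAt)
  have hcont : ∀ k : ℕ, ContinuousOn (f k) (sphere (0:ℂ) r) := by
    intro k
    rw [hf]
    apply ContinuousOn.div
    · exact (Complex.continuous_exp.comp (continuous_const.mul continuous_id)).continuousOn
    · fun_prop
    · exact fun z hz => mul_ne_zero (pow_ne_zero _ (hz1 z hz).1) (pow_ne_zero _ (hz1 z hz).2)
  have hci : ∀ k : ℕ, CircleIntegrable (f k) 0 r := fun k => (hcont k).circleIntegrable hr0
  have iA : CircleIntegrable (fun z => cA * f (t+2) z) 0 r :=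
    (continuousOn_const.mul (hcont _)).circleIntegrable hr0
  have iB : CircleIntegrable (fun z => cB * f (t+1) z) 0 r :=
    (continuousOn_const.mul (hcont _)).circleIntegrable hr0
  have iC : CircleIntegrable (fun z => x^2 * f t z) 0 r :=
    (continuousOn_const.mul (hcont _)).circleIntegrable hr0
  have iAB : CircleIntegrable (fun z => cA * f (t+2) z + cB * f (t+1) z) 0 r :=
    ((continuousOn_const.mul (hcont _)).add
      (continuousOn_const.mul (hcont _))).circleIntegrable hr0
  simp only [circleIntegral.integral_sub iAB iC, circleIntegral_add'' iA iB,
    circleIntegral.integral_const_mul] at hzero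
  rw [hΦ, hΦ, hΦ]
  show (2 * Real.pi * Complex.I)⁻¹ * (∮ z in C(0,r), f (t+2) z) =
      x^2/(4*((t+1:ℕ):ℂ)*(((t+1:ℕ):ℂ)+1)) *
        ((2*Real.pi*Complex.I)⁻¹ * ∮ z in C(0,r), f t z) -
      (2*((t+1:ℕ):ℂ)+1)/(2*((t+1:ℕ):ℂ)+2) *
        ((2*Real.pi*Complex.I)⁻¹ * ∮ z in C(0,r), f (t+1) z)
  rw [hcA, hcB] at hzero
  push_cast
  have hcA0 : (4*((t:ℂ)+1)*(((t:ℂ)+1)+1)) ≠ 0 :=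
    mul_ne_zero (mul_ne_zero (by norm_num) hS0) hS1
  have h22 : (2*((t:ℂ)+1)+2) ≠ 0 := by
    intro h'; exact hS1 (by linear_combination h'/2)
  have hA : (∮ z in C(0,r), f (t+2) z) =
      x^2/(4*((t:ℂ)+1)*(((t:ℂ)+1)+1)) * (∮ z in C(0,r), f t z) -
      (2*((t:ℂ)+1)+1)/(2*((t:ℂ)+1)+2) * (∮ z in C(0,r), f (t+1) z) := by
    rw [div_mul_eq_mul_div, div_mul_eq_mul_div, div_sub_div _ _ hcA0 h22,
      eq_div_iff (mul_ne_zero hcA0 h22)]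
    linear_combination (2*((t:ℂ)+1)+2) * hzero
  rw [hA]
  ring
end

section
/- For every x > 0 and s ≥ 1 the inequality 0 ≤ Φ_{2s+1}(x)/Φ_{2s-1}(x) < x²/(2s(2s+1)) holds. -/
open Complex

-- norm summability of the double series, over ℝ
lemma aux_norm_summable (x : ℝ) (t : ℕ) {R : ℝ} (hR : 1 < R) :
    Summable (fun p : ℕ × ℕ =>
      ((|x| * R) ^ p.1 / p.1.factorial) *
        (((p.2 + t).choose t : ℝ) * R ^ (-(2 * (t:ℤ) + 2 + 2 * p.2)))) := by
  have hR0 : (0:ℝ) < R := lt_trans one_pos hR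
  have h1 : Summable (fun n : ℕ => (|x| * R) ^ n / n.factorial) :=
    Real.summable_pow_div_factorial _
  have h2 : Summable (fun k : ℕ => ((k + t).choose t : ℝ) * ((R ^ 2)⁻¹) ^ k) := by
    apply summable_choose_mul_geometric_of_norm_lt_one
    rw [norm_inv, norm_pow, Real.norm_eq_abs, abs_of_pos hR0, inv_lt_one_iff₀]
    right; nlinarith
  have h2' : Summable (fun k : ℕ =>
      (((k + t).choose t : ℝ) * ((R ^ 2)⁻¹) ^ k) * R ^ (-(2 * (t:ℤ) + 2))) :=
    h2.mul_right _
  have := h1.mul_of_nonneg h2' (fun n => by positivity)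
    (fun k => by positivity)
  apply this.congr
  intro p
  congr 1
  have e1 : (-(2 * (t:ℤ) + 2 + 2 * p.2)) = (-(2 * (p.2:ℤ))) + (-(2 * (t:ℤ) + 2)) := by ring
  rw [e1, zpow_add₀ (ne_of_gt hR0)]
  have e2 : R ^ (-(2 * (p.2:ℤ))) = ((R ^ 2)⁻¹) ^ p.2 := by
    rw [inv_pow, ← pow_mul, ← zpow_natCast R (2 * p.2), ← zpow_neg]
    push_cast
    ring_nf
  rw [e2]; ring

-- the integrand as a double series
lemma aux_hasSum_integrand (x : ℝ) (t : ℕ) {z : ℂ} (hz : 1 < ‖z‖) :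
    HasSum (fun p : ℕ × ℕ =>
      ((x:ℂ) ^ p.1 / p.1.factorial * ((p.2 + t).choose t : ℂ)) *
        z ^ ((p.1 : ℤ) - (2 * t + 2 + 2 * p.2)))
      (Complex.exp (x * z) / ((z - 1) ^ (t + 1) * (z + 1) ^ (t + 1))) := by
  have hz0 : z ≠ 0 := by
    intro h; rw [h, norm_zero] at hz; linarith
  have hz20 : z ^ 2 ≠ 0 := pow_ne_zero _ hz0
  have hz21 : z ^ 2 - 1 ≠ 0 := by
    intro h
    have : z ^ 2 = 1 := by linear_combination h
    have : ‖z‖ ^ 2 = 1 := by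
      rw [← norm_pow, this, norm_one]
    nlinarith
  -- exp series
  have h1 : HasSum (fun n : ℕ => (x:ℂ) ^ n / n.factorial * z ^ n) (Complex.exp (x * z)) := by
    have h := NormedSpace.expSeries_div_hasSum_exp ((x:ℂ) * z)
    rw [← Complex.exp_eq_exp_ℂ] at h
    have e : (fun n : ℕ => ((x:ℂ) * z) ^ n / n.factorial) =
        (fun n : ℕ => (x:ℂ) ^ n / n.factorial * z ^ n) := by
      funext n; rw [mul_pow]; ring
    rwa [e] at h
  -- binomial series
  have h2 : ‖(z ^ 2)⁻¹‖ < 1 := by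
    rw [norm_inv, norm_pow, inv_lt_one_iff₀]
    right; nlinarith
  have h3 := hasSum_choose_mul_geometric_of_norm_lt_one (𝕜 := ℂ) t h2
  have h4 := h3.mul_right (z ^ (-(2 * (t:ℤ) + 2)))
  have e4 : (fun k : ℕ => ((k + t).choose t : ℂ) * ((z ^ 2)⁻¹) ^ k * z ^ (-(2 * (t:ℤ) + 2))) =
      (fun k : ℕ => ((k + t).choose t : ℂ) * z ^ (-(2 * (t:ℤ) + 2 + 2 * k))) := by
    funext k
    have e1 : (-(2 * (t:ℤ) + 2 + 2 * k)) = (-(2 * (k:ℤ))) + (-(2 * (t:ℤ) + 2)) := by ring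
    rw [e1, zpow_add₀ hz0]
    have e2 : z ^ (-(2 * (k:ℤ))) = ((z ^ 2)⁻¹) ^ k := by
      rw [inv_pow, ← pow_mul, ← zpow_natCast z (2 * k), ← zpow_neg]
      push_cast
      ring_nf
    rw [e2]; ring
  have e5 : 1 / (1 - (z ^ 2)⁻¹) ^ (t + 1) * z ^ (-(2 * (t:ℤ) + 2)) =
      ((z - 1) ^ (t + 1) * (z + 1) ^ (t + 1))⁻¹ := by
    have ezz : (z - 1) ^ (t + 1) * (z + 1) ^ (t + 1) = (z ^ 2 - 1) ^ (t + 1) := by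
      rw [← mul_pow]; ring_nf
    have h1m : (1 - (z ^ 2)⁻¹) = (z ^ 2 - 1) * (z ^ 2)⁻¹ := by
      field_simp
    have ez : z ^ (-(2 * (t:ℤ) + 2)) = ((z ^ 2) ^ (t + 1))⁻¹ := by
      rw [← pow_mul, ← zpow_natCast z (2 * (t + 1)), ← zpow_neg]
      push_cast; ring_nf
    rw [ezz, h1m, ez, mul_pow, one_div, mul_inv, inv_pow, inv_inv, mul_assoc,
      mul_inv_cancel₀ (pow_ne_zero _ hz20), mul_one]
  rw [e4, e5] at h4
  -- product summability
  have hsum : Summable (fun p : ℕ × ℕ =>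
      ((x:ℂ) ^ p.1 / p.1.factorial * z ^ p.1) *
        (((p.2 + t).choose t : ℂ) * z ^ (-(2 * (t:ℤ) + 2 + 2 * p.2)))) := by
    apply Summable.of_norm
    have := aux_norm_summable x t (R := ‖z‖) hz
    apply this.congr
    intro p
    simp only [norm_mul, norm_div, norm_pow, norm_zpow, Complex.norm_natCast,
      Complex.norm_real, Real.norm_eq_abs, mul_pow]
    ring
  have h6 := h1.mul h4 hsum
  have e7 : (fun p : ℕ × ℕ =>
      ((x:ℂ) ^ p.1 / p.1.factorial * z ^ p.1) *
        (((p.2 + t).choose t : ℂ) * z ^ (-(2 * (t:ℤ) + 2 + 2 * p.2)))) =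
      (fun p : ℕ × ℕ =>
      ((x:ℂ) ^ p.1 / p.1.factorial * ((p.2 + t).choose t : ℂ)) *
        z ^ ((p.1 : ℤ) - (2 * t + 2 + 2 * p.2))) := by
    funext p
    have : ((p.1 : ℤ) - (2 * t + 2 + 2 * p.2)) = (p.1 : ℤ) + (-(2 * (t:ℤ) + 2 + 2 * p.2)) := by
      ring
    rw [this, zpow_add₀ hz0, zpow_natCast]
    ring
  rw [e7] at h6
  rwa [div_eq_mul_inv]

lemma aux_circle_zpow {r : ℝ} (hr : 0 < r) (m : ℤ) :
    (∮ z in C((0:ℂ), r), z ^ m) = if m = -1 then 2 * Real.pi * Complex.I else 0 := by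
  have h : (fun z : ℂ => z ^ m) = (fun z : ℂ => (z - 0) ^ m) := by
    funext z; rw [sub_zero]
  rw [h]
  split_ifs with hm
  · subst hm
    have := circleIntegral.integral_sub_inv_of_mem_ball
      (c := (0:ℂ)) (w := 0) (R := r) (by simpa using hr)
    rw [← this]
    apply circleIntegral.integral_congr hr.le
    intro z _
    simp [zpow_neg_one]
  · exact circleIntegral.integral_sub_zpow_of_ne hm _ _ _

lemma aux_integral (x : ℝ) {r : ℝ} (hr : 1 < r) (t : ℕ) :
    (∮ z in C((0:ℂ), r), Complex.exp (x * z) / ((z - 1) ^ (t + 1) * (z + 1) ^ (t + 1))) =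
      (2 * Real.pi * Complex.I) *
        ∑' k : ℕ, (((k + t).choose t : ℂ) * (x:ℂ) ^ (2 * t + 1 + 2 * k) /
          (2 * t + 1 + 2 * k).factorial) := by
  have hr0 : (0:ℝ) < r := lt_trans one_pos hr
  set c : ℕ × ℕ → ℂ := fun p => (x:ℂ) ^ p.1 / p.1.factorial * ((p.2 + t).choose t : ℂ) with hc
  set m : ℕ × ℕ → ℤ := fun p => (p.1 : ℤ) - (2 * t + 2 + 2 * p.2) with hm
  have hcm : ∀ θ : ℝ, circleMap 0 r θ ≠ 0 := fun θ => circleMap_ne_center (ne_of_gt hr0)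
  have hnorm : ∀ θ : ℝ, ‖circleMap 0 r θ‖ = r := by
    intro θ; rw [norm_circleMap_zero, abs_of_pos hr0]
  -- Step A : HasSum of term integrals to the circle integral
  have stepA : HasSum
      (fun p : ℕ × ℕ => ∫ θ in (0:ℝ)..(2*Real.pi),
        (circleMap 0 r θ * Complex.I) * (c p * circleMap 0 r θ ^ (m p)))
      (∮ z in C((0:ℂ), r), Complex.exp (x * z) / ((z - 1) ^ (t + 1) * (z + 1) ^ (t + 1))) := by
    have hint : (∮ z in C((0:ℂ), r),
        Complex.exp (x * z) / ((z - 1) ^ (t + 1) * (z + 1) ^ (t + 1))) =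
        ∫ θ in (0:ℝ)..(2*Real.pi), (circleMap 0 r θ * Complex.I) *
          (Complex.exp (x * circleMap 0 r θ) /
            ((circleMap 0 r θ - 1) ^ (t + 1) * (circleMap 0 r θ + 1) ^ (t + 1))) := by
      simp only [circleIntegral, deriv_circleMap, smul_eq_mul]
    rw [hint]
    apply intervalIntegral.hasSum_integral_of_dominated_convergence
      (bound := fun p _ => r * ((|x| * r) ^ p.1 / p.1.factorial *
        (((p.2 + t).choose t : ℝ) * r ^ (-(2 * (t:ℤ) + 2 + 2 * p.2)))))
    · intro p
      apply Continuous.aestronglyMeasurable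
      have h1 : Continuous (circleMap 0 r) := continuous_circleMap 0 r
      have h2 : Continuous (fun θ => circleMap 0 r θ ^ (m p)) :=
        h1.zpow₀ (m p) (fun θ => Or.inl (hcm θ))
      exact (h1.mul continuous_const).mul (continuous_const.mul h2)
    · intro p
      filter_upwards with θ _
      rw [norm_mul, norm_mul, norm_mul, norm_zpow, hnorm]
      rw [Complex.norm_I, mul_one]
      have : ‖c p‖ = |x| ^ p.1 / p.1.factorial * ((p.2 + t).choose t : ℝ) := by
        rw [hc]
        simp only [norm_mul, norm_div, norm_pow, Complex.norm_natCast, Complex.norm_real,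
          Real.norm_eq_abs]
      rw [this]
      have he : (|x| * r) ^ p.1 = |x| ^ p.1 * r ^ p.1 := mul_pow _ _ _
      have eexp : m p = (p.1:ℤ) + (-(2 * (t:ℤ) + 2 + 2 * p.2)) := by
        simp only [hm]; ring
      have hmz : r ^ (m p) = r ^ (p.1:ℤ) * r ^ (-(2 * (t:ℤ) + 2 + 2 * p.2)) := by
        rw [eexp, zpow_add₀ (ne_of_gt hr0)]
      rw [hmz, zpow_natCast, he]
      apply le_of_eq
      ring
    · filter_upwards with θ _
      exact (aux_norm_summable x t hr).mul_left r
    · exact intervalIntegrable_const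
    · filter_upwards with θ _
      have hz : 1 < ‖circleMap 0 r θ‖ := by rw [hnorm]; exact hr
      have h := (aux_hasSum_integrand x t hz).mul_left (circleMap 0 r θ * Complex.I)
      have e : (fun p : ℕ × ℕ => circleMap 0 r θ * Complex.I *
          (((x:ℂ) ^ p.1 / p.1.factorial * ((p.2 + t).choose t : ℂ)) *
            circleMap 0 r θ ^ ((p.1 : ℤ) - (2 * t + 2 + 2 * p.2)))) =
          (fun p : ℕ × ℕ => circleMap 0 r θ * Complex.I *
            (c p * circleMap 0 r θ ^ (m p))) := by
        funext p
        simp only [hc, hm]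
      rwa [e] at h
  -- Step B : evaluate each term integral
  have stepB : ∀ p : ℕ × ℕ,
      (∫ θ in (0:ℝ)..(2*Real.pi),
        (circleMap 0 r θ * Complex.I) * (c p * circleMap 0 r θ ^ (m p))) =
      (if p.1 = 2 * t + 1 + 2 * p.2 then c p * (2 * Real.pi * Complex.I) else 0) := by
    intro p
    have e1 : (fun θ : ℝ => (circleMap 0 r θ * Complex.I) * (c p * circleMap 0 r θ ^ (m p))) =
        (fun θ : ℝ => c p * ((circleMap 0 r θ * Complex.I) * circleMap 0 r θ ^ (m p))) := by
      funext θ; ring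
    rw [e1, intervalIntegral.integral_const_mul]
    have e2 : (∫ θ in (0:ℝ)..(2*Real.pi),
        (circleMap 0 r θ * Complex.I) * circleMap 0 r θ ^ (m p)) =
        (∮ z in C((0:ℂ), r), z ^ (m p)) := by
      simp only [circleIntegral, deriv_circleMap, smul_eq_mul]
    rw [e2, aux_circle_zpow hr0]
    have e3 : (m p = -1) ↔ (p.1 = 2 * t + 1 + 2 * p.2) := by
      simp only [hm]; omega
    split_ifs with h1 h2 h2
    · rfl
    · exact absurd (e3.mp h1) h2
    · exact absurd (e3.mpr h2) h1
    · rw [mul_zero]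
  have stepA' : HasSum
      (fun p : ℕ × ℕ => if p.1 = 2 * t + 1 + 2 * p.2 then c p * (2 * Real.pi * Complex.I) else 0)
      (∮ z in C((0:ℂ), r), Complex.exp (x * z) / ((z - 1) ^ (t + 1) * (z + 1) ^ (t + 1))) := by
    have e := funext stepB
    rwa [e] at stepA
  -- Step C : reindex
  have hinj : Function.Injective (fun k : ℕ => ((2 * t + 1 + 2 * k, k) : ℕ × ℕ)) := by
    intro a b h
    simpa using congrArg Prod.snd h
  have hsupp : ∀ p : ℕ × ℕ, p ∉ Set.range (fun k : ℕ => ((2 * t + 1 + 2 * k, k) : ℕ × ℕ)) →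
      (if p.1 = 2 * t + 1 + 2 * p.2 then c p * (2 * Real.pi * Complex.I) else 0) = 0 := by
    intro p hp
    rw [if_neg]
    intro h
    exact hp ⟨p.2, by ext <;> simp [h.symm]⟩
  have stepC := (hinj.hasSum_iff hsupp).mpr stepA'
  have stepC' : HasSum
      (fun k : ℕ => (2 * Real.pi * Complex.I) * (((k + t).choose t : ℂ) *
        (x:ℂ) ^ (2 * t + 1 + 2 * k) / (2 * t + 1 + 2 * k).factorial))
      (∮ z in C((0:ℂ), r), Complex.exp (x * z) / ((z - 1) ^ (t + 1) * (z + 1) ^ (t + 1))) := by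
    have e : ((fun p : ℕ × ℕ =>
        if p.1 = 2 * t + 1 + 2 * p.2 then c p * (2 * Real.pi * Complex.I) else 0) ∘
          (fun k : ℕ => ((2 * t + 1 + 2 * k, k) : ℕ × ℕ))) =
        (fun k : ℕ => (2 * Real.pi * Complex.I) * (((k + t).choose t : ℂ) *
          (x:ℂ) ^ (2 * t + 1 + 2 * k) / (2 * t + 1 + 2 * k).factorial)) := by
      funext k
      have ht : ((2 * t + 1 + 2 * k, k) : ℕ × ℕ).1 = 2 * t + 1 + 2 * ((2 * t + 1 + 2 * k, k) : ℕ × ℕ).2 := rfl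
      rw [Function.comp_apply, if_pos ht]
      simp only [hc]
      ring
    rwa [e] at stepC
  rw [← stepC'.tsum_eq, tsum_mul_left]

lemma aux_choose_le (t k : ℕ) : ((k + t).choose t) ≤ 2 ^ (k + t) :=
  calc (k + t).choose t ≤ ∑ i ∈ Finset.range (k + t + 1), (k + t).choose i :=
        Finset.single_le_sum (fun i _ => Nat.zero_le _) (Finset.mem_range.mpr (by omega))
    _ = 2 ^ (k + t) := Nat.sum_range_choose _

lemma aux_real_summable (x : ℝ) (hx : 0 < x) (t : ℕ) :
    Summable (fun k : ℕ =>
      ((k + t).choose t : ℝ) * x ^ (2 * t + 1 + 2 * k) / (2 * t + 1 + 2 * k).factorial) := by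
  have h : Summable (fun k : ℕ => (2 ^ t * x ^ (2 * t + 1)) * ((2 * x ^ 2) ^ k / k.factorial)) :=
    (Real.summable_pow_div_factorial (2 * x ^ 2)).mul_left _
  apply Summable.of_nonneg_of_le (fun k => by positivity) _ h
  intro k
  rw [div_le_iff₀ (by positivity)]
  have h1 : ((k + t).choose t : ℝ) ≤ 2 ^ (k + t) := by
    exact_mod_cast Nat.cast_le.mpr (aux_choose_le t k)
  have h2 : (k.factorial : ℝ) ≤ (2 * t + 1 + 2 * k).factorial := by
    exact_mod_cast Nat.factorial_le (by omega)
  have h3 : x ^ (2 * t + 1 + 2 * k) = x ^ (2 * t + 1) * (x ^ 2) ^ k := by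
    rw [← pow_mul, ← pow_add]
  have h4 : (0:ℝ) < k.factorial := by positivity
  have h5 : (2:ℝ) ^ (k + t) = 2 ^ k * 2 ^ t := pow_add 2 k t
  have h6 : (2 * x ^ 2 : ℝ) ^ k = 2 ^ k * (x ^ 2) ^ k := mul_pow _ _ _
  calc ((k + t).choose t : ℝ) * x ^ (2 * t + 1 + 2 * k)
      ≤ 2 ^ (k + t) * x ^ (2 * t + 1 + 2 * k) := by
        apply mul_le_mul_of_nonneg_right h1 (by positivity)
    _ = (2 ^ t * x ^ (2 * t + 1)) * ((2 * x ^ 2) ^ k) := by rw [h3, h5, h6]; ring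
    _ = (2 ^ t * x ^ (2 * t + 1)) * ((2 * x ^ 2) ^ k / k.factorial) * k.factorial := by
        field_simp
    _ ≤ (2 ^ t * x ^ (2 * t + 1)) * ((2 * x ^ 2) ^ k / k.factorial) *
          (2 * t + 1 + 2 * k).factorial := by
        apply mul_le_mul_of_nonneg_left h2 (by positivity)

lemma aux_nat_id (m k : ℕ) : (m + 1) * ((k + m + 1).choose (m + 1)) =
    (k + m + 1) * ((k + m).choose m) := by
  have h := Nat.add_one_mul_choose_eq (k + m) m
  simpa [Nat.succ_eq_add_one, mul_comm] using h.symm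

lemma aux_nat_le (m k : ℕ) :
    2 * (m + 1) * (2 * m + 3) * ((k + m + 1).choose (m + 1)) ≤
      ((k + m).choose m) * ((2 * m + 3 + 2 * k) * (2 * m + 2 + 2 * k)) := by
  have hid := aux_nat_id m k
  nlinarith [Nat.zero_le (((k + m).choose m) * k)]

lemma aux_nat_lt (m k : ℕ) (hk : 1 ≤ k) :
    2 * (m + 1) * (2 * m + 3) * ((k + m + 1).choose (m + 1)) <
      ((k + m).choose m) * ((2 * m + 3 + 2 * k) * (2 * m + 2 + 2 * k)) := by
  have hid := aux_nat_id m k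
  have hpos : 0 < (k + m).choose m := Nat.choose_pos (by omega)
  have hk0 : 0 < k := hk
  nlinarith [mul_pos hk0 (mul_pos (Nat.succ_pos (k + m)) hpos), hid]

lemma aux_fac_split (m k : ℕ) : ((2*m+3+2*k).factorial : ℝ) =
    ((2*m+3+2*k) * (2*m+2+2*k)) * (2*m+1+2*k).factorial := by
  have e : 2*m+3+2*k = ((2*m+1+2*k) + 1) + 1 := by ring
  rw [e, Nat.factorial_succ, Nat.factorial_succ]
  push_cast
  ring

lemma aux_term_le (x : ℝ) (hx : 0 < x) (m k : ℕ) :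
    (2*(m+1) : ℝ) * (2*(m+1)+1) *
      (((k+(m+1)).choose (m+1) : ℝ) * x ^ (2*(m+1)+1+2*k) / (2*(m+1)+1+2*k).factorial) ≤
    x^2 * (((k+m).choose m : ℝ) * x ^ (2*m+1+2*k) / (2*m+1+2*k).factorial) := by
  have eA : 2*(m+1)+1+2*k = 2*m+3+2*k := by ring
  have eA2 : k + (m+1) = k+m+1 := by ring
  rw [eA, eA2]
  have hf1 : (0:ℝ) < (2*m+3+2*k).factorial := by positivity
  have hf2 : (0:ℝ) < (2*m+1+2*k).factorial := by positivity
  rw [mul_div_assoc', mul_div_assoc', div_le_div_iff₀ hf1 hf2]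
  have hnat : ((2*(m+1)*(2*m+3) * ((k+m+1).choose (m+1)) : ℕ) : ℝ) ≤
      ((((k+m).choose m) * ((2*m+3+2*k)*(2*m+2+2*k)) : ℕ) : ℝ) :=
    Nat.cast_le.mpr (aux_nat_le m k)
  push_cast at hnat
  have hsplit : x^(2*m+3+2*k) = x^2 * x^(2*m+1+2*k) := by
    rw [← pow_add]; ring_nf
  rw [aux_fac_split m k, hsplit]
  have hmul := mul_le_mul_of_nonneg_right hnat
    (by positivity : (0:ℝ) ≤ x^2 * x^(2*m+1+2*k) * (2*m+1+2*k).factorial)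
  push_cast at hmul ⊢
  linarith

lemma aux_term_lt (x : ℝ) (hx : 0 < x) (m : ℕ) :
    (2*(m+1) : ℝ) * (2*(m+1)+1) *
      (((1+(m+1)).choose (m+1) : ℝ) * x ^ (2*(m+1)+1+2*1) / (2*(m+1)+1+2*1).factorial) <
    x^2 * (((1+m).choose m : ℝ) * x ^ (2*m+1+2*1) / (2*m+1+2*1).factorial) := by
  have eA : 2*(m+1)+1+2*1 = 2*m+3+2*1 := by ring
  have eA2 : 1 + (m+1) = 1+m+1 := by ring
  rw [eA, eA2]
  have hf1 : (0:ℝ) < (2*m+3+2*1).factorial := by positivity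
  have hf2 : (0:ℝ) < (2*m+1+2*1).factorial := by positivity
  rw [mul_div_assoc', mul_div_assoc', div_lt_div_iff₀ hf1 hf2]
  have hnat : ((2*(m+1)*(2*m+3) * ((1+m+1).choose (m+1)) : ℕ) : ℝ) <
      ((((1+m).choose m) * ((2*m+3+2*1)*(2*m+2+2*1)) : ℕ) : ℝ) :=
    Nat.cast_lt.mpr (aux_nat_lt m 1 le_rfl)
  push_cast at hnat
  have hsplit : x^(2*m+3+2*1) = x^2 * x^(2*m+1+2*1) := by
    rw [← pow_add]; ring_nf
  rw [aux_fac_split m 1, hsplit]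
  have hmul := mul_lt_mul_of_pos_right hnat
    (by positivity : (0:ℝ) < x^2 * x^(2*m+1+2*1) * (2*m+1+2*1).factorial)
  push_cast at hmul ⊢
  linarith

lemma aux_sum_lt (x : ℝ) (hx : 0 < x) (m : ℕ) :
    (2*(m+1) : ℝ) * (2*(m+1)+1) *
      (∑' k : ℕ, ((k+(m+1)).choose (m+1) : ℝ) * x ^ (2*(m+1)+1+2*k) /
        (2*(m+1)+1+2*k).factorial) <
    x^2 * ∑' k : ℕ, ((k+m).choose m : ℝ) * x ^ (2*m+1+2*k) / (2*m+1+2*k).factorial := by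
  rw [← tsum_mul_left, ← tsum_mul_left]
  apply Summable.tsum_lt_tsum_of_nonneg (i := 1)
  · intro b; positivity
  · intro b; exact aux_term_le x hx m b
  · exact aux_term_lt x hx m
  · exact (aux_real_summable x hx m).mul_left _

lemma aux_S_pos (x : ℝ) (hx : 0 < x) (t : ℕ) :
    0 < ∑' k : ℕ, ((k + t).choose t : ℝ) * x ^ (2 * t + 1 + 2 * k) /
      (2 * t + 1 + 2 * k).factorial := by
  apply Summable.tsum_pos (aux_real_summable x hx t) (fun k => by positivity) 0
  have : 0 < ((0 + t).choose t : ℝ) := by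
    simp [Nat.choose_self]
  positivity

lemma aux_phi_val (r x : ℝ) (hr : 1 < r) (t : ℕ) (Φ : ℕ → ℂ → ℂ)
    (hΦ : ∀ s x, Φ s x = (2 * Real.pi * Complex.I)⁻¹ *
      ∮ z in C(0, r), Complex.exp (x * z) / ((z - 1) ^ (s + 1) * (z + 1) ^ (s + 1))) :
    Φ t x = ((∑' k : ℕ, ((k + t).choose t : ℝ) * x ^ (2 * t + 1 + 2 * k) /
      (2 * t + 1 + 2 * k).factorial : ℝ) : ℂ) := by
  have hne : (2 * (Real.pi : ℂ) * Complex.I) ≠ 0 := by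
    simp [Real.pi_ne_zero, Complex.I_ne_zero]
  rw [hΦ, aux_integral x hr t, ← mul_assoc, inv_mul_cancel₀ hne, one_mul,
    Complex.ofReal_tsum]
  congr 1
  funext k
  push_cast
  ring

theorem stmt_11 (r : ℝ) (hr : 1 < r) (Φ : ℕ → ℂ → ℂ)
    (hΦ : ∀ s x, Φ s x = (2 * Real.pi * Complex.I)⁻¹ *
      ∮ z in C(0, r), Complex.exp (x * z) / ((z - 1) ^ (s + 1) * (z + 1) ^ (s + 1))) :
    ∀ s : ℕ, 1 ≤ s → ∀ x : ℝ, 0 < x →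
      (Φ s x / Φ (s - 1) x).im = 0 ∧
      0 ≤ (Φ s x / Φ (s - 1) x).re ∧
      (Φ s x / Φ (s - 1) x).re < x ^ 2 / (2 * s * (2 * s + 1)) := by
  intro s hs x hx
  obtain ⟨m, rfl⟩ : ∃ m, s = m + 1 := ⟨s - 1, by omega⟩
  have hsub : m + 1 - 1 = m := rfl
  rw [hsub]
  set S : ℕ → ℝ := fun t => ∑' k : ℕ, ((k + t).choose t : ℝ) * x ^ (2 * t + 1 + 2 * k) /
    (2 * t + 1 + 2 * k).factorial with hS
  have h1 : Φ (m + 1) x = ((S (m + 1) : ℝ) : ℂ) := aux_phi_val r x hr (m + 1) Φ hΦ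
  have h0 : Φ m x = ((S m : ℝ) : ℂ) := aux_phi_val r x hr m Φ hΦ
  have hpos1 : 0 < S (m + 1) := aux_S_pos x hx (m + 1)
  have hpos0 : 0 < S m := aux_S_pos x hx m
  have hdiv : Φ (m + 1) x / Φ m x = ((S (m + 1) / S m : ℝ) : ℂ) := by
    rw [h1, h0, Complex.ofReal_div]
  rw [hdiv]
  refine ⟨Complex.ofReal_im _, ?_, ?_⟩
  · rw [Complex.ofReal_re]
    exact div_nonneg hpos1.le hpos0.le
  · rw [Complex.ofReal_re]
    have hlt : (2 * (m + 1) : ℝ) * (2 * (m + 1) + 1) * S (m + 1) < x ^ 2 * S m := by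
      have := aux_sum_lt x hx m
      push_cast at this ⊢
      linarith
    have hD : (0:ℝ) < 2 * ((m:ℝ) + 1) * (2 * ((m:ℝ) + 1) + 1) := by positivity
    rw [div_lt_div_iff₀ hpos0 (by push_cast; exact hD)]
    push_cast
    linarith
end

section
/- The derivative of P_s⁰ satisfies (d/dx)P_s⁰(x) = (x/(2s)) P_{s-1}⁰(x) − P_s⁰(x) for s ≥ 1. -/
open Complex Metric

lemma sph_ne_zero {z : ℂ} (hz : z ∈ sphere (0:ℂ) 1) : z ≠ 0 := by
  rw [mem_sphere_zero_iff_norm] at hz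
  exact fun h => by simp [h] at hz

lemma sph_add_two_ne {z : ℂ} (hz : z ∈ sphere (0:ℂ) 1) : z + 2 ≠ 0 := by
  rw [mem_sphere_zero_iff_norm] at hz
  intro h
  rw [add_eq_zero_iff_eq_neg] at h
  rw [h] at hz
  norm_num at hz

lemma contOn_aux (x : ℂ) (n : ℕ) :
    ContinuousOn (fun z : ℂ => Complex.exp (x*z) / (z^n*(z+2)^n)) (sphere (0:ℂ) 1) := by
  apply ContinuousOn.div
  · exact (Complex.continuous_exp.comp (continuous_const.mul continuous_id)).continuousOn
  · fun_prop
  · exact fun z hz => mul_ne_zero (pow_ne_zero _ (sph_ne_zero hz))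
      (pow_ne_zero _ (sph_add_two_ne hz))

lemma ci_aux (x : ℂ) (n : ℕ) :
    CircleIntegrable (fun z : ℂ => Complex.exp (x*z) / (z^n*(z+2)^n)) 0 1 :=
  (contOn_aux x n).circleIntegrable zero_le_one

lemma ci_aux' (x : ℂ) (n : ℕ) :
    CircleIntegrable (fun z : ℂ => z * (Complex.exp (x*z) / (z^n*(z+2)^n))) 0 1 :=
  (continuousOn_id.mul (contOn_aux x n)).circleIntegrable zero_le_one

lemma key_ibp (k : ℕ) (x : ℂ) :
    x * (∮ z in C(0, 1), Complex.exp (x*z) / (z^(k+1)*(z+2)^(k+1)))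
      = 2*((k:ℂ)+1) * (∮ z in C(0, 1), z * (Complex.exp (x*z) / (z^(k+2)*(z+2)^(k+2))))
      + 2*((k:ℂ)+1) * (∮ z in C(0, 1), Complex.exp (x*z) / (z^(k+2)*(z+2)^(k+2))) := by
  set g1 : ℂ → ℂ := fun z => Complex.exp (x*z) / (z^(k+1)*(z+2)^(k+1)) with hg1
  set g2 : ℂ → ℂ := fun z => Complex.exp (x*z) / (z^(k+2)*(z+2)^(k+2)) with hg2
  have h0 : (∮ z in C(0, 1), (x * g1 z - 2*((k:ℂ)+1) * (z * g2 z) - 2*((k:ℂ)+1) * g2 z)) = 0 := by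
    apply circleIntegral.integral_eq_zero_of_hasDerivWithinAt (zero_le_one)
      (f := fun z => Complex.exp (x*z) * ((z^2+2*z)^(k+1))⁻¹)
    intro z hz
    have hz0 := sph_ne_zero hz
    have hz2 := sph_add_two_ne hz
    have hu : z^2 + 2*z ≠ 0 := by
      have : z^2 + 2*z = z * (z+2) := by ring
      rw [this]; exact mul_ne_zero hz0 hz2
    have hpow : ∀ (w : ℂ) (n : ℕ), w^n*(w+2)^n = (w^2+2*w)^n := by
      intro w n
      rw [← mul_pow]
      congr 1
      ring
    have hd : HasDerivAt (fun z : ℂ => Complex.exp (x*z) * ((z^2+2*z)^(k+1))⁻¹)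
        (x * g1 z - 2*((k:ℂ)+1) * (z * g2 z) - 2*((k:ℂ)+1) * g2 z) z := by
      have he : HasDerivAt (fun z : ℂ => Complex.exp (x*z)) (Complex.exp (x*z) * x) z :=
        by simpa using ((hasDerivAt_id z).const_mul x).cexp
      have hden : HasDerivAt (fun z : ℂ => (z^2+2*z)^(k+1))
          (((k:ℂ)+1) * (z^2+2*z)^k * (2*z^1 + 2*1)) z := by
        simpa using ((hasDerivAt_pow 2 z).fun_add ((hasDerivAt_id z).const_mul 2)).fun_pow (k+1)
      have hne : (z^2+2*z)^(k+1) ≠ 0 := pow_ne_zero _ hu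
      have := he.fun_mul (hden.fun_inv hne)
      refine this.congr_deriv ?_; symm
      simp only [hg1, hg2, hpow]
      obtain ⟨u, hU⟩ : ∃ u, z^2+2*z = u := ⟨_, rfl⟩
      have hu' : u ≠ 0 := hU ▸ hu
      rw [hU]
      simp only [pow_succ, pow_one]
      obtain ⟨c, hC⟩ : ∃ c, u^k = c := ⟨_, rfl⟩
      have hc : c ≠ 0 := hC ▸ pow_ne_zero _ hu'
      rw [hC]
      have hcu : c*u ≠ 0 := mul_ne_zero hc hu'
      have hcuu : c*u*u ≠ 0 := mul_ne_zero hcu hu'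
      simp only [← mul_div_assoc, ← div_eq_mul_inv, pow_zero, one_mul]
      rw [div_add_div _ _ hcu (mul_ne_zero hcu hcu),
        div_sub_div _ _ hcu hcuu,
        div_sub_div _ _ (mul_ne_zero hcu hcuu) hcuu,
        div_eq_div_iff (mul_ne_zero (mul_ne_zero hcu hcuu) hcuu)
          (mul_ne_zero hcu (mul_ne_zero hcu hcu))]
      ring
    exact hd.hasDerivWithinAt
  have hci1 : CircleIntegrable (fun z : ℂ => x * g1 z) 0 1 :=
    (continuousOn_const.mul (contOn_aux x (k+1))).circleIntegrable zero_le_one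
  have hci2a : CircleIntegrable (fun z : ℂ => 2*((k:ℂ)+1) * (z * g2 z)) 0 1 :=
    (continuousOn_const.mul (continuousOn_id.mul (contOn_aux x (k+2)))).circleIntegrable
      zero_le_one
  have hci2b : CircleIntegrable (fun z : ℂ => 2*((k:ℂ)+1) * g2 z) 0 1 :=
    (continuousOn_const.mul (contOn_aux x (k+2))).circleIntegrable zero_le_one
  have hci12 : CircleIntegrable (fun z : ℂ => x * g1 z - 2*((k:ℂ)+1) * (z * g2 z)) 0 1 :=
    ((continuousOn_const.mul (contOn_aux x (k+1))).sub
      (continuousOn_const.mul (continuousOn_id.mul (contOn_aux x (k+2))))).circleIntegrable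
      zero_le_one
  rw [circleIntegral.integral_sub hci12 hci2b,
    circleIntegral.integral_sub hci1 hci2a,
    circleIntegral.integral_const_mul, circleIntegral.integral_const_mul,
    circleIntegral.integral_const_mul] at h0
  linear_combination h0

lemma key_deriv (n : ℕ) (x₀ : ℂ) :
    HasDerivAt (fun x : ℂ => ∮ z in C(0, 1), Complex.exp (x*z) / (z^n*(z+2)^n))
      (∮ z in C(0, 1), z * (Complex.exp (x₀*z) / (z^n*(z+2)^n))) x₀ := by
  have hmem : ∀ θ : ℝ, circleMap 0 1 θ ∈ sphere (0:ℂ) 1 :=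
    fun θ => circleMap_mem_sphere 0 zero_le_one θ
  have hz1 : ∀ θ : ℝ, ‖circleMap 0 1 θ‖ = 1 :=
    fun θ => mem_sphere_zero_iff_norm.mp (hmem θ)
  have hz2 : ∀ θ : ℝ, (1:ℝ) ≤ ‖circleMap 0 1 θ + 2‖ := by
    intro θ
    have h := norm_add_le (circleMap 0 1 θ + 2) (-(circleMap 0 1 θ))
    rw [show circleMap 0 1 θ + 2 + -(circleMap 0 1 θ) = (2:ℂ) by ring] at h
    have h2 : ‖(2:ℂ)‖ = 2 := by norm_num
    rw [h2, norm_neg, hz1 θ] at h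
    linarith
  have hd0 : ∀ θ : ℝ, (circleMap 0 1 θ)^n * (circleMap 0 1 θ + 2)^n ≠ 0 := fun θ =>
    mul_ne_zero (pow_ne_zero _ (sph_ne_zero (hmem θ))) (pow_ne_zero _ (sph_add_two_ne (hmem θ)))
  have hcont : ∀ x : ℂ, Continuous (fun θ : ℝ => circleMap 0 1 θ * Complex.I *
      (Complex.exp (x * circleMap 0 1 θ) /
        ((circleMap 0 1 θ)^n * (circleMap 0 1 θ + 2)^n))) := by
    intro x
    apply Continuous.mul (by fun_prop)
    exact Continuous.div (by fun_prop) (by fun_prop) hd0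
  have hcont' : Continuous (fun θ : ℝ => circleMap 0 1 θ * Complex.I *
      (circleMap 0 1 θ * (Complex.exp (x₀ * circleMap 0 1 θ) /
        ((circleMap 0 1 θ)^n * (circleMap 0 1 θ + 2)^n)))) := by
    apply Continuous.mul (by fun_prop)
    apply Continuous.mul (by fun_prop)
    exact Continuous.div (by fun_prop) (by fun_prop) hd0
  have key := intervalIntegral.hasDerivAt_integral_of_dominated_loc_of_deriv_le
    (μ := MeasureTheory.volume) (a := 0) (b := 2*Real.pi)
    (F := fun (x : ℂ) (θ : ℝ) => circleMap 0 1 θ * Complex.I *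
      (Complex.exp (x * circleMap 0 1 θ) / ((circleMap 0 1 θ)^n * (circleMap 0 1 θ + 2)^n)))
    (F' := fun (x : ℂ) (θ : ℝ) => circleMap 0 1 θ * Complex.I *
      (circleMap 0 1 θ * (Complex.exp (x * circleMap 0 1 θ) /
        ((circleMap 0 1 θ)^n * (circleMap 0 1 θ + 2)^n))))
    (x₀ := x₀) (bound := fun _ => Real.exp (‖x₀‖ + 1)) (Metric.ball_mem_nhds x₀ zero_lt_one)
    (Filter.Eventually.of_forall fun x => (hcont x).aestronglyMeasurable)
    ((hcont x₀).intervalIntegrable 0 (2*Real.pi))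
    hcont'.aestronglyMeasurable
    (MeasureTheory.ae_of_all _ ?_)
    (intervalIntegrable_const)
    (MeasureTheory.ae_of_all _ ?_)
  · simp only [circleIntegral, deriv_circleMap, smul_eq_mul]
    exact key.2
  · -- bound
    intro θ _ x hx
    set z := circleMap 0 1 θ with hzdef
    have hxn : ‖x‖ ≤ ‖x₀‖ + 1 := by
      have h1 : ‖x‖ ≤ ‖x - x₀‖ + ‖x₀‖ := by
        simpa using norm_add_le (x - x₀) x₀
      have h2 : ‖x - x₀‖ < 1 := by simpa [dist_eq_norm] using (mem_ball.mp hx)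
      linarith
    have hIabs : ‖Complex.I‖ = 1 := by simp
    have hdm : (1:ℝ) ≤ ‖z^n * (z+2)^n‖ := by
      rw [norm_mul, norm_pow, norm_pow, hz1 θ, one_pow, one_mul]
      exact one_le_pow₀ (hz2 θ)
    have hexp : ‖Complex.exp (x * z)‖ ≤ Real.exp (‖x₀‖ + 1) := by
      rw [Complex.norm_exp]
      apply Real.exp_le_exp.mpr
      calc (x*z).re ≤ ‖x*z‖ := Complex.re_le_norm _
        _ = ‖x‖ * ‖z‖ := by rw [norm_mul]
        _ = ‖x‖ := by rw [hz1 θ, mul_one]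
        _ ≤ ‖x₀‖ + 1 := hxn
    calc ‖z * Complex.I * (z * (Complex.exp (x * z) / (z^n * (z+2)^n)))‖
        = ‖Complex.exp (x * z)‖ / ‖z^n * (z+2)^n‖ := by
          rw [norm_mul, norm_mul, norm_mul, norm_div, hz1 θ, hIabs]
          ring
      _ ≤ ‖Complex.exp (x * z)‖ := div_le_self (norm_nonneg _) hdm
      _ ≤ Real.exp (‖x₀‖ + 1) := hexp
  · -- differentiability
    intro θ _ x _
    set z := circleMap 0 1 θ with hzdef
    have hh : HasDerivAt (fun x : ℂ => Complex.exp (x * z)) (Complex.exp (x * z) * z) x := by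
      simpa using ((hasDerivAt_id x).mul_const z).cexp
    have := (hh.div_const ((z:ℂ)^n * (z+2)^n)).const_mul (z * Complex.I)
    refine this.congr_deriv ?_
    ring

theorem stmt_12 (P : ℕ → ℂ → ℂ)
    (hP : ∀ s x, P s x = (2 * Real.pi * Complex.I)⁻¹ *
      ∮ z in C(0, 1), Complex.exp (x * z) / (z ^ (s + 1) * (z + 2) ^ (s + 1))) :
    ∀ s : ℕ, 1 ≤ s → ∀ x : ℂ,
      deriv (P s) x = x / (2 * (s : ℂ)) * P (s - 1) x - P s x := by
  intro s hs x
  obtain ⟨k, rfl⟩ : ∃ k, s = k + 1 := ⟨s - 1, (Nat.succ_pred_eq_of_pos hs).symm⟩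
  simp only [Nat.add_sub_cancel]
  have hd := key_deriv (k+2) x
  have hkey := key_ibp k x
  have hderiv : deriv (P (k+1)) x = (2*Real.pi*Complex.I)⁻¹ *
      ∮ z in C(0,1), z * (Complex.exp (x*z)/(z^(k+2)*(z+2)^(k+2))) := by
    have hPfun : P (k+1) = fun y => (2 * Real.pi * Complex.I)⁻¹ *
        ∮ z in C(0, 1), Complex.exp (y * z) / (z ^ (k + 2) * (z + 2) ^ (k + 2)) := by
      funext y
      exact hP (k+1) y
    rw [hPfun]
    exact (hd.const_mul _).deriv
  rw [hderiv, hP k x, hP (k+1) x]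
  push_cast
  simp only [show k+1+1 = k+2 from rfl]
  generalize hA : (∮ z in C(0,1), Complex.exp (x*z)/(z^(k+1)*(z+2)^(k+1))) = A at hkey ⊢
  generalize hB :
    (∮ z in C(0,1), z * (Complex.exp (x*z)/(z^(k+2)*(z+2)^(k+2)))) = B at hkey ⊢
  generalize hC : (∮ z in C(0,1), Complex.exp (x*z)/(z^(k+2)*(z+2)^(k+2))) = C at hkey ⊢
  have hk2 : ((k:ℂ)+1) ≠ 0 := by
    have h2 : ((k+1 : ℕ) : ℂ) ≠ 0 := Nat.cast_ne_zero.mpr (by omega)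
    push_cast at h2
    exact h2
  have hB' : B = x*A/(2*((k:ℂ)+1)) - C := by
    rw [eq_sub_iff_add_eq, eq_div_iff (mul_ne_zero two_ne_zero hk2)]
    linear_combination (-1 : ℂ) * hkey
  rw [hB']
  ring
end

section
/- For each fixed x > 0, the ratio Φ_{2s}(x)/Φ_{2s-}(x) converges to 1 as s → ∞. -/
open scoped Real Nat ENNReal NNReal
open Filter Metric MeasureTheory

namespace ST15

lemma choose_le_two_pow (n k : ℕ) : n.choose k ≤ 2 ^ n := by
  rcases le_or_gt k n with h | h
  · calc n.choose k ≤ ∑ m ∈ Finset.range (n + 1), n.choose m :=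
        Finset.single_le_sum (f := fun m => n.choose m) (fun _ _ => Nat.zero_le _)
          (Finset.mem_range.2 (by omega))
    _ = 2 ^ n := Nat.sum_range_choose n
  · simp [Nat.choose_eq_zero_of_lt h]

/-- Interchange of circle integral and `tsum` for a uniformly dominated family. -/
lemma interchange {R : ℝ} (hR : 0 < R) (f : ℕ × ℕ → ℂ → ℂ)
    (hc : ∀ i, ContinuousOn (f i) (sphere (0 : ℂ) R))
    (M : ℕ × ℕ → ℝ) (hM : ∀ i, ∀ z ∈ sphere (0 : ℂ) R, ‖f i z‖ ≤ M i)
    (hsum : Summable M) :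
    (∮ z in C(0, R), ∑' i, f i z) = ∑' i, ∮ z in C(0, R), f i z := by
  have hcm : ∀ θ : ℝ, circleMap 0 R θ ∈ sphere (0 : ℂ) R := circleMap_mem_sphere 0 hR.le
  have hcont : ∀ i, Continuous fun θ : ℝ => deriv (circleMap 0 R) θ * f i (circleMap 0 R θ) := by
    intro i
    simp only [deriv_circleMap]
    exact ((continuous_circleMap 0 R).mul continuous_const).mul
      ((hc i).comp_continuous (continuous_circleMap 0 R) hcm)
  have hb : ∀ i, ∀ θ : ℝ, ‖deriv (circleMap 0 R) θ * f i (circleMap 0 R θ)‖ ≤ R * M i := by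
    intro i θ
    rw [norm_mul]
    have h1 : ‖deriv (circleMap 0 R) θ‖ = R := by
      simp [deriv_circleMap, abs_of_pos hR]
    rw [h1]
    exact mul_le_mul_of_nonneg_left (hM i _ (hcm θ)) hR.le
  have hM0 : ∀ i, 0 ≤ M i := fun i => le_trans (norm_nonneg _) (hM i _ (hcm 0))
  simp only [circleIntegral, smul_eq_mul]
  have h2 : ∀ θ : ℝ, deriv (circleMap 0 R) θ * ∑' i, f i (circleMap 0 R θ)
      = ∑' i, deriv (circleMap 0 R) θ * f i (circleMap 0 R θ) := fun θ => tsum_mul_left.symm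
  simp only [h2]
  have hpi : (0 : ℝ) ≤ 2 * π := by positivity
  rw [intervalIntegral.integral_of_le hpi]
  rw [MeasureTheory.integral_tsum
    (fun i => ((hcont i).aestronglyMeasurable).restrict) ?_]
  · exact tsum_congr fun i => by rw [intervalIntegral.integral_of_le hpi]
  · have key : ∀ i, (∫⁻ θ in Set.Ioc (0:ℝ) (2*π),
        ‖deriv (circleMap 0 R) θ * f i (circleMap 0 R θ)‖₊) ≤
          ENNReal.ofReal (R * M i * (2*π)) := by
      intro i
      have hpt : ∀ θ : ℝ, (‖deriv (circleMap 0 R) θ * f i (circleMap 0 R θ)‖₊ : ℝ≥0∞)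
          ≤ ENNReal.ofReal (R * M i) := fun θ => by
        rw [← enorm_eq_nnnorm, ← ofReal_norm]
        exact ENNReal.ofReal_le_ofReal (hb i θ)
      calc (∫⁻ θ in Set.Ioc (0:ℝ) (2*π), ‖deriv (circleMap 0 R) θ * f i (circleMap 0 R θ)‖₊)
          ≤ ∫⁻ _ in Set.Ioc (0:ℝ) (2*π), ENNReal.ofReal (R * M i) :=
            lintegral_mono fun θ => hpt θ
        _ = ENNReal.ofReal (R * M i) * ENNReal.ofReal (2*π - 0) := by
            rw [MeasureTheory.setLIntegral_const, Real.volume_Ioc]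
        _ ≤ ENNReal.ofReal (R * M i * (2*π)) := by
            rw [← ENNReal.ofReal_mul (mul_nonneg hR.le (hM0 i))]
            exact ENNReal.ofReal_le_ofReal (by rw [sub_zero])
    refine ne_of_lt (lt_of_le_of_lt (ENNReal.tsum_le_tsum key) ?_)
    rw [← ENNReal.ofReal_tsum_of_nonneg
      (fun i => mul_nonneg (mul_nonneg hR.le (hM0 i)) (by positivity))
      ((hsum.mul_left R).mul_right (2*π))]
    exact ENNReal.ofReal_lt_top

lemma integral_const_zpow (c : ℂ) (n : ℤ) {R : ℝ} (hR : 0 < R) :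
    (∮ z in C(0, R), c * z ^ n) =
      if n = -1 then 2 * (π : ℂ) * Complex.I * c else 0 := by
  have h : (fun z : ℂ => c * z ^ n) = fun z => c • ((z - 0) ^ n) := by
    funext z; simp [smul_eq_mul]
  rw [h, circleIntegral.integral_smul]
  by_cases hn : n = -1
  · subst hn
    have h2 : (fun z : ℂ => (z - 0) ^ (-1 : ℤ)) = fun z => (z - 0)⁻¹ := by
      funext z; rw [zpow_neg_one]
    rw [if_pos rfl, h2, circleIntegral.integral_sub_inv_of_mem_ball (by simpa using hR)]
    rw [smul_eq_mul]; ring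
  · rw [circleIntegral.integral_sub_zpow_of_ne hn, if_neg hn, smul_zero]

lemma zpow_split {K : Type*} [Field K] {z : K} (hz : z ≠ 0) (s a m k : ℕ) :
    z ^ ((k : ℤ) + a - 2*(s+1) - 2*m) = z ^ k * z ^ a * ((z^2)^(s+1))⁻¹ * ((z^2)⁻¹)^m := by
  have h : (k : ℤ) + a - 2*(s+1) - 2*m
      = (k : ℤ) + (a : ℤ) + (-((2*(s+1) : ℕ) : ℤ)) + (-((2*m : ℕ) : ℤ)) := by
    push_cast; ring
  rw [h, zpow_add₀ hz, zpow_add₀ hz, zpow_add₀ hz, zpow_natCast, zpow_natCast,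
    zpow_neg, zpow_neg, zpow_natCast, zpow_natCast, pow_mul, pow_mul, inv_pow]

lemma circleIntegral_add {f g : ℂ → ℂ} {c : ℂ} {R : ℝ} (hf : CircleIntegrable f c R)
    (hg : CircleIntegrable g c R) :
    (∮ z in C(c, R), (f z + g z)) = (∮ z in C(c, R), f z) + ∮ z in C(c, R), g z := by
  simp only [circleIntegral, smul_add]
  exact intervalIntegral.integral_add hf.out hg.out

lemma exp_hasSum (w : ℂ) : HasSum (fun k : ℕ => w ^ k / k !) (Complex.exp w) := by
  have h := (NormedSpace.expSeries_div_summable w).hasSum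
  rwa [show ∑' k : ℕ, w ^ k / k ! = Complex.exp w from by
    rw [Complex.exp_eq_exp_ℂ, NormedSpace.exp_eq_tsum_div]] at h

set_option maxHeartbeats 1000000 in
/-- The key evaluation of the circle integral as an explicit series. -/
lemma key {R : ℝ} (hR : 1 < R) (x : ℝ) (s a : ℕ) (ha : a ≤ 1) :
    (∮ z in C(0, R), Complex.exp (x * z) * z ^ a / (z ^ 2 - 1) ^ (s + 1)) =
      (2 * (π : ℂ) * Complex.I) *
        ∑' m : ℕ, ((m + s).choose s : ℂ) * (x : ℂ) ^ (2*s + 1 + 2*m - a) /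
          (2*s + 1 + 2*m - a)! := by
  have hR0 : (0 : ℝ) < R := lt_trans one_pos hR
  set f : ℕ × ℕ → ℂ → ℂ := fun p z =>
    (((p.1 + s).choose s : ℂ) * (x : ℂ) ^ p.2 / (p.2)!) *
      z ^ ((p.2 : ℤ) + a - 2*(s+1) - 2*p.1) with hf
  -- pointwise identity on the sphere
  have hpt : Set.EqOn (fun z : ℂ => Complex.exp (x * z) * z ^ a / (z ^ 2 - 1) ^ (s + 1))
      (fun z => ∑' p : ℕ × ℕ, f p z) (sphere (0 : ℂ) R) := by
    intro z hzs
    have hzn : ‖z‖ = R := by simpa using hzs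
    have hz0 : z ≠ 0 := by
      intro h; rw [h, norm_zero] at hzn; exact absurd hzn.symm (ne_of_gt hR0)
    have hz20 : z ^ 2 ≠ 0 := pow_ne_zero _ hz0
    have hw : ‖(z ^ 2)⁻¹‖ < 1 := by
      rw [norm_inv, norm_pow, hzn]
      rw [inv_lt_one_iff₀]
      right; nlinarith
    have hz2 : z ^ 2 - 1 ≠ 0 := by
      intro h
      have h1 : z ^ 2 = 1 := by linear_combination h
      have h2 : ‖z ^ 2‖ = 1 := by rw [h1, norm_one]
      rw [norm_pow, hzn] at h2; nlinarith
    have hG : HasSum (fun m : ℕ => ((m + s).choose s : ℂ) * ((z^2)⁻¹) ^ m)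
        (1 / (1 - (z^2)⁻¹) ^ (s+1)) := hasSum_choose_mul_geometric_of_norm_lt_one s hw
    have hH : HasSum (fun k : ℕ => ((x : ℂ) * z) ^ k / k !) (Complex.exp (x * z)) :=
      exp_hasSum _
    have hGn : Summable fun m : ℕ => ‖((m + s).choose s : ℂ) * ((z^2)⁻¹) ^ m‖ := by
      have h := summable_choose_mul_geometric_of_norm_lt_one (R := ℝ) s
        (r := ‖(z^2)⁻¹‖) (by rwa [Real.norm_eq_abs, abs_of_nonneg (norm_nonneg _)])
      exact h.congr fun m => by
        rw [norm_mul, norm_pow, Complex.norm_natCast]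
    have hHn : Summable fun k : ℕ => ‖((x : ℂ) * z) ^ k / (k ! : ℂ)‖ := by
      refine (Real.summable_pow_div_factorial ‖(x : ℂ) * z‖).congr fun k => ?_
      rw [norm_div, norm_pow]
      congr 1
      exact (Complex.norm_natCast _).symm
    have hPair : Summable fun p : ℕ × ℕ =>
        (((p.1 + s).choose s : ℂ) * ((z^2)⁻¹) ^ p.1) * (((x : ℂ) * z) ^ p.2 / p.2 !) := by
      apply Summable.of_norm
      refine (hGn.mul_of_nonneg hHn (fun m => norm_nonneg _) (fun k => norm_nonneg _)).congr
        fun p => ?_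
      exact (norm_mul _ _).symm
    have hMul : HasSum (fun p : ℕ × ℕ =>
        (((p.1 + s).choose s : ℂ) * ((z^2)⁻¹) ^ p.1) * (((x : ℂ) * z) ^ p.2 / p.2 !))
        ((1 / (1 - (z^2)⁻¹) ^ (s+1)) * Complex.exp (x * z)) :=
      HasSum.mul (f := fun m : ℕ => ((m + s).choose s : ℂ) * ((z^2)⁻¹) ^ m)
        (g := fun k : ℕ => ((x : ℂ) * z) ^ k / (k ! : ℂ)) hG hH hPair
    have hMul2 := hMul.mul_left (z ^ a * ((z^2)^(s+1))⁻¹)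
    have hfeq : (fun p : ℕ × ℕ => (z ^ a * ((z^2)^(s+1))⁻¹) *
        ((((p.1 + s).choose s : ℂ) * ((z^2)⁻¹) ^ p.1) * (((x : ℂ) * z) ^ p.2 / p.2 !)))
        = fun p => f p z := by
      funext p
      rw [hf]
      simp only
      rw [zpow_split hz0 s a p.1 p.2, mul_pow]
      field_simp
    rw [hfeq] at hMul2
    show Complex.exp (x * z) * z ^ a / (z ^ 2 - 1) ^ (s + 1) = ∑' p : ℕ × ℕ, f p z
    rw [hMul2.tsum_eq]
    have hu1 : (1 : ℂ) - (z^2)⁻¹ ≠ 0 := by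
      intro h
      have h1 : (z ^ 2)⁻¹ = 1 := by linear_combination -h
      rw [inv_eq_one] at h1
      exact hz2 (by rw [h1]; ring)
    have hkey : (z^2 - 1) ^ (s+1) = (z^2)^(s+1) * (1 - (z^2)⁻¹)^(s+1) := by
      rw [← mul_pow]; congr 1; field_simp
    rw [hkey]
    field_simp
  rw [circleIntegral.integral_congr hR0.le hpt]
  -- the dominating family
  set M : ℕ × ℕ → ℝ := fun p =>
    (((p.1 + s).choose s : ℝ) * |x| ^ p.2 / (p.2)!) *
      R ^ ((p.2 : ℤ) + a - 2*(s+1) - 2*p.1) with hMdef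
  have hR0' : R ≠ 0 := ne_of_gt hR0
  have hMnorm : ∀ p, ∀ z ∈ sphere (0 : ℂ) R, ‖f p z‖ ≤ M p := by
    intro p z hzs
    have hzn : ‖z‖ = R := by simpa using hzs
    rw [hf, hMdef]
    simp only
    rw [norm_mul, norm_zpow, hzn, norm_div, norm_mul, Complex.norm_natCast,
      Complex.norm_natCast, norm_pow, Complex.norm_real, Real.norm_eq_abs]
  have hMsum : Summable M := by
    have hwR : ‖(R^2)⁻¹‖ < 1 := by
      rw [Real.norm_eq_abs, abs_of_nonneg (by positivity)]
      rw [inv_lt_one_iff₀]; right; nlinarith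
    have hg : Summable fun m : ℕ => ((m + s).choose s : ℝ) * ((R^2)⁻¹) ^ m :=
      summable_choose_mul_geometric_of_norm_lt_one s hwR
    have hh : Summable fun k : ℕ => (|x| * R) ^ k / k ! :=
      Real.summable_pow_div_factorial _
    have hprod := hg.mul_of_nonneg hh (fun m => by positivity) (fun k => by positivity)
    have := (hprod.mul_right (R ^ a * ((R^2)^(s+1))⁻¹))
    refine this.congr fun p => ?_
    rw [hMdef]
    simp only
    rw [zpow_split hR0' s a p.1 p.2, mul_pow]
    field_simp
  have hcont : ∀ p : ℕ × ℕ, ContinuousOn (f p) (sphere (0 : ℂ) R) := by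
    intro p z hzs
    have hzn : ‖z‖ = R := by simpa using hzs
    have hz0 : z ≠ 0 := by
      intro h; rw [h, norm_zero] at hzn; exact absurd hzn.symm (ne_of_gt hR0)
    exact (continuousAt_const.mul (continuousAt_zpow₀ _ _ (Or.inl hz0))).continuousWithinAt
  rw [interchange hR0 f hcont M hMnorm hMsum]
  have heval : ∀ p : ℕ × ℕ, (∮ z in C(0, R), f p z) =
      if p.2 = 2*s + 1 + 2*p.1 - a then
        (2 * (π : ℂ) * Complex.I) * (((p.1 + s).choose s : ℂ) * (x : ℂ) ^ p.2 / (p.2)!)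
      else 0 := by
    intro p
    rw [hf]
    simp only
    rw [integral_const_zpow _ _ hR0]
    by_cases hk : p.2 = 2*s + 1 + 2*p.1 - a
    · rw [if_pos (by omega), if_pos hk]
    · rw [if_neg (by omega), if_neg hk]
  have hSumInt : Summable fun p : ℕ × ℕ => ∮ z in C(0, R), f p z := by
    apply Summable.of_norm
    refine Summable.of_nonneg_of_le (fun p => norm_nonneg _)
      (f := fun p => 2 * π * R * M p) (fun p => ?_) ((hMsum.mul_left _))
    exact circleIntegral.norm_integral_le_of_norm_le_const hR0.le (hMnorm p)
  have hinner : ∀ m : ℕ, Summable fun k : ℕ => ∮ z in C(0, R), f (m, k) z := by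
    intro m
    have hfun : (fun k : ℕ => ∮ z in C(0, R), f (m, k) z) = (fun k : ℕ =>
        if k = 2*s + 1 + 2*m - a then
          (2 * (π : ℂ) * Complex.I) * (((m + s).choose s : ℂ) *
            (x : ℂ) ^ (2*s + 1 + 2*m - a) / ((2*s + 1 + 2*m - a)! : ℂ)) else 0) := by
      funext k
      rw [heval (m, k)]
      by_cases hk : k = 2*s + 1 + 2*m - a
      · rw [if_pos hk, if_pos hk, hk]
      · rw [if_neg hk, if_neg hk]
    rw [hfun]
    exact (hasSum_ite_eq _ _).summable
  rw [Summable.tsum_prod' hSumInt hinner]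
  have hout : ∀ m : ℕ, (∑' k : ℕ, ∮ z in C(0, R), f (m, k) z)
      = (2 * (π : ℂ) * Complex.I) * (((m + s).choose s : ℂ) *
          (x : ℂ) ^ (2*s + 1 + 2*m - a) / ((2*s + 1 + 2*m - a)! : ℂ)) := by
    intro m
    rw [tsum_eq_single (2*s + 1 + 2*m - a) (fun k hk => by rw [heval (m, k)]; exact if_neg hk)]
    rw [heval (m, 2*s + 1 + 2*m - a), if_pos rfl]
  rw [tsum_congr hout, tsum_mul_left]

noncomputable def Ar (x : ℝ) (s : ℕ) : ℝ :=
  ∑' m : ℕ, ((m + s).choose s : ℝ) * x ^ (2*s + 2*m) / (2*s + 2*m)!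

noncomputable def Br (x : ℝ) (s : ℕ) : ℝ :=
  ∑' m : ℕ, ((m + s).choose s : ℝ) * x ^ (2*s + 2*m + 1) / (2*s + 2*m + 1)!

lemma summable_gen {x : ℝ} (hx : 0 ≤ x) (s c : ℕ) :
    Summable fun m : ℕ => ((m + s).choose s : ℝ) * x ^ (2*s + 2*m + c) / (2*s + 2*m + c)! := by
  refine Summable.of_nonneg_of_le (fun m => by positivity)
    (f := fun m => 2^s * x^(2*s+c) * ((2*x^2)^m / m !)) (fun m => ?_)
    (((Real.summable_pow_div_factorial (2*x^2)).mul_left _))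
  have h1 : ((m + s).choose s : ℝ) ≤ 2 ^ (m + s) := by
    exact_mod_cast choose_le_two_pow (m + s) s
  have h2 : (m ! : ℝ) ≤ ((2*s + 2*m + c)! : ℝ) := by
    exact_mod_cast Nat.factorial_le (by omega)
  have hX : (0:ℝ) ≤ x ^ (2*s+c) * (x^2)^m := by positivity
  calc ((m + s).choose s : ℝ) * x ^ (2*s + 2*m + c) / (2*s + 2*m + c)!
      = (((m + s).choose s : ℝ) * (x ^ (2*s+c) * (x^2)^m)) / (2*s + 2*m + c)! := by
        rw [show 2*s + 2*m + c = (2*s+c) + 2*m by ring, pow_add, pow_mul]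
    _ ≤ (2 ^ (m + s) * (x ^ (2*s+c) * (x^2)^m)) / m ! := by
        apply div_le_div₀ (by positivity) (mul_le_mul_of_nonneg_right h1 hX)
          (by positivity) h2
    _ = 2^s * x^(2*s+c) * ((2*x^2)^m / m !) := by
        rw [pow_add, mul_pow]; ring

lemma Ar_summable {x : ℝ} (hx : 0 ≤ x) (s : ℕ) :
    Summable fun m : ℕ => ((m + s).choose s : ℝ) * x ^ (2*s + 2*m) / (2*s + 2*m)! := by
  have h := summable_gen hx s 0
  simpa using h

lemma Ar_pos {x : ℝ} (hx : 0 < x) (s : ℕ) : 0 < Ar x s := by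
  have hs := Ar_summable hx.le s
  have h0 : (0:ℝ) < ((0 + s).choose s : ℝ) * x ^ (2*s + 2*0) / (2*s + 2*0)! := by
    have h1 : (0 + s).choose s = 1 := by simp
    rw [h1]
    positivity
  exact lt_of_lt_of_le h0 (Summable.le_tsum hs 0 fun m _ => by positivity)

lemma Br_nonneg {x : ℝ} (hx : 0 ≤ x) (s : ℕ) : 0 ≤ Br x s :=
  tsum_nonneg fun m => by positivity

lemma Br_le {x : ℝ} (hx : 0 < x) (s : ℕ) : Br x s ≤ x / (2*s+1) * Ar x s := by
  have hA := Ar_summable hx.le s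
  have hB := summable_gen hx.le s 1
  rw [Br, Ar, ← tsum_mul_left]
  refine Summable.tsum_le_tsum (fun m => ?_) hB (hA.mul_left _)
  have hfac : ((2*s + 2*m + 1)! : ℝ) = ((2*s + 2*m + 1 : ℕ) : ℝ) * ((2*s + 2*m)! : ℝ) := by
    exact_mod_cast Nat.factorial_succ (2*s + 2*m)
  have hne : ((2*s + 2*m)! : ℝ) ≠ 0 := by positivity
  have h1 : ((m + s).choose s : ℝ) * x ^ (2*s + 2*m + 1) / (2*s + 2*m + 1)!
      = (x / ((2*s + 2*m + 1 : ℕ) : ℝ)) *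
        (((m + s).choose s : ℝ) * x ^ (2*s + 2*m) / (2*s + 2*m)!) := by
    rw [hfac, pow_succ]
    have hpos : ((2*s + 2*m + 1 : ℕ) : ℝ) ≠ 0 := by positivity
    field_simp
  rw [h1]
  have h2 : x / ((2*s + 2*m + 1 : ℕ) : ℝ) ≤ x / (2*(s:ℝ)+1) := by
    apply div_le_div_of_nonneg_left hx.le (by positivity)
    push_cast
    linarith [Nat.cast_nonneg (α := ℝ) m]
  exact mul_le_mul_of_nonneg_right h2 (by positivity)

end ST15

theorem stmt_15 (r : ℝ) (hr : 1 < r) (Φp Φm : ℕ → ℂ → ℂ)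
    (hΦp : ∀ s x, Φp s x = (2 * Real.pi * Complex.I)⁻¹ *
      ∮ z in C(0, r), Complex.exp (x * z) / ((z - 1) ^ (s + 1) * (z + 1) ^ s))
    (hΦm : ∀ s x, Φm s x = (2 * Real.pi * Complex.I)⁻¹ *
      ∮ z in C(0, r), Complex.exp (x * z) / ((z - 1) ^ s * (z + 1) ^ (s + 1))) :
    ∀ x : ℝ, 0 < x →
      Filter.Tendsto (fun s : ℕ => Φp s x / Φm s x) Filter.atTop (nhds 1) := by
  intro x hx
  have hr0 : (0:ℝ) < r := lt_trans one_pos hr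
  have h2πI : (2 * (π:ℂ) * Complex.I) ≠ 0 := by
    simp [Real.pi_ne_zero, Complex.I_ne_zero, Complex.ofReal_ne_zero]
  -- rewrite Φp and Φm as explicit real series
  have hzfacts : ∀ z ∈ sphere (0:ℂ) r, ‖z‖ = r ∧ z - 1 ≠ 0 ∧ z + 1 ≠ 0 ∧ z^2 - 1 ≠ 0 := by
    intro z hzs
    have hzn : ‖z‖ = r := by simpa using hzs
    refine ⟨hzn, ?_, ?_, ?_⟩
    · intro h
      have h1 : z = 1 := by linear_combination h
      rw [h1, norm_one] at hzn; linarith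
    · intro h
      have h1 : z = -1 := by linear_combination h
      rw [h1] at hzn; simp at hzn; linarith
    · intro h
      have h1 : z^2 = 1 := by linear_combination h
      have h2 : ‖z^2‖ = 1 := by rw [h1, norm_one]
      rw [norm_pow, hzn] at h2; nlinarith
  have hInt : ∀ s : ℕ, ∀ a : ℕ, CircleIntegrable
      (fun z : ℂ => Complex.exp (x*z) * z^a / (z^2-1)^(s+1)) 0 r := by
    intro s a
    apply ContinuousOn.circleIntegrable hr0.le
    apply ContinuousOn.div
    · exact ((Complex.continuous_exp.comp (continuous_const.mul continuous_id)).mul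
        (continuous_pow a)).continuousOn
    · exact (((continuous_pow 2).sub continuous_const).pow (s+1)).continuousOn
    · intro z hzs
      exact pow_ne_zero _ (hzfacts z hzs).2.2.2
  have hΦp' : ∀ s : ℕ, Φp s (x:ℂ) = ((ST15.Ar x s + ST15.Br x s : ℝ) : ℂ) := by
    intro s
    rw [hΦp s x]
    have hEq : Set.EqOn (fun z : ℂ => Complex.exp (x * z) / ((z - 1) ^ (s+1) * (z + 1) ^ s))
        (fun z => Complex.exp (x*z) * z^(1:ℕ) / (z^2-1)^(s+1)
          + Complex.exp (x*z) * z^(0:ℕ) / (z^2-1)^(s+1)) (sphere (0:ℂ) r) := by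
      intro z hzs
      obtain ⟨hzn, h1, h2, h3⟩ := hzfacts z hzs
      simp only
      rw [show (z^2 - 1 : ℂ) = (z-1)*(z+1) by ring, mul_pow]
      field_simp
      ring
    rw [circleIntegral.integral_congr hr0.le hEq,
      ST15.circleIntegral_add (hInt s 1) (hInt s 0),
      ST15.key hr x s 1 le_rfl, ST15.key hr x s 0 (by omega),
      ← mul_add, inv_mul_cancel_left₀ h2πI, Complex.ofReal_add]
    congr 1
    · rw [ST15.Ar, Complex.ofReal_tsum]
      refine tsum_congr fun m => ?_
      rw [show 2*s + 1 + 2*m - 1 = 2*s + 2*m by omega]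
      push_cast
      ring
    · rw [ST15.Br, Complex.ofReal_tsum]
      refine tsum_congr fun m => ?_
      rw [show 2*s + 1 + 2*m - 0 = 2*s + 2*m + 1 by omega]
      push_cast
      ring
  have hΦm' : ∀ s : ℕ, Φm s (x:ℂ) = ((ST15.Ar x s - ST15.Br x s : ℝ) : ℂ) := by
    intro s
    rw [hΦm s x]
    have hEq : Set.EqOn (fun z : ℂ => Complex.exp (x * z) / ((z - 1) ^ s * (z + 1) ^ (s+1)))
        (fun z => Complex.exp (x*z) * z^(1:ℕ) / (z^2-1)^(s+1)
          - Complex.exp (x*z) * z^(0:ℕ) / (z^2-1)^(s+1)) (sphere (0:ℂ) r) := by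
      intro z hzs
      obtain ⟨hzn, h1, h2, h3⟩ := hzfacts z hzs
      simp only
      rw [show (z^2 - 1 : ℂ) = (z-1)*(z+1) by ring, mul_pow]
      field_simp
      ring
    rw [circleIntegral.integral_congr hr0.le hEq,
      circleIntegral.integral_sub (hInt s 1) (hInt s 0),
      ST15.key hr x s 1 le_rfl, ST15.key hr x s 0 (by omega),
      ← mul_sub, inv_mul_cancel_left₀ h2πI, Complex.ofReal_sub]
    congr 1
    · rw [ST15.Ar, Complex.ofReal_tsum]
      refine tsum_congr fun m => ?_
      rw [show 2*s + 1 + 2*m - 1 = 2*s + 2*m by omega]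
      push_cast
      ring
    · rw [ST15.Br, Complex.ofReal_tsum]
      refine tsum_congr fun m => ?_
      rw [show 2*s + 1 + 2*m - 0 = 2*s + 2*m + 1 by omega]
      push_cast
      ring
  -- the real limit
  have hA := fun s : ℕ => ST15.Ar_pos hx s
  have hB0 := fun s : ℕ => ST15.Br_nonneg hx.le s
  have hBA := fun s : ℕ => ST15.Br_le hx s
  have htend : Filter.Tendsto (fun s : ℕ => ST15.Br x s / ST15.Ar x s) atTop (nhds 0) := by
    have hup : Filter.Tendsto (fun s : ℕ => x / (2*(s:ℝ)+1)) atTop (nhds 0) := by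
      apply Filter.Tendsto.div_atTop tendsto_const_nhds
      apply Filter.tendsto_atTop_add_const_right
      exact (tendsto_natCast_atTop_atTop (R := ℝ)).const_mul_atTop (by norm_num)
    refine tendsto_of_tendsto_of_tendsto_of_le_of_le tendsto_const_nhds hup
      (fun s => div_nonneg (hB0 s) (hA s).le) (fun s => ?_)
    rw [div_le_iff₀ (hA s)]
    calc ST15.Br x s ≤ x / (2*s+1) * ST15.Ar x s := hBA s
      _ = x / (2*(s:ℝ)+1) * ST15.Ar x s := by norm_num
  have hreal : Filter.Tendsto
      (fun s : ℕ => (ST15.Ar x s + ST15.Br x s)/(ST15.Ar x s - ST15.Br x s)) atTop (nhds 1) := by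
    have heq : ∀ s : ℕ, (ST15.Ar x s + ST15.Br x s)/(ST15.Ar x s - ST15.Br x s)
        = (1 + ST15.Br x s / ST15.Ar x s)/(1 - ST15.Br x s / ST15.Ar x s) := by
      intro s
      have hA' : ST15.Ar x s ≠ 0 := (hA s).ne'
      rw [show (1:ℝ) + ST15.Br x s / ST15.Ar x s
          = (ST15.Ar x s + ST15.Br x s) / ST15.Ar x s by field_simp,
        show (1:ℝ) - ST15.Br x s / ST15.Ar x s
          = (ST15.Ar x s - ST15.Br x s) / ST15.Ar x s by field_simp,
        div_div_div_cancel_right₀ hA']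
    simp only [heq]
    have h1 : Filter.Tendsto (fun s : ℕ => 1 + ST15.Br x s / ST15.Ar x s) atTop (nhds 1) := by
      have h := (tendsto_const_nhds (x := (1:ℝ)) (f := atTop (α := ℕ))).add htend
      simpa using h
    have h2 : Filter.Tendsto (fun s : ℕ => 1 - ST15.Br x s / ST15.Ar x s) atTop (nhds 1) := by
      have h := (tendsto_const_nhds (x := (1:ℝ)) (f := atTop (α := ℕ))).sub htend
      simpa using h
    have h3 := h1.div h2 one_ne_zero
    rw [div_one] at h3
    exact h3
  have hfun : (fun s : ℕ => Φp s (x:ℂ) / Φm s (x:ℂ))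
      = fun s : ℕ => (((ST15.Ar x s + ST15.Br x s)/(ST15.Ar x s - ST15.Br x s) : ℝ) : ℂ) := by
    funext s
    rw [hΦp' s, hΦm' s, ← Complex.ofReal_div]
  rw [hfun]
  have h := (Complex.continuous_ofReal.tendsto 1).comp hreal
  rw [Complex.ofReal_one] at h
  exact h
end

section
/- For integer α and |y| < 1, the generating function Σ_{n=0}^∞ P_n^α(x) yⁿ equals e^{-x} · e^{x√(y+1)} / (2√(y+1)(√(y+1)+1)^α). -/
open Complex Metric MeasureTheory Set intervalIntegral

lemma aux_re_cpow_half {w : ℂ} (hw : 0 < w.re) : 0 < (w ^ ((1:ℂ)/2)).re := by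
  have hw0 : w ≠ 0 := by
    intro h; rw [h] at hw; simp at hw
  rw [Complex.cpow_def_of_ne_zero hw0, Complex.exp_re]
  have harg : |Complex.arg w| < Real.pi / 2 :=
    Complex.abs_arg_lt_pi_div_two_iff.2 (Or.inl hw)
  have him : (Complex.log w * ((1:ℂ)/2)).im = Complex.arg w / 2 := by
    simp [Complex.mul_im, Complex.log_im]; ring
  rw [him]
  have habs : |Complex.arg w / 2| < Real.pi / 2 := by
    rw [abs_div, _root_.abs_of_nonneg (by norm_num : (0:ℝ) ≤ 2)]; linarith [abs_nonneg (Complex.arg w), Real.pi_pos]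
  have hcos : 0 < Real.cos (Complex.arg w / 2) :=
    Real.cos_pos_of_mem_Ioo (abs_lt.1 habs |> fun h => ⟨h.1, h.2⟩)
  positivity

lemma aux_zpow_bound {t : ℝ} (h1 : 1 ≤ t) (h3 : t ≤ 3) (m : ℤ) (n : ℕ) :
    (t ^ ((n:ℤ)+1+m))⁻¹ ≤ 3 ^ m.natAbs := by
  rw [← zpow_neg]
  have h2 : t ^ (-((n:ℤ)+1+m)) ≤ t ^ (m.natAbs : ℤ) :=
    zpow_le_zpow_right₀ h1 (by omega)
  rw [zpow_natCast] at h2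
  have h4 : t ^ m.natAbs ≤ (3:ℝ) ^ m.natAbs := pow_le_pow_left₀ (by linarith) h3 _
  linarith

theorem stmt_16 (α : ℤ) (P : ℕ → ℂ → ℂ)
    (hP : ∀ n x, P n x = (2 * Real.pi * Complex.I)⁻¹ *
      ∮ z in C(0, 1), Complex.exp (x * z) / (z ^ (n + 1) * (z + 2) ^ ((n : ℤ) + 1 + α))) :
    ∀ x : ℂ, ∀ y : ℂ, ‖y‖ < 1 →
      HasSum (fun n : ℕ => P n x * y ^ n)
        (Complex.exp (-x) * Complex.exp (x * (y + 1) ^ ((1 : ℂ) / 2)) /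
          (2 * (y + 1) ^ ((1 : ℂ) / 2) * ((y + 1) ^ ((1 : ℂ) / 2) + 1) ^ α)) := by
  intro x y hy
  set s : ℂ := (y + 1) ^ ((1:ℂ)/2) with hs_def
  have hre1 : 0 < (y + 1).re := by
    have h1 := Complex.abs_re_le_norm y
    have h2 := abs_lt.1 (lt_of_le_of_lt h1 hy)
    simp only [Complex.add_re, Complex.one_re]
    linarith
  have hsre : 0 < s.re := aux_re_cpow_half hre1
  have hs2 : s ^ 2 = y + 1 := by
    rw [hs_def, show ((1:ℂ)/2) = ((2:ℕ): ℂ)⁻¹ by norm_num]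
    exact Complex.cpow_nat_inv_pow _ two_ne_zero
  have hs0 : s ≠ 0 := by intro h; rw [h] at hsre; simp at hsre
  have hsp1 : 1 < ‖s + 1‖ := by
    have h1 : 1 < (s+1).re := by simp only [Complex.add_re, Complex.one_re]; linarith
    linarith [Complex.re_le_norm (s+1)]
  set z₀ : ℂ := s - 1 with hz₀_def
  set z₁ : ℂ := -s - 1 with hz₁_def
  have hfact : z₀ * (s + 1) = y := by rw [hz₀_def]; linear_combination hs2
  have hz₀ : ‖z₀‖ < 1 := by
    have h1 : ‖z₀‖ * ‖s+1‖ = ‖y‖ := by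
      rw [← norm_mul, hfact]
    nlinarith [norm_nonneg z₀]
  have habsz₁ : ‖z₁‖ = ‖s+1‖ := by
    rw [hz₁_def, show -s - 1 = -(s+1) by ring, norm_neg]
  have key : ∀ z : ℂ, z*(z+2) - y = (z - z₀) * (z - z₁) := by
    intro z; rw [hz₀_def, hz₁_def]; linear_combination hs2
  -- the holomorphic function for Cauchy's formula
  set f : ℂ → ℂ := fun z => Complex.exp (x*z) * (z+2) ^ (-α) * (z - z₁)⁻¹ with hf_def
  have hball : ∀ z : ℂ, ‖z‖ ≤ 1 → (z + 2 ≠ 0 ∧ z - z₁ ≠ 0) := by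
    intro z hz
    constructor
    · intro h
      have : ‖z‖ = 2 := by
        rw [show z = -2 by linear_combination h]; simp
      linarith
    · intro h
      have : ‖z‖ = ‖z₁‖ := by rw [show z = z₁ by linear_combination h]
      rw [habsz₁] at this; linarith
  have hf_diff : DifferentiableOn ℂ f (closedBall 0 1) := by
    intro z hz
    rw [mem_closedBall_zero_iff] at hz
    obtain ⟨h2, h1⟩ := hball z hz
    apply DifferentiableAt.differentiableWithinAt
    exact ((((differentiableAt_id (x := z)).const_mul x).cexp.mul
      (((differentiableAt_id (x := z)).add_const 2).zpow (m := -α) (Or.inl h2))).mul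
      (((differentiableAt_id (x := z)).sub_const z₁).inv h1))
  have hCauchy : (∮ z in C(0, 1), (z - z₀)⁻¹ • f z) = (2 * Real.pi * Complex.I) • f z₀ :=
    hf_diff.circleIntegral_sub_inv_smul (by rwa [mem_ball_zero_iff])
  -- the series of integrands
  set Z : ℝ → ℂ := fun θ => circleMap 0 1 θ with hZ_def
  have hZabs : ∀ θ, ‖Z θ‖ = 1 := by intro θ; simp [hZ_def]
  have hZ0 : ∀ θ, Z θ ≠ 0 := by
    intro θ h; have := hZabs θ; rw [h] at this; simp at this
  have hZ2 : ∀ θ, Z θ + 2 ≠ 0 := fun θ => (hball _ (hZabs θ).le).1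
  have hZ2abs : ∀ θ, 1 ≤ ‖Z θ + 2‖ := by
    intro θ
    have h := norm_add_le (Z θ + 2) (-(Z θ))
    have e : Z θ + 2 + -Z θ = 2 := by ring
    rw [e, norm_neg, hZabs, Complex.norm_two] at h
    linarith
  have hZ2abs3 : ∀ θ, ‖Z θ + 2‖ ≤ 3 := by
    intro θ
    have h := norm_add_le (Z θ) 2
    rw [hZabs, Complex.norm_two] at h; linarith
  set F : ℕ → ℝ → ℂ := fun n θ => (Z θ * Complex.I) *
      (Complex.exp (x * Z θ) / ((Z θ) ^ (n + 1) * (Z θ + 2) ^ ((n : ℤ) + 1 + α)) * y ^ n)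
    with hF_def
  set μ : Measure ℝ := volume.restrict (Ioc 0 (2 * Real.pi)) with hμ_def
  -- each term equals integral
  have hPn : ∀ n, P n x * y ^ n = (2 * Real.pi * Complex.I)⁻¹ * ∫ θ, F n θ ∂μ := by
    intro n
    rw [hP n x, hμ_def, ← intervalIntegral.integral_of_le Real.two_pi_pos.le,
      circleIntegral, mul_assoc, ← intervalIntegral.integral_mul_const]
    congr 1
    refine intervalIntegral.integral_congr fun θ _ => ?_
    simp only [hF_def, deriv_circleMap, smul_eq_mul, hZ_def]
    ring
  -- integrability
  have hF_cont : ∀ n, Continuous (F n) := by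
    intro n
    apply Continuous.mul
    · exact (continuous_circleMap 0 1).mul continuous_const
    apply Continuous.mul _ continuous_const
    apply Continuous.div
    · exact (continuous_const.mul (continuous_circleMap 0 1)).cexp
    · exact ((continuous_circleMap 0 1).pow _).mul
        (((continuous_circleMap 0 1).add continuous_const).zpow₀ _ (fun θ => Or.inl (hZ2 θ)))
    · intro θ
      exact mul_ne_zero (pow_ne_zero _ (hZ0 θ)) (zpow_ne_zero _ (hZ2 θ))
  have hF_int : ∀ n, Integrable (F n) μ := fun n => (hF_cont n).integrableOn_Ioc
  -- the norm bound
  set C : ℝ := Real.exp (‖x‖) * 3 ^ α.natAbs with hC_def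
  have hFnorm : ∀ n θ, ‖F n θ‖ ≤ C * ‖y‖ ^ n := by
    intro n θ
    have h1 := hZ2abs θ
    have h3 := hZ2abs3 θ
    have hexp : ‖Complex.exp (x * Z θ)‖ ≤ Real.exp (‖x‖) := by
      rw [Complex.norm_exp]
      refine Real.exp_le_exp.2 ?_
      calc (x * Z θ).re ≤ ‖x * Z θ‖ := Complex.re_le_norm _
        _ = ‖x‖ := by rw [norm_mul, hZabs, mul_one]
    have hzb : (‖Z θ + 2‖ ^ ((n:ℤ)+1+α))⁻¹ ≤ 3 ^ α.natAbs :=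
      aux_zpow_bound h1 h3 α n
    have hcalc : ‖F n θ‖ = (‖Complex.exp (x * Z θ)‖ *
        (‖Z θ + 2‖ ^ ((n:ℤ)+1+α))⁻¹) * ‖y‖ ^ n := by
      simp only [hF_def, norm_mul, norm_div, norm_pow, norm_zpow,
        Complex.norm_I, hZabs, one_pow, one_mul, mul_one]
      ring
    rw [hcalc, hC_def]
    have hb1 : (0:ℝ) ≤ (‖Z θ + 2‖ ^ ((n:ℤ)+1+α))⁻¹ := by positivity
    have := mul_le_mul hexp hzb hb1 (Real.exp_pos _).le
    have hyn : (0:ℝ) ≤ ‖y‖ ^ n := by positivity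
    exact mul_le_mul_of_nonneg_right this hyn
  have hfinμ : IsFiniteMeasure μ := by
    constructor
    rw [hμ_def, Measure.restrict_apply_univ, Real.volume_Ioc]
    exact ENNReal.ofReal_lt_top
  have hF_sum : Summable fun n => ∫ θ, ‖F n θ‖ ∂μ := by
    refine Summable.of_nonneg_of_le
      (fun n => integral_nonneg fun θ => norm_nonneg _) (fun n => ?_)
      (((summable_geometric_of_lt_one (norm_nonneg y) hy).mul_left
        ((2 * Real.pi) * C)))
    calc ∫ θ, ‖F n θ‖ ∂μ ≤ ∫ _θ, C * ‖y‖ ^ n ∂μ := by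
          refine integral_mono_of_nonneg
            (Filter.Eventually.of_forall fun θ => norm_nonneg _)
            (integrable_const _)
            (Filter.Eventually.of_forall fun θ => hFnorm n θ)
      _ = (2 * Real.pi) * (C * ‖y‖ ^ n) := by
          rw [MeasureTheory.integral_const, hμ_def, measureReal_def, Measure.restrict_apply_univ,
            Real.volume_Ioc, smul_eq_mul]
          rw [ENNReal.toReal_ofReal (by linarith [Real.two_pi_pos])]
          ring
      _ = (2 * Real.pi) * C * ‖y‖ ^ n := by ring
  have hsum := MeasureTheory.hasSum_integral_of_summable_integral_norm hF_int hF_sum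
  -- pointwise sum
  have hpt : ∀ θ : ℝ, HasSum (fun n => F n θ)
      ((Z θ * Complex.I) * ((Z θ - z₀)⁻¹ * f (Z θ))) := by
    intro θ
    have hz0 := hZ0 θ
    have hz2 := hZ2 θ
    have h1 := hZ2abs θ
    set r : ℂ := y / (Z θ * (Z θ + 2)) with hr_def
    have hrabs : ‖r‖ < 1 := by
      rw [hr_def, norm_div, norm_mul, hZabs, one_mul]
      calc ‖y‖ / ‖Z θ + 2‖ ≤ ‖y‖ / 1 := by
            gcongr
        _ < 1 := by rwa [div_one]
    have hgeo : HasSum (fun n : ℕ => r ^ n) ((1 - r)⁻¹) :=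
      hasSum_geometric_of_norm_lt_one hrabs
    set A : ℂ := (Z θ * Complex.I) *
      (Complex.exp (x * Z θ) * (Z θ + 2) ^ (-α) * (Z θ * (Z θ + 2))⁻¹) with hA_def
    have hterm : ∀ n : ℕ, A * r ^ n = F n θ := by
      intro n
      have e1 : (Z θ + 2) ^ ((n:ℤ)+1+α) = (Z θ + 2) ^ (n+1) * (Z θ + 2) ^ α := by
        rw [show (n:ℤ)+1+α = ((n+1 : ℕ) : ℤ) + α by push_cast; ring,
          zpow_add₀ hz2, zpow_natCast]
      have hz2α : (Z θ + 2) ^ α ≠ 0 := zpow_ne_zero _ hz2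
      simp only [hF_def, hA_def, hr_def, e1, zpow_neg, div_pow, mul_pow]
      field_simp
      ring
    have hd0 : Z θ - z₀ ≠ 0 := by
      intro h
      have : ‖Z θ‖ = ‖z₀‖ := by
        rw [show Z θ = z₀ by linear_combination h]
      rw [hZabs] at this; linarith
    have hd1 : Z θ - z₁ ≠ 0 := (hball _ (hZabs θ).le).2
    have hne : Z θ * (Z θ + 2) ≠ 0 := mul_ne_zero hz0 hz2
    have h1r : 1 - r = (Z θ - z₀) * (Z θ - z₁) / (Z θ * (Z θ + 2)) := by
      rw [← key, hr_def]
      field_simp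
    have hval : A * (1 - r)⁻¹ = (Z θ * Complex.I) * ((Z θ - z₀)⁻¹ * f (Z θ)) := by
      rw [h1r, hA_def, hf_def]
      simp only [zpow_neg]
      have hz2α : (Z θ + 2) ^ α ≠ 0 := zpow_ne_zero _ hz2
      field_simp
    have := hgeo.mul_left A
    rw [hval] at this
    exact funext hterm ▸ this
  have hint_eq : ∫ θ, (∑' n, F n θ) ∂μ = (2 * Real.pi * Complex.I) * f z₀ := by
    have h1 : ∀ θ, (∑' n, F n θ) = (Z θ * Complex.I) * ((Z θ - z₀)⁻¹ * f (Z θ)) :=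
      fun θ => (hpt θ).tsum_eq
    calc ∫ θ, (∑' n, F n θ) ∂μ
        = ∫ θ, (Z θ * Complex.I) * ((Z θ - z₀)⁻¹ * f (Z θ)) ∂μ := by
          exact MeasureTheory.integral_congr_ae (Filter.Eventually.of_forall fun θ => h1 θ)
      _ = ∮ z in C(0, 1), (z - z₀)⁻¹ • f z := by
          rw [circleIntegral, intervalIntegral.integral_of_le Real.two_pi_pos.le]
          refine MeasureTheory.integral_congr_ae (Filter.Eventually.of_forall fun θ => ?_)
          simp only [deriv_circleMap, smul_eq_mul, hZ_def]
      _ = (2 * Real.pi * Complex.I) * f z₀ := by rw [hCauchy]; simp [smul_eq_mul]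
  rw [hint_eq] at hsum
  have hfin := hsum.mul_left (2 * Real.pi * Complex.I)⁻¹
  have hfun : (fun n => (2 * Real.pi * Complex.I)⁻¹ * ∫ θ, F n θ ∂μ)
      = fun n => P n x * y ^ n := funext fun n => (hPn n).symm
  rw [hfun] at hfin
  refine (congrArg (HasSum fun n => P n x * y ^ n) ?_).mp hfin
  have hc0 : (2 * Real.pi * Complex.I : ℂ) ≠ 0 := by
    simp [Real.pi_ne_zero, Complex.I_ne_zero]
  rw [inv_mul_cancel_left₀ hc0]
  -- final algebra: f z₀ = target
  rw [hf_def]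
  have hsp0 : s + 1 ≠ 0 := by
    intro h
    rw [h] at hsp1
    simp only [norm_zero] at hsp1
    linarith
  simp only
  rw [show z₀ + 2 = s + 1 by rw [hz₀_def]; ring,
    show z₀ - z₁ = 2 * s by rw [hz₀_def, hz₁_def]; ring,
    show x * z₀ = -x + x * s by rw [hz₀_def]; ring, Complex.exp_add, zpow_neg]
  have hα : ((s+1):ℂ) ^ α ≠ 0 := zpow_ne_zero _ hsp0
  field_simp
end

section
/- For all x ∈ ℝ and all y ∈ ℂ, Σ_{s=0}^∞ Φ_{2s+1}(x) y^s = sinh(x√(y+1))/√(y+1), where the right-hand side is interpreted via the entire function Σ_{k≥0} x^{2k+1}(y+1)^k/(2k+1)!. -/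
open MeasureTheory Metric Complex
lemma circle_hasSumX {ι : Type} [Countable ι] {R : ℝ} (hR : 0 < R)
    (F : ι → ℂ → ℂ) (f : ℂ → ℂ)
    (hcont : ∀ i, ContinuousOn (F i) (sphere (0:ℂ) R))
    (C : ι → ℝ) (hC : Summable C)
    (hbound : ∀ i z, z ∈ sphere (0:ℂ) R → ‖F i z‖ ≤ C i)
    (hsum : ∀ z, z ∈ sphere (0:ℂ) R → HasSum (fun i => F i z) (f z)) :
    HasSum (fun i => ∮ z in C(0, R), F i z) (∮ z in C(0, R), f z) := by
  simp only [circleIntegral]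
  apply intervalIntegral.hasSum_integral_of_dominated_convergence (fun i _ => R * C i)
  · intro i
    apply Continuous.aestronglyMeasurable
    simp only [deriv_circleMap]
    exact ((continuous_circleMap 0 R).mul continuous_const).smul
      ((hcont i).comp_continuous (continuous_circleMap 0 R)
        (fun θ => circleMap_mem_sphere _ hR.le θ))
  · intro i
    filter_upwards with θ _
    rw [norm_smul, deriv_circleMap]
    have h1 : ‖circleMap 0 R θ * I‖ = R := by
      simp [norm_circleMap_zero, abs_of_pos hR]
    rw [h1]
    exact mul_le_mul_of_nonneg_left (hbound i _ (circleMap_mem_sphere _ hR.le θ)) hR.le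
  · filter_upwards with θ _
    exact hC.mul_left R
  · exact intervalIntegrable_const
  · filter_upwards with θ _
    exact (hsum _ (circleMap_mem_sphere _ hR.le θ)).const_smul _

lemma diffAt (x : ℂ) (s : ℕ) {z : ℂ} (hz : 1 < ‖z‖) :
    DifferentiableAt ℂ (fun z => Complex.exp (x * z) / ((z - 1) ^ (s + 1) * (z + 1) ^ (s + 1))) z := by
  have h1 : z ≠ 1 := by rintro rfl; simp at hz
  have h2 : z ≠ -1 := by rintro rfl; simp at hz
  exact ((differentiableAt_id.const_mul x).cexp).div
    (((differentiableAt_id.sub_const 1).pow _).mul ((differentiableAt_id.add_const 1).pow _))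
    (mul_ne_zero (pow_ne_zero _ (sub_ne_zero.2 h1))
      (pow_ne_zero _ (by intro h; exact h2 (by linear_combination h))))

lemma deform {r R : ℝ} (hr : 1 < r) (hrR : r ≤ R) (x : ℂ) (s : ℕ) :
    (∮ z in C(0, R), Complex.exp (x * z) / ((z - 1) ^ (s + 1) * (z + 1) ^ (s + 1))) =
      ∮ z in C(0, r), Complex.exp (x * z) / ((z - 1) ^ (s + 1) * (z + 1) ^ (s + 1)) := by
  apply Complex.circleIntegral_eq_of_differentiable_on_annulus_off_countable
    (zero_lt_one.trans hr) hrR Set.countable_empty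
  · intro z hz
    have : 1 < ‖z‖ := by
      have := hz.2
      simp only [mem_ball, dist_zero_right, not_lt] at this
      linarith
    exact (diffAt x s this).continuousAt.continuousWithinAt
  · intro z hz
    have : 1 < ‖z‖ := by
      have := hz.1.2
      simp only [mem_closedBall, dist_zero_right, not_le] at this
      linarith
    exact diffAt x s this

lemma stepB {R : ℝ} (hR : 1 < R) (x : ℝ) (y : ℂ) (hRy : ‖y‖ + 2 ≤ R^2) :
    HasSum (fun s : ℕ => ∮ z in C(0,R), Complex.exp (x*z)/(z^2-1)^(s+1) * y^s)
      (∮ z in C(0,R), Complex.exp (x*z) * (z^2 - (y+1))⁻¹) := by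
  have hR0 : 0 < R := by linarith
  have key : ∀ z ∈ sphere (0:ℂ) R, R^2 - 1 ≤ ‖z^2 - 1‖ ∧ z^2 - 1 ≠ 0 := by
    intro z hz
    have hzR : ‖z‖ = R := mem_sphere_zero_iff_norm.mp hz
    have h2 : ‖(z^2 : ℂ)‖ = R^2 := by rw [norm_pow, hzR]
    have h3 := norm_sub_norm_le (z^2) (1:ℂ)
    rw [h2, norm_one] at h3
    constructor
    · linarith
    · intro h; rw [h, norm_zero] at h3; nlinarith [norm_nonneg y]
  have key2 : ∀ z ∈ sphere (0:ℂ) R, ‖y‖ + 1 ≤ ‖z^2 - 1‖ := by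
    intro z hz
    have := (key z hz).1
    linarith
  apply circle_hasSumX hR0 _ _ ?_ (fun s => Real.exp (|x| * R) / (R^2-1) * ((‖y‖/(R^2-1))^s))
  · -- summable
    apply Summable.mul_left
    apply summable_geometric_of_lt_one (div_nonneg (norm_nonneg y) (by nlinarith))
    rw [div_lt_one (by nlinarith)]
    nlinarith [norm_nonneg y]
  · -- bound
    intro s z hz
    have hzR : ‖z‖ = R := mem_sphere_zero_iff_norm.mp hz
    obtain ⟨hdle, h0⟩ := key z hz
    have h21 := key2 z hz
    have hexp : ‖Complex.exp ((x:ℂ)*z)‖ ≤ Real.exp (|x| * R) := by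
      rw [Complex.norm_exp]
      apply Real.exp_le_exp.2
      calc ((x:ℂ)*z).re ≤ ‖(x:ℂ)*z‖ := by exact Complex.re_le_norm _
        _ = |x| * R := by rw [norm_mul, Complex.norm_real, Real.norm_eq_abs, hzR]
    have hd0 : (0:ℝ) < R^2 - 1 := by nlinarith
    calc ‖Complex.exp ((x:ℂ)*z)/(z^2-1)^(s+1) * y^s‖
        = ‖Complex.exp ((x:ℂ)*z)‖/‖z^2-1‖^(s+1) * ‖y‖^s := by
          rw [norm_mul, norm_div, norm_pow, norm_pow]
      _ ≤ Real.exp (|x| * R)/(R^2-1)^(s+1) * ‖y‖^s := by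
          apply mul_le_mul_of_nonneg_right _ (pow_nonneg (norm_nonneg y) s)
          exact div_le_div₀ (Real.exp_pos _).le hexp (pow_pos hd0 _)
            (pow_le_pow_left₀ hd0.le hdle _)
      _ = Real.exp (|x| * R) / (R^2-1) * ((‖y‖/(R^2-1))^s) := by
          simp only [div_pow, pow_succ, div_eq_mul_inv, mul_inv, inv_pow]
          ring
  · -- pointwise HasSum
    intro z hz
    obtain ⟨hdle, h0⟩ := key z hz
    have h21 := key2 z hz
    have hny : (0:ℝ) < ‖z^2-1‖ := by linarith [norm_nonneg y]
    have hw : ‖y / (z^2-1)‖ < 1 := by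
      rw [norm_div, div_lt_one hny]; linarith
    have hne2 : z^2 - (y+1) ≠ 0 := by
      intro h
      have : y = z^2 - 1 := by linear_combination -h
      rw [this] at hw
      rw [div_self (by exact_mod_cast h0 : (z^2-1:ℂ) ≠ 0)] at hw
      simp at hw
    have hg := (hasSum_geometric_of_norm_lt_one hw).mul_left
      (Complex.exp ((x:ℂ)*z) * (z^2-1)⁻¹)
    have hfun : (fun s : ℕ => Complex.exp ((x:ℂ)*z) * (z^2-1)⁻¹ * (y/(z^2-1))^s)
        = fun s => Complex.exp ((x:ℂ)*z)/(z^2-1)^(s+1) * y^s := by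
      funext s
      rw [div_pow, pow_succ]
      field_simp
      ring
    have hval : Complex.exp ((x:ℂ)*z) * (z^2-1)⁻¹ * (1 - y/(z^2-1))⁻¹
        = Complex.exp ((x:ℂ)*z) * (z^2-(y+1))⁻¹ := by
      have e : (z^2-1) * (1 - y/(z^2-1)) = z^2 - (y+1) := by
        field_simp
        ring
      rw [mul_assoc, ← mul_inv, e]
    rw [hfun, hval] at hg
    exact hg
  · -- continuity
    intro s z hz
    obtain ⟨_, h0⟩ := key z hz
    have hne : (z^2-1)^(s+1) ≠ 0 := pow_ne_zero _ h0
    exact ((((Complex.continuous_exp.comp (continuous_const.mul continuous_id)).continuousAt).div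
      (((continuous_pow 2).sub continuous_const).pow (s+1)).continuousAt hne).mul
      continuousAt_const).continuousWithinAt

set_option maxHeartbeats 1000000 in
lemma stepC {R : ℝ} (hR : 1 < R) (x : ℝ) (y : ℂ) (hRy : ‖y‖ + 2 ≤ R^2) :
    HasSum (fun k : ℕ => (x:ℂ)^(2*k+1) * (y+1)^k / ((2*k+1).factorial : ℂ) * (2*Real.pi*Complex.I))
      (∮ z in C(0,R), Complex.exp (x*z) * (z^2 - (y+1))⁻¹) := by
  have hR0 : 0 < R := by linarith
  have hRne : R ≠ 0 := ne_of_gt hR0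
  have hcnorm : ‖y+1‖ < R^2 := by
    calc ‖y+1‖ ≤ ‖y‖ + 1 := by simpa using norm_add_le y 1
      _ < R^2 := by linarith
  have hmain : HasSum
      (fun p : ℕ×ℕ => ∮ z in C(0,R),
        ((x:ℂ)^p.1 * (y+1)^p.2 / ((p.1).factorial : ℂ)) * z^((p.1:ℤ) - (2*(p.2:ℤ)+2)))
      (∮ z in C(0,R), Complex.exp (x*z) * (z^2 - (y+1))⁻¹) := by
    apply circle_hasSumX hR0 _ _ ?_
      (fun p : ℕ×ℕ => ((|x| * R)^p.1/((p.1).factorial : ℝ)) * ((‖y+1‖/R^2)^p.2 * (R^2)⁻¹))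
    · -- summable
      exact (Real.summable_pow_div_factorial (|x| * R)).mul_of_nonneg
        ((summable_geometric_of_lt_one (div_nonneg (norm_nonneg _) (by positivity))
          ((div_lt_one (by positivity)).2 hcnorm)).mul_right ((R^2)⁻¹))
        (fun n => by positivity) (fun m => by positivity)
    · -- bound
      intro p z hz
      have hzR : ‖z‖ = R := mem_sphere_zero_iff_norm.mp hz
      apply le_of_eq
      rw [norm_mul, norm_div, norm_mul, norm_pow, norm_pow, norm_zpow, hzR,
        Complex.norm_real, Real.norm_eq_abs, Complex.norm_natCast]
      rw [zpow_sub₀ hRne, zpow_natCast]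
      have h2 : (2*(p.2:ℤ)+2) = ((2*p.2+2 : ℕ) : ℤ) := by push_cast; ring
      rw [h2, zpow_natCast]
      have hfac : ((p.1).factorial : ℝ) ≠ 0 := Nat.cast_ne_zero.2 (Nat.factorial_ne_zero _)
      field_simp
      rw [div_pow, ← pow_mul, pow_add, pow_mul]
      field_simp
      ring
    · -- pointwise HasSum
      intro z hz
      have hzR : ‖z‖ = R := mem_sphere_zero_iff_norm.mp hz
      have hz0 : z ≠ 0 := by intro h; rw [h, norm_zero] at hzR; linarith
      have hz2 : (z^2 : ℂ) ≠ 0 := pow_ne_zero _ hz0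
      have hw : ‖(y+1)/z^2‖ < 1 := by
        rw [norm_div, norm_pow, hzR, div_lt_one (by positivity)]; exact hcnorm
      have h1 : HasSum (fun n : ℕ => ((x:ℂ)*z)^n/((n).factorial : ℂ))
          (Complex.exp ((x:ℂ)*z)) := by
        rw [Complex.exp_eq_exp_ℂ]
        exact NormedSpace.expSeries_div_hasSum_exp _
      have h2' := (hasSum_geometric_of_norm_lt_one hw).mul_left ((z^2 : ℂ)⁻¹)
      have hgval : (z^2 : ℂ)⁻¹ * (1 - (y+1)/z^2)⁻¹ = (z^2 - (y+1))⁻¹ := by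
        rw [← mul_inv]
        congr 1
        field_simp
      rw [hgval] at h2'
      have hs1 : Summable (fun n : ℕ => ‖((x:ℂ)*z)^n/((n).factorial : ℂ)‖) := by
        simp only [norm_div, norm_pow, Complex.norm_natCast]
        exact Real.summable_pow_div_factorial _
      have hs2 : Summable (fun m : ℕ => ‖(z^2 : ℂ)⁻¹ * ((y+1)/z^2)^m‖) := by
        simp only [norm_mul, norm_pow]
        exact ((summable_geometric_of_lt_one (norm_nonneg _) hw).mul_left _)
      have hsp : Summable (fun p : ℕ×ℕ => (((x:ℂ)*z)^p.1/((p.1).factorial : ℂ)) *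
          ((z^2 : ℂ)⁻¹ * ((y+1)/z^2)^p.2)) :=
        summable_mul_of_summable_norm (f := fun n : ℕ => ((x:ℂ)*z)^n/((n).factorial : ℂ))
          (g := fun m : ℕ => (z^2 : ℂ)⁻¹ * ((y+1)/z^2)^m) hs1 hs2
      have hmul := h1.mul h2' hsp
      have hfe : (fun p : ℕ×ℕ => (((x:ℂ)*z)^p.1/((p.1).factorial : ℂ)) *
            ((z^2 : ℂ)⁻¹ * ((y+1)/z^2)^p.2))
          = fun p : ℕ×ℕ => ((x:ℂ)^p.1 * (y+1)^p.2 / ((p.1).factorial : ℂ)) *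
            z^((p.1:ℤ) - (2*(p.2:ℤ)+2)) := by
        funext p
        have hfac : ((p.1).factorial : ℂ) ≠ 0 := Nat.cast_ne_zero.2 (Nat.factorial_ne_zero _)
        rw [zpow_sub₀ hz0, zpow_natCast]
        have h2 : (2*(p.2:ℤ)+2) = ((2*p.2+2 : ℕ) : ℤ) := by push_cast; ring
        rw [h2, zpow_natCast]
        rw [div_pow]
        field_simp
        ring
      rw [hfe] at hmul
      exact hmul
    · -- continuity
      intro p z hz
      have hzR : ‖z‖ = R := mem_sphere_zero_iff_norm.mp hz
      have hz0 : z ≠ 0 := by intro h; rw [h, norm_zero] at hzR; linarith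
      exact (continuousAt_const.mul (continuousAt_zpow₀ _ _ (Or.inl hz0))).continuousWithinAt
  -- compute each integral
  have hint : ∀ (a : ℂ) (d : ℤ), (∮ z in C(0,R), a * z^d)
      = if d = -1 then a * (2*Real.pi*Complex.I) else 0 := by
    intro a d
    rw [circleIntegral.integral_const_mul]
    have he : (∮ z in C(0,R), z^d) = ∮ z in C(0,R), (z - 0)^d := by simp
    rw [he]
    split_ifs with h
    · subst h
      have h2 := circleIntegral.integral_sub_inv_of_mem_ball
        (Metric.mem_ball_self hR0 : (0:ℂ) ∈ ball 0 R)
      simp only [zpow_neg_one]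
      rw [h2]
    · rw [circleIntegral.integral_sub_zpow_of_ne h, mul_zero]
  have hval : (fun p : ℕ×ℕ => ∮ z in C(0,R),
        ((x:ℂ)^p.1 * (y+1)^p.2 / ((p.1).factorial : ℂ)) * z^((p.1:ℤ) - (2*(p.2:ℤ)+2)))
      = fun p : ℕ×ℕ => if (p.1:ℤ) - (2*(p.2:ℤ)+2) = -1 then
          ((x:ℂ)^p.1 * (y+1)^p.2 / ((p.1).factorial : ℂ)) * (2*Real.pi*Complex.I) else 0 :=
    funext fun p => hint _ _
  rw [hval] at hmain
  have hg : Function.Injective (fun k : ℕ => ((2*k+1, k) : ℕ×ℕ)) := by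
    intro a b h
    simpa using congrArg Prod.snd h
  have h0 : ∀ p : ℕ×ℕ, p ∉ Set.range (fun k : ℕ => ((2*k+1, k) : ℕ×ℕ)) →
      (if (p.1:ℤ) - (2*(p.2:ℤ)+2) = -1 then
        ((x:ℂ)^p.1 * (y+1)^p.2 / ((p.1).factorial : ℂ)) * (2*Real.pi*Complex.I) else 0) = 0 := by
    intro p hp
    rw [if_neg]
    intro h
    apply hp
    refine ⟨p.2, ?_⟩
    have : p.1 = 2*p.2+1 := by omega
    simp [← this]
  have h2 := (hg.hasSum_iff h0).2 hmain
  have hfun2 : ((fun p : ℕ×ℕ => if (p.1:ℤ) - (2*(p.2:ℤ)+2) = -1 then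
        ((x:ℂ)^p.1 * (y+1)^p.2 / ((p.1).factorial : ℂ)) * (2*Real.pi*Complex.I) else 0)
        ∘ (fun k : ℕ => ((2*k+1, k) : ℕ×ℕ)))
      = fun k : ℕ => (x:ℂ)^(2*k+1) * (y+1)^k / ((2*k+1).factorial : ℂ) * (2*Real.pi*Complex.I) := by
    funext k
    simp only [Function.comp_apply]
    rw [if_pos (by push_cast; ring)]
  rw [hfun2] at h2
  exact h2

theorem stmt_17 (r : ℝ) (hr : 1 < r) (Φ : ℕ → ℂ → ℂ)
    (hΦ : ∀ s x, Φ s x = (2 * Real.pi * Complex.I)⁻¹ *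
      ∮ z in C(0, r), Complex.exp (x * z) / ((z - 1) ^ (s + 1) * (z + 1) ^ (s + 1))) :
    ∀ x : ℝ, ∀ y : ℂ,
      HasSum (fun s : ℕ => Φ s x * y ^ s)
        (∑' k : ℕ, (x : ℂ) ^ (2 * k + 1) * (y + 1) ^ k / ((2 * k + 1).factorial : ℂ)) := by
  intro x y
  set R := max r (Real.sqrt (‖y‖ + 2)) with hRdef
  have hrR : r ≤ R := le_max_left _ _
  have hR : 1 < R := lt_of_lt_of_le hr hrR
  have hR0 : 0 < R := by linarith
  have hRy : ‖y‖ + 2 ≤ R^2 := by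
    have h1 : Real.sqrt (‖y‖+2) ≤ R := le_max_right _ _
    have h2 : (0:ℝ) ≤ ‖y‖+2 := by positivity
    nlinarith [Real.sq_sqrt h2, Real.sqrt_nonneg (‖y‖+2)]
  have hB := stepB hR x y hRy
  have hC := stepC hR x y hRy
  have htwopi : (2*(Real.pi:ℂ)*Complex.I) ≠ 0 :=
    mul_ne_zero (mul_ne_zero two_ne_zero (Complex.ofReal_ne_zero.2 Real.pi_ne_zero))
      Complex.I_ne_zero
  have htsum : (∑' k : ℕ, (x:ℂ)^(2*k+1) * (y+1)^k / ((2*k+1).factorial : ℂ))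
      = (2*(Real.pi:ℂ)*Complex.I)⁻¹ * (∮ z in C(0,R), Complex.exp (x*z) * (z^2-(y+1))⁻¹) := by
    have h3 := hC.mul_right (2*(Real.pi:ℂ)*Complex.I)⁻¹
    have h4 : (fun k : ℕ => (x:ℂ)^(2*k+1) * (y+1)^k / ((2*k+1).factorial : ℂ)
          * (2*(Real.pi:ℂ)*Complex.I) * (2*(Real.pi:ℂ)*Complex.I)⁻¹)
        = fun k : ℕ => (x:ℂ)^(2*k+1) * (y+1)^k / ((2*k+1).factorial : ℂ) := by
      funext k; rw [mul_assoc, mul_inv_cancel₀ htwopi, mul_one]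
    rw [h4] at h3
    rw [h3.tsum_eq, mul_comm]
  rw [htsum]
  have hstep1 : (fun s : ℕ => Φ s ↑x * y ^ s)
      = fun s : ℕ => (2*(Real.pi:ℂ)*Complex.I)⁻¹
          * ∮ z in C(0,R), Complex.exp (x*z)/(z^2-1)^(s+1) * y^s := by
    funext s
    rw [hΦ s x]
    have e1 : (∮ z in C(0,R), Complex.exp ((x:ℂ)*z)/(z^2-1)^(s+1) * y^s)
        = ∮ z in C(0,R), (Complex.exp ((x:ℂ)*z)/((z-1)^(s+1)*(z+1)^(s+1))) • (y^s) := by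
      apply circleIntegral.integral_congr hR0.le
      intro z _
      simp only [smul_eq_mul]
      rw [← mul_pow, show (z-1)*(z+1) = z^2-1 from by ring]
    rw [e1, circleIntegral.integral_smul_const, deform hr hrR (x:ℂ) s, smul_eq_mul]
    ring
  rw [hstep1]
  exact hB.mul_left _
end

section
/- Let λⱼ alternate: λ_{2j} = 1, λ_{2j+1} = −1, and let Φ_n := Φ_{(λ₀,...,λ_{n})} be the corresponding fundamental functions. Then Σ_{n=0}^∞ Φ_{(λ₀,...,λₙ)}(x) yⁿ = (1+y)/√(y²+1) · sinh(x√(y²+1)) + cosh(x√(y²+1)). -/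
open Complex MeasureTheory

set_option maxHeartbeats 1000000

namespace Stmt18Aux

lemma circleInt_zpow {r : ℝ} (hr : 0 < r) (n : ℤ) :
    (∮ z in C(0, r), z ^ n) = if n = -1 then 2 * Real.pi * Complex.I else 0 := by
  split_ifs with h
  · subst h
    have := circleIntegral.integral_sub_inv_of_mem_ball (c := 0) (w := 0) (R := r)
      (by simpa using hr)
    simpa [zpow_neg] using this
  · have := circleIntegral.integral_sub_zpow_of_ne h 0 0 r
    simpa using this

lemma master {r : ℝ} (hr : 0 < r) {ι : Type} [Countable ι]
    (a : ι → ℂ) (e : ι → ℤ) (f : ℂ → ℂ)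
    (hf : ∀ z : ℂ, ‖z‖ = r → HasSum (fun p => a p * z ^ e p) (f z))
    (hnorm : Summable (fun p => ‖a p‖ * r ^ e p)) :
    HasSum (fun p => a p * (if e p = -1 then ((2 * Real.pi * Complex.I : ℂ)) else 0))
      (∮ z in C(0, r), f z) := by
  have hrne : r ≠ 0 := hr.ne'
  set μ : Measure ℝ := volume.restrict (Set.Ioc 0 (2 * Real.pi)) with hμ
  set F : ι → ℝ → ℂ := fun p θ => (circleMap 0 r θ * Complex.I) * (a p * (circleMap 0 r θ) ^ e p)
    with hF
  have habs : ∀ θ, ‖circleMap 0 r θ‖ = r := by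
    intro θ; rw [norm_circleMap_zero]; exact abs_of_pos hr
  have hne : ∀ θ : ℝ, circleMap 0 r θ ≠ 0 := fun θ => circleMap_ne_center hrne
  have hcont : ∀ p, Continuous (F p) := by
    intro p
    exact ((continuous_circleMap 0 r).mul continuous_const).mul
      (continuous_const.mul ((continuous_circleMap 0 r).zpow₀ (e p) (fun θ => Or.inl (hne θ))))
  have hint : ∀ p, Integrable (F p) μ := fun p => (hcont p).integrableOn_Ioc
  have hFnorm : ∀ p θ, ‖F p θ‖ = r * (‖a p‖ * r ^ e p) := by
    intro p θ
    simp only [hF, norm_mul, Complex.norm_I, norm_zpow, habs]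
    ring
  have hintnorm : ∀ p, ∫ θ, ‖F p θ‖ ∂μ = (2 * Real.pi * r) * (‖a p‖ * r ^ e p) := by
    intro p
    simp only [hFnorm, hμ]
    rw [setIntegral_const]
    simp [Real.volume_Ioc, ENNReal.toReal_ofReal Real.two_pi_pos.le]
    rw [max_eq_left (by positivity)]
    ring
  have hsumm : Summable (fun p => ∫ θ, ‖F p θ‖ ∂μ) := by
    simp only [hintnorm]
    exact hnorm.mul_left _
  have key := hasSum_integral_of_summable_integral_norm hint hsumm
  have h1 : ∀ p, ∫ θ, F p θ ∂μ
      = a p * (if e p = -1 then ((2 * Real.pi * Complex.I : ℂ)) else 0) := by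
    intro p
    rw [← circleInt_zpow hr (e p), ← circleIntegral.integral_const_mul]
    rw [circleIntegral]
    simp only [deriv_circleMap]
    rw [intervalIntegral.integral_of_le Real.two_pi_pos.le]
    simp only [smul_eq_mul, hF, hμ]
  have h2 : ∫ θ, (∑' p, F p θ) ∂μ = ∮ z in C(0, r), f z := by
    rw [circleIntegral]
    simp only [deriv_circleMap]
    rw [intervalIntegral.integral_of_le Real.two_pi_pos.le]
    apply setIntegral_congr_fun measurableSet_Ioc
    intro θ _
    show (∑' p, F p θ) = (circleMap 0 r θ * Complex.I) • f (circleMap 0 r θ)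
    rw [((hf _ (habs θ)).mul_left (circleMap 0 r θ * Complex.I)).tsum_eq, smul_eq_mul]
  rw [← h2]
  exact (funext h1 : (fun p => ∫ θ, F p θ ∂μ) = _) ▸ key

lemma core {r : ℝ} (hr : 1 < r) (X : ℂ) (S d : ℕ) :
    HasSum (fun p : ℕ × ℕ =>
      (X ^ p.1 / (Nat.factorial p.1) * ((S + p.2).choose p.2 : ℂ)) *
        (if ((p.1 : ℤ) + d) - (2 * S + 2 + 2 * p.2) = -1
          then ((2 * Real.pi * Complex.I : ℂ)) else 0))
      (∮ z in C(0, r), Complex.exp (X * z) * z ^ d / (z ^ 2 - 1) ^ (S + 1)) := by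
  have hr0 : (0 : ℝ) < r := lt_trans one_pos hr
  have hcs : ∀ k : ℕ, ((S + k).choose k) = ((k + S).choose S) := by
    intro k; rw [Nat.add_comm]; exact Nat.choose_symm_add
  apply master hr0
    (fun p : ℕ × ℕ => X ^ p.1 / (Nat.factorial p.1) * ((S + p.2).choose p.2 : ℂ))
    (fun p : ℕ × ℕ => ((p.1 : ℤ) + d) - (2 * S + 2 + 2 * p.2))
  · -- hf
    intro z hz
    have hz1 : 1 < ‖z‖ := hz ▸ hr
    have hz0 : z ≠ 0 := by
      intro h; rw [h] at hz1; simp at hz1; linarith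
    have h2z : z ^ 2 ≠ 0 := pow_ne_zero _ hz0
    have habs2 : 1 < ‖z‖ ^ 2 := by nlinarith
    have h21 : z ^ 2 - 1 ≠ 0 := by
      intro h
      have : z ^ 2 = 1 := by linear_combination h
      rw [← norm_pow, this] at habs2
      simp at habs2
    have hw : ‖(z ^ 2)⁻¹‖ < 1 := by
      rw [norm_inv, norm_pow]
      rw [inv_lt_one_iff₀]
      right; exact habs2
    have h1 : HasSum (fun m => (X * z) ^ m / (Nat.factorial m)) (Complex.exp (X * z)) := by
      rw [Complex.exp_eq_exp_ℂ]
      exact NormedSpace.expSeries_div_hasSum_exp (X * z)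
    have h2 : HasSum (fun k => (((k + S).choose S : ℂ)) * ((z ^ 2)⁻¹) ^ k)
        (1 / (1 - (z ^ 2)⁻¹) ^ (S + 1)) :=
      hasSum_choose_mul_geometric_of_norm_lt_one S hw
    have h1n : Summable (fun m => ‖(X * z) ^ m / (Nat.factorial m)‖) := by
      apply Summable.congr (Real.summable_pow_div_factorial ‖X * z‖)
      intro m; rw [norm_div, norm_pow]; norm_num
    have h2n : Summable (fun k => ‖(((k + S).choose S : ℂ)) * ((z ^ 2)⁻¹) ^ k‖) := by
      have : ‖((z : ℂ) ^ 2)⁻¹‖ < 1 := hw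
      have hs := summable_choose_mul_geometric_of_norm_lt_one (R := ℝ) S
        (r := ‖((z : ℂ) ^ 2)⁻¹‖)
        (by rwa [Real.norm_eq_abs, _root_.abs_of_nonneg (norm_nonneg _)])
      apply Summable.congr hs
      intro k
      rw [norm_mul, norm_pow]
      simp [Complex.norm_natCast]
    have hsp : Summable (fun p : ℕ × ℕ =>
        ((X * z) ^ p.1 / (Nat.factorial p.1)) *
          ((((p.2 + S).choose S : ℂ)) * ((z ^ 2)⁻¹) ^ p.2)) := by
      apply summable_mul_of_summable_norm h1n h2n
    have hs : HasSum (fun p : ℕ × ℕ =>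
        ((X * z) ^ p.1 / (Nat.factorial p.1)) *
          ((((p.2 + S).choose S : ℂ)) * ((z ^ 2)⁻¹) ^ p.2))
        (Complex.exp (X * z) * (1 / (1 - (z ^ 2)⁻¹) ^ (S + 1))) := by
      rw [HasSum.mul_eq h1 h2 hsp.hasSum]
      exact hsp.hasSum
    have hs2 := hs.mul_left (z ^ ((d : ℤ) - (2 * S + 2)))
    convert hs2 using 1
    · rfl
    · funext p
      obtain ⟨m, k⟩ := p
      show (X ^ m / (Nat.factorial m) * ((S + k).choose k : ℂ)) *
        z ^ (((m : ℤ) + d) - (2 * S + 2 + 2 * k)) = _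
      have he : ((m : ℤ) + d) - (2 * S + 2 + 2 * k)
          = (m : ℤ) + (((d : ℤ) - (2 * S + 2)) + (-2) * k) := by
        ring
      rw [he, zpow_add₀ hz0, zpow_add₀ hz0, zpow_natCast, zpow_mul, zpow_natCast]
      have : z ^ (-2 : ℤ) = (z ^ 2)⁻¹ := by
        rw [zpow_neg]; norm_cast
      rw [this, hcs k, mul_pow]
      ring
    · -- value identity
      have hz0 : z ≠ 0 := by
        intro h; rw [h] at hz; simp at hz; linarith
      have h2z : z ^ 2 ≠ 0 := pow_ne_zero _ hz0
      have habs2 : 1 < ‖z‖ ^ 2 := by nlinarith [hz ▸ hr]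
      have h21 : z ^ 2 - 1 ≠ 0 := by
        intro h
        have h' : z ^ 2 = 1 := by linear_combination h
        rw [← norm_pow, h'] at habs2
        simp at habs2
      have hzc : z ^ ((d : ℤ) - (2 * S + 2)) = z ^ d / z ^ (2 * S + 2) := by
        rw [zpow_sub₀ hz0]
        norm_cast
      rw [show (1 - (z ^ 2)⁻¹) = (z ^ 2 - 1) / z ^ 2 by field_simp]
      rw [div_pow, one_div_div, hzc]
      rw [show z ^ (2 * S + 2) = (z ^ 2) ^ (S + 1) by rw [← pow_mul]; ring_nf]
      field_simp
  · -- hnorm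
    have hrne : r ≠ 0 := hr0.ne'
    have hrlt : |(r ^ 2)⁻¹| < 1 := by
      rw [abs_of_pos (by positivity)]
      rw [inv_lt_one_iff₀]; right; nlinarith
    have h1 : Summable (fun m : ℕ => (‖X‖ * r) ^ m / (Nat.factorial m)) :=
      Real.summable_pow_div_factorial _
    have h2 : Summable (fun k : ℕ => (((k + S).choose S : ℝ)) * ((r ^ 2)⁻¹) ^ k) :=
      summable_choose_mul_geometric_of_norm_lt_one (R := ℝ) S
        (r := (r ^ 2)⁻¹) (by rwa [Real.norm_eq_abs])
    have hp : Summable (fun p : ℕ × ℕ =>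
        ((‖X‖ * r) ^ p.1 / (Nat.factorial p.1)) *
          ((((p.2 + S).choose S : ℝ)) * ((r ^ 2)⁻¹) ^ p.2)) :=
      h1.mul_of_nonneg h2 (fun m => by positivity) (fun k => by positivity)
    apply Summable.congr (hp.mul_left (r ^ ((d : ℤ) - (2 * S + 2))))
    intro p
    obtain ⟨m, k⟩ := p
    show r ^ ((d : ℤ) - (2 * S + 2)) *
        ((‖X‖ * r) ^ m / (Nat.factorial m) * (((k + S).choose S : ℝ) * ((r ^ 2)⁻¹) ^ k))
      = ‖X ^ m / (Nat.factorial m) * ((S + k).choose k : ℂ)‖ *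
        r ^ (((m : ℤ) + d) - (2 * S + 2 + 2 * k))
    have he : ((m : ℤ) + d) - (2 * S + 2 + 2 * k)
        = (m : ℤ) + (((d : ℤ) - (2 * S + 2)) + (-2) * k) := by
      ring
    rw [he, zpow_add₀ hrne, zpow_add₀ hrne, zpow_natCast, zpow_mul, zpow_natCast]
    have : r ^ (-2 : ℤ) = (r ^ 2)⁻¹ := by rw [zpow_neg]; norm_cast
    rw [this, norm_mul, norm_div, norm_pow]
    rw [hcs k, mul_pow]
    simp [Complex.norm_natCast]
    ring

lemma two_pi_I_ne : (2 * Real.pi * Complex.I : ℂ) ≠ 0 := by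
  simp [Real.pi_ne_zero, Complex.I_ne_zero]

lemma key0 {r : ℝ} (hr : 1 < r) (X : ℂ) (S : ℕ) :
    HasSum (fun k : ℕ => ((S + k).choose k : ℂ) * X ^ (2 * (S + k) + 1) /
        (Nat.factorial (2 * (S + k) + 1)))
      ((2 * Real.pi * Complex.I)⁻¹ *
        ∮ z in C(0, r), Complex.exp (X * z) / (z ^ 2 - 1) ^ (S + 1)) := by
  have hc := core hr X S 0
  simp only [pow_zero, mul_one] at hc
  set f : ℕ × ℕ → ℂ := fun p =>
    (X ^ p.1 / (Nat.factorial p.1) * ((S + p.2).choose p.2 : ℂ)) *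
      (if ((p.1 : ℤ) + 0) - (2 * S + 2 + 2 * p.2) = -1
        then ((2 * Real.pi * Complex.I : ℂ)) else 0)
    with hfdef
  set g : ℕ → ℕ × ℕ := fun k => (2 * (S + k) + 1, k) with hgdef
  have hginj : Function.Injective g := by
    intro a b h
    simpa [hgdef, Prod.ext_iff] using h
  have h0 : ∀ p ∉ Set.range g, f p = 0 := by
    rintro ⟨m, k⟩ hp
    have hneg : ¬(((m : ℤ) + 0) - (2 * S + 2 + 2 * k) = -1) := by
      intro h
      apply hp
      refine ⟨k, ?_⟩
      have hm : m = 2 * (S + k) + 1 := by omega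
      simp [hgdef, hm]
    show (X ^ m / (Nat.factorial m) * ((S + k).choose k : ℂ)) *
      (if ((m : ℤ) + 0) - (2 * S + 2 + 2 * k) = -1
        then ((2 * Real.pi * Complex.I : ℂ)) else 0) = 0
    rw [if_neg hneg, mul_zero]
  have h1 : HasSum (f ∘ g) (∮ z in C(0, r), Complex.exp (X * z) / (z ^ 2 - 1) ^ (S + 1)) :=
    (Function.Injective.hasSum_iff hginj h0).mpr hc
  have h2 := h1.div_const (2 * Real.pi * Complex.I)
  rw [inv_mul_eq_div]
  apply HasSum.congr_fun h2
  intro k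
  have hcond : (((2 * (S + k) + 1 : ℕ) : ℤ) + 0) - (2 * S + 2 + 2 * k) = -1 := by
    push_cast
    ring
  simp only [Function.comp, hfdef, hgdef, hcond, if_pos]
  rw [mul_div_assoc, mul_div_cancel_right₀ _ two_pi_I_ne]
  ring

lemma key1 {r : ℝ} (hr : 1 < r) (X : ℂ) (S : ℕ) :
    HasSum (fun k : ℕ => ((S + k).choose k : ℂ) * X ^ (2 * (S + k)) /
        (Nat.factorial (2 * (S + k))))
      ((2 * Real.pi * Complex.I)⁻¹ *
        ∮ z in C(0, r), Complex.exp (X * z) * z / (z ^ 2 - 1) ^ (S + 1)) := by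
  have hc := core hr X S 1
  simp only [pow_one] at hc
  set f : ℕ × ℕ → ℂ := fun p =>
    (X ^ p.1 / (Nat.factorial p.1) * ((S + p.2).choose p.2 : ℂ)) *
      (if ((p.1 : ℤ) + 1) - (2 * S + 2 + 2 * p.2) = -1
        then ((2 * Real.pi * Complex.I : ℂ)) else 0)
    with hfdef
  set g : ℕ → ℕ × ℕ := fun k => (2 * (S + k), k) with hgdef
  have hginj : Function.Injective g := by
    intro a b h
    simpa [hgdef, Prod.ext_iff] using h
  have h0 : ∀ p ∉ Set.range g, f p = 0 := by
    rintro ⟨m, k⟩ hp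
    have hneg : ¬(((m : ℤ) + 1) - (2 * S + 2 + 2 * k) = -1) := by
      intro h
      apply hp
      refine ⟨k, ?_⟩
      have hm : m = 2 * (S + k) := by omega
      simp [hgdef, hm]
    show (X ^ m / (Nat.factorial m) * ((S + k).choose k : ℂ)) *
      (if ((m : ℤ) + 1) - (2 * S + 2 + 2 * k) = -1
        then ((2 * Real.pi * Complex.I : ℂ)) else 0) = 0
    rw [if_neg hneg, mul_zero]
  have h1 : HasSum (f ∘ g) (∮ z in C(0, r), Complex.exp (X * z) * z / (z ^ 2 - 1) ^ (S + 1)) :=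
    (Function.Injective.hasSum_iff hginj h0).mpr hc
  have h2 := h1.div_const (2 * Real.pi * Complex.I)
  rw [inv_mul_eq_div]
  apply HasSum.congr_fun h2
  intro k
  have hcond : (((2 * (S + k) : ℕ) : ℤ) + 1) - (2 * S + 2 + 2 * k) = -1 := by
    push_cast
    ring
  simp only [Function.comp, hfdef, hgdef, hcond, if_pos]
  rw [mul_div_assoc, mul_div_cancel_right₀ _ two_pi_I_ne]
  ring

lemma prod_eq (n : ℕ) (z : ℂ) :
    (∏ j : Fin (n + 1), (z - (-1 : ℂ) ^ (j : ℕ))) =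
      (z - 1) ^ (n / 2 + 1) * (z + 1) ^ ((n + 1) / 2) := by
  induction n with
  | zero => simp
  | succ n ih =>
    rw [Fin.prod_univ_castSucc]
    simp only [Fin.coe_castSucc, Fin.val_last]
    rw [ih]
    rcases Nat.even_or_odd n with ⟨m, hm⟩ | ⟨m, hm⟩
    · have h1 : (-1 : ℂ) ^ (n + 1) = -1 := by
        rw [pow_succ, Even.neg_one_pow (⟨m, hm⟩ : Even n)]; ring
      have h3 : (n + 1) / 2 = n / 2 := by omega
      have h4 : (n + 1 + 1) / 2 = n / 2 + 1 := by omega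
      rw [h1, h4, h3, pow_succ]
      ring
    · have h1 : (-1 : ℂ) ^ (n + 1) = 1 := Even.neg_one_pow ⟨m + 1, by omega⟩
      have h2 : (n + 1) / 2 + 1 = n / 2 + 2 := by omega
      have h3 : (n + 1 + 1) / 2 = (n + 1) / 2 := by omega
      rw [h1, h2, h3, pow_succ (z - 1)]
      have h5 : (n + 1) / 2 = n / 2 + 1 := by omega
      rw [h5]
      ring

lemma binom_sum {R : Type} [CommSemiring R] (m : ℕ) (u : R) :
    (∑ p ∈ Finset.HasAntidiagonal.antidiagonal m, ((p.1 + p.2).choose p.2 : R) * u ^ p.1) = (u + 1) ^ m := by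
  rw [Finset.Nat.sum_antidiagonal_eq_sum_range_succ_mk]
  rw [add_pow]
  apply Finset.sum_congr rfl
  intro i hi
  have hi2 : i ≤ m := Nat.lt_succ_iff.mp (Finset.mem_range.mp hi)
  have h3 : i + (m - i) = m := by omega
  rw [h3, Nat.choose_symm hi2]
  ring

lemma assembly (φ : ℕ → ℂ) (t : ℂ) (hφ : Summable (fun m => ‖φ m‖ * (‖t‖ + 1) ^ m)) :
    HasSum (fun p : ℕ × ℕ => ((p.1 + p.2).choose p.2 : ℂ) * φ (p.1 + p.2) * t ^ p.1)
      (∑' m : ℕ, φ m * (t + 1) ^ m) := by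
  set G : ℕ × ℕ → ℂ := fun p => ((p.1 + p.2).choose p.2 : ℂ) * φ (p.1 + p.2) * t ^ p.1 with hG
  set e := Finset.HasAntidiagonal.sigmaAntidiagonalEquivProd (A := ℕ) with he
  have hfib : ∀ m, (∑ p ∈ Finset.HasAntidiagonal.antidiagonal m, G p) = φ m * (t + 1) ^ m := by
    intro m
    rw [← binom_sum (R := ℂ) m t, Finset.mul_sum]
    apply Finset.sum_congr rfl
    rintro ⟨s, k⟩ hp
    have hm : s + k = m := Finset.HasAntidiagonal.mem_antidiagonal.mp hp
    simp only [hG, hm]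
    ring
  have hfibn : ∀ m, (∑ p ∈ Finset.HasAntidiagonal.antidiagonal m, ‖G p‖) = ‖φ m‖ * (‖t‖ + 1) ^ m := by
    intro m
    rw [← binom_sum (R := ℝ) m ‖t‖, Finset.mul_sum]
    apply Finset.sum_congr rfl
    rintro ⟨s, k⟩ hp
    have hm : s + k = m := Finset.HasAntidiagonal.mem_antidiagonal.mp hp
    simp only [hG, hm, norm_mul, norm_pow, Complex.norm_natCast]
    ring
  have hsn : Summable (fun p => ‖G p‖) := by
    rw [← Equiv.summable_iff e]
    apply (summable_sigma_of_nonneg (fun q => norm_nonneg _)).mpr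
    constructor
    · intro m; exact Summable.of_finite
    · apply Summable.congr hφ
      intro m
      rw [← hfibn m, ← Finset.tsum_subtype]
      rfl
  have hs : Summable G := hsn.of_norm
  have hval : (∑' p, G p) = ∑' m : ℕ, φ m * (t + 1) ^ m := by
    rw [← Equiv.tsum_eq e G]
    rw [show (fun c => G (e c)) = G ∘ e from rfl, Summable.tsum_sigma (e.summable_iff.mpr hs)]
    apply tsum_congr
    intro m
    rw [← hfib m, ← Finset.tsum_subtype]
    rfl
  exact hval ▸ hs.hasSum

lemma phi_summable (X : ℂ) (c : ℕ) (u : ℝ) (hu : 0 ≤ u) :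
    Summable (fun m => ‖X ^ (2 * m + c) / ((2 * m + c).factorial : ℂ)‖ * (u + 1) ^ m) := by
  refine Summable.of_nonneg_of_le (fun m => by positivity) ?_
    ((Real.summable_pow_div_factorial (‖X‖ ^ 2 * (u + 1))).mul_left (‖X‖ ^ c))
  · intro m
    have h1 : ‖X ^ (2 * m + c) / ((2 * m + c).factorial : ℂ)‖
        = ‖X‖ ^ (2 * m + c) / ((2 * m + c).factorial : ℝ) := by
      rw [norm_div, norm_pow]
      norm_num
    rw [h1]
    have h2 : ((Nat.factorial m : ℝ)) ≤ ((2 * m + c).factorial : ℝ) := by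
      exact_mod_cast Nat.factorial_le (by omega)
    have h3 : (0 : ℝ) < (Nat.factorial m : ℝ) := by positivity
    calc ‖X‖ ^ (2 * m + c) / ((2 * m + c).factorial : ℝ) * (u + 1) ^ m
        = (‖X‖ ^ c * (‖X‖ ^ 2) ^ m * (u + 1) ^ m) / ((2 * m + c).factorial : ℝ) := by
          rw [pow_add, pow_mul]; ring
      _ ≤ (‖X‖ ^ c * (‖X‖ ^ 2) ^ m * (u + 1) ^ m) / ((Nat.factorial m : ℝ)) := by
          gcongr
      _ = ‖X‖ ^ c * ((‖X‖ ^ 2 * (u + 1)) ^ m / (Nat.factorial m)) := by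
          rw [mul_pow]; ring

lemma circleIntegral_add {f g : ℂ → ℂ} {c : ℂ} {R : ℝ}
    (hf : CircleIntegrable f c R) (hg : CircleIntegrable g c R) :
    (∮ z in C(c, R), (f z + g z)) = (∮ z in C(c, R), f z) + ∮ z in C(c, R), g z := by
  simp only [circleIntegral, smul_add]
  exact intervalIntegral.integral_add hf.out hg.out

end Stmt18Aux

open Stmt18Aux

theorem stmt_18 (r : ℝ) (hr : 1 < r) (Φ : ℕ → ℂ → ℂ)
    (hΦ : ∀ n x, Φ n x = (2 * Real.pi * Complex.I)⁻¹ *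
      ∮ z in C(0, r), Complex.exp (x * z) / ∏ j : Fin (n + 1), (z - (-1 : ℂ) ^ (j : ℕ))) :
    ∀ x : ℝ, ∀ y : ℂ,
      HasSum (fun n : ℕ => Φ n x * y ^ n)
        ((1 + y) * (∑' k : ℕ, (x : ℂ) ^ (2 * k + 1) * (y ^ 2 + 1) ^ k / ((2 * k + 1).factorial : ℂ)) +
          ∑' k : ℕ, (x : ℂ) ^ (2 * k) * (y ^ 2 + 1) ^ k / ((2 * k).factorial : ℂ)) := by
  intro x y
  have hr0 : (0 : ℝ) < r := lt_trans one_pos hr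
  set X : ℂ := (x : ℂ) with hX
  set t : ℂ := y ^ 2 with ht
  -- odd-index Φ
  have hodd : ∀ s : ℕ, HasSum (fun k => ((s + k).choose k : ℂ) * X ^ (2 * (s + k) + 1) /
      (Nat.factorial (2 * (s + k) + 1))) (Φ (2 * s + 1) X) := by
    intro s
    rw [hΦ]
    have hint : (fun z : ℂ => Complex.exp (X * z) / ∏ j : Fin (2 * s + 1 + 1), (z - (-1 : ℂ) ^ (j : ℕ)))
        = fun z => Complex.exp (X * z) / (z ^ 2 - 1) ^ (s + 1) := by
      funext z
      rw [prod_eq]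
      have h1 : (2 * s + 1) / 2 + 1 = s + 1 := by omega
      have h2 : (2 * s + 1 + 1) / 2 = s + 1 := by omega
      rw [h1, h2]
      rw [show (z - 1) ^ (s + 1) * (z + 1) ^ (s + 1) = (z ^ 2 - 1) ^ (s + 1) by
        rw [← mul_pow]; ring_nf]
    rw [hint]
    exact key0 hr X s
  -- even-index Φ
  have heven : ∀ s : ℕ, HasSum (fun k =>
      ((s + k).choose k : ℂ) * X ^ (2 * (s + k)) / (Nat.factorial (2 * (s + k)))
        + ((s + k).choose k : ℂ) * X ^ (2 * (s + k) + 1) / (Nat.factorial (2 * (s + k) + 1)))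
      (Φ (2 * s) X) := by
    intro s
    rw [hΦ]
    have hsph : ∀ z ∈ Metric.sphere (0 : ℂ) r, (z ^ 2 - 1) ≠ 0 := by
      intro z hz
      rw [mem_sphere_zero_iff_norm] at hz
      intro h
      have h' : z ^ 2 = 1 := by linear_combination h
      have : ‖z‖ ^ 2 = 1 := by rw [← norm_pow, h', norm_one]
      nlinarith
    have hcong : Set.EqOn
        (fun z : ℂ => Complex.exp (X * z) / ∏ j : Fin (2 * s + 1), (z - (-1 : ℂ) ^ (j : ℕ)))
        (fun z : ℂ => Complex.exp (X * z) * z / (z ^ 2 - 1) ^ (s + 1)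
          + Complex.exp (X * z) / (z ^ 2 - 1) ^ (s + 1))
        (Metric.sphere (0 : ℂ) r) := by
      intro z hz
      have h21 := hsph z hz
      rw [mem_sphere_zero_iff_norm] at hz
      have hz1 : z - 1 ≠ 0 := by
        intro h
        have : z = 1 := by linear_combination h
        rw [this, norm_one] at hz; linarith
      have hz2 : z + 1 ≠ 0 := by
        intro h
        have : z = -1 := by linear_combination h
        rw [this] at hz; simp at hz; linarith
      show Complex.exp (X * z) / ∏ j : Fin (2 * s + 1), (z - (-1 : ℂ) ^ (j : ℕ))
          = Complex.exp (X * z) * z / (z ^ 2 - 1) ^ (s + 1)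
            + Complex.exp (X * z) / (z ^ 2 - 1) ^ (s + 1)
      have hps : (2 * s) / 2 + 1 = s + 1 := by omega
      have hps2 : (2 * s + 1) / 2 = s := by omega
      have hpe : (∏ j : Fin (2 * s + 1), (z - (-1 : ℂ) ^ (j : ℕ)))
          = (z - 1) ^ (s + 1) * (z + 1) ^ s := by
        have := prod_eq (2 * s) z
        rw [hps, hps2] at this
        exact this
      rw [hpe]
      have hfact : (z ^ 2 - 1) ^ (s + 1) = (z - 1) ^ (s + 1) * (z + 1) ^ (s + 1) := by
        rw [← mul_pow]; ring_nf
      rw [hfact]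
      field_simp
      ring
    rw [circleIntegral.integral_congr hr0.le hcong]
    have hc1 : CircleIntegrable
        (fun z : ℂ => Complex.exp (X * z) * z / (z ^ 2 - 1) ^ (s + 1)) 0 r := by
      apply ContinuousOn.circleIntegrable hr0.le
      apply ContinuousOn.div
      · exact ((Complex.continuous_exp.comp (continuous_const.mul continuous_id)).mul
          continuous_id).continuousOn
      · exact (((continuous_pow 2).sub continuous_const).pow (s + 1)).continuousOn
      · intro z hz
        exact pow_ne_zero _ (hsph z hz)
    have hc2 : CircleIntegrable
        (fun z : ℂ => Complex.exp (X * z) / (z ^ 2 - 1) ^ (s + 1)) 0 r := by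
      apply ContinuousOn.circleIntegrable hr0.le
      apply ContinuousOn.div
      · exact (Complex.continuous_exp.comp (continuous_const.mul continuous_id)).continuousOn
      · exact (((continuous_pow 2).sub continuous_const).pow (s + 1)).continuousOn
      · intro z hz
        exact pow_ne_zero _ (hsph z hz)
    rw [circleIntegral_add hc1 hc2, mul_add]
    exact (key1 hr X s).add (key0 hr X s)
  -- generating functions
  set φI : ℕ → ℂ := fun m => X ^ (2 * m + 1) / ((2 * m + 1).factorial : ℂ) with hφIdef
  set φJ : ℕ → ℂ := fun m => X ^ (2 * m) / ((2 * m).factorial : ℂ) with hφJdef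
  have hφI : Summable (fun m => ‖φI m‖ * (‖t‖ + 1) ^ m) := phi_summable X 1 ‖t‖ (norm_nonneg t)
  have hφJ : Summable (fun m => ‖φJ m‖ * (‖t‖ + 1) ^ m) := by
    have h := phi_summable X 0 ‖t‖ (norm_nonneg t)
    simpa only [Nat.add_zero] using h
  have hAI := assembly φI t hφI
  have hAJ := assembly φJ t hφJ
  set A : ℂ := ∑' m : ℕ, φI m * (t + 1) ^ m with hA
  set B : ℂ := ∑' m : ℕ, φJ m * (t + 1) ^ m with hB
  have hfibI : ∀ s : ℕ, HasSum
      (fun k => ((s + k).choose k : ℂ) * φI (s + k) * t ^ s) (Φ (2 * s + 1) X * t ^ s) := by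
    intro s
    apply HasSum.congr_fun ((hodd s).mul_right (t ^ s))
    intro k
    simp only [hφIdef]
    ring
  have hoddSum : HasSum (fun s => Φ (2 * s + 1) X * t ^ s) A := hAI.prod_fiberwise hfibI
  have hfibE : ∀ s : ℕ, HasSum
      (fun k => ((s + k).choose k : ℂ) * φJ (s + k) * t ^ s
        + ((s + k).choose k : ℂ) * φI (s + k) * t ^ s) (Φ (2 * s) X * t ^ s) := by
    intro s
    apply HasSum.congr_fun ((heven s).mul_right (t ^ s))
    intro k
    simp only [hφIdef, hφJdef]
    ring
  have hevenSum : HasSum (fun s => Φ (2 * s) X * t ^ s) (B + A) :=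
    (hAJ.add hAI).prod_fiberwise hfibE
  have he' : HasSum (fun s => Φ (2 * s) X * y ^ (2 * s)) (B + A) := by
    apply HasSum.congr_fun hevenSum
    intro s
    rw [pow_mul]
  have ho' : HasSum (fun s => Φ (2 * s + 1) X * y ^ (2 * s + 1)) (A * y) := by
    apply HasSum.congr_fun (hoddSum.mul_right y)
    intro s
    rw [pow_succ, pow_mul]
    ring
  have htot : HasSum (fun n => Φ n X * y ^ n) ((B + A) + A * y) :=
    HasSum.even_add_odd he' ho'
  have hAeq : A = ∑' k : ℕ, X ^ (2 * k + 1) * (y ^ 2 + 1) ^ k / ((2 * k + 1).factorial : ℂ) := by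
    apply tsum_congr
    intro m
    simp only [hφIdef, ht]
    ring
  have hBeq : B = ∑' k : ℕ, X ^ (2 * k) * (y ^ 2 + 1) ^ k / ((2 * k).factorial : ℂ) := by
    apply tsum_congr
    intro m
    simp only [hφJdef, ht]
    ring
  have hval : (B + A) + A * y
      = (1 + y) * (∑' k : ℕ, X ^ (2 * k + 1) * (y ^ 2 + 1) ^ k / ((2 * k + 1).factorial : ℂ))
        + ∑' k : ℕ, X ^ (2 * k) * (y ^ 2 + 1) ^ k / ((2 * k).factorial : ℂ) := by
    rw [hAeq, hBeq]; ring
  rw [← hval]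
  exact htot
end
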